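/- arXiv:1311.6036 — 9 statements merged into one kernel-verified Lean document; each statement's English description precedes it below -/
import Mathlib

section
/- Fix constants M > 1, K > 0 and an integer S ≥ 0. There exists η₀ > 0 (depending only on M, K and S) such that for all η ∈ (0, η₀), all L ∈ ℕ and all E with 0 ≤ E < η⁴/L⁴ and E ≤ K, the following holds for every Jacobi matrix H as in the context: if u and v are orthonormal eigenvectors of H associated to eigenvalues lying in [−E, E], and if r_u(n)·r_v(n) ≤ η/L for every n ∈ {1,…,L}, then there exist x₋, x₊ ∈ {1,…,L} with x₊ − x₋ ≥ S such that the principal submatrix H|_{{1,…,x₋}} has at least one eigenvalue in [−E·L⁴/η⁴, E·L⁴/η⁴] and the principal submatrix H|_{{x₊,…,L}} has at least one eigenvalue in [−E·L⁴/η⁴, E·L⁴/η⁴]. -/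
/-- Jacobi matrix on `ℓ²({1,…,L})` with Dirichlet boundary conditions:
`(Hu)(n) = a(n+1)u(n+1) + a(n)u(n-1) + V(n)u(n)`, site `n = i.val + 1`. -/
noncomputable def jacobiMatrix (L : ℕ) (a V : ℕ → ℝ) : Matrix (Fin L) (Fin L) ℝ :=
  fun i j =>
    if i.val + 1 = j.val then a (j.val + 1)
    else if j.val + 1 = i.val then a (i.val + 1)
    else if i = j then V (i.val + 1) else 0

/-- Number of eigenvalues (counted with multiplicity) of `A` in the set `S`. -/
noncomputable def eigCount {n : ℕ} (A : Matrix (Fin n) (Fin n) ℝ) (S : Set ℝ) : ℕ :=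
  Module.finrank ℝ (⨆ μ ∈ S, Module.End.eigenspace (Matrix.toLin' A) μ : Submodule ℝ (Fin n → ℝ))

/-- Principal submatrix of the Jacobi matrix on the index set `{x,…,y}`. -/
noncomputable def jacobiSub (x y : ℕ) (a V : ℕ → ℝ) : Matrix (Fin (y - x + 1)) (Fin (y - x + 1)) ℝ :=
  jacobiMatrix (y - x + 1) (fun n => a (n + (x - 1))) (fun n => V (n + (x - 1)))

/-- Extension of `u : Fin L → ℝ` to `ℕ` by `0`; site `n ∈ {1,…,L}` is `u ⟨n-1⟩`. -/
def extV (L : ℕ) (u : Fin L → ℝ) (n : ℕ) : ℝ :=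
  if h : 1 ≤ n ∧ n ≤ L then u ⟨n - 1, by omega⟩ else 0

/-- Prüfer radius `r_u(n) = √(u(n)² + u(n-1)²)`. -/
noncomputable def pruferR (L : ℕ) (u : Fin L → ℝ) (n : ℕ) : ℝ :=
  Real.sqrt (extV L u n ^ 2 + extV L u (n - 1) ^ 2)


section JacobiProofHelpers

open Matrix RealInnerProductSpace

lemma eigCount_aux {n : ℕ} (B : Matrix (Fin n) (Fin n) ℝ) (Sset : Set ℝ) (μ : ℝ)
    (hμ : μ ∈ Sset) (w : Fin n → ℝ) (hw : w ≠ 0) (hBw : B.mulVec w = μ • w) :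
    1 ≤ Module.finrank ℝ
      (⨆ ν ∈ Sset, Module.End.eigenspace (Matrix.toLin' B) ν : Submodule ℝ (Fin n → ℝ)) := by
  have hmem : w ∈ Module.End.eigenspace (Matrix.toLin' B) μ := by
    rw [Module.End.mem_eigenspace_iff, Matrix.toLin'_apply, hBw]
  have hle : Module.End.eigenspace (Matrix.toLin' B) μ ≤
      (⨆ ν ∈ Sset, Module.End.eigenspace (Matrix.toLin' B) ν : Submodule ℝ (Fin n → ℝ)) :=
    le_biSup _ hμ
  have hmem2 : w ∈ (⨆ ν ∈ Sset, Module.End.eigenspace (Matrix.toLin' B) ν :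
      Submodule ℝ (Fin n → ℝ)) := hle hmem
  have : 0 < Module.finrank ℝ
      (⨆ ν ∈ Sset, Module.End.eigenspace (Matrix.toLin' B) ν : Submodule ℝ (Fin n → ℝ)) := by
    rw [Module.finrank_pos_iff_exists_ne_zero]
    exact ⟨⟨w, hmem2⟩, by simp [Submodule.mk_eq_zero, hw]⟩
  omega

lemma spec_approx {n : ℕ} (hn : 0 < n) (B : Matrix (Fin n) (Fin n) ℝ) (hB : B.IsHermitian)
    (z : Fin n → ℝ) (lam : ℝ) :
    ∃ μ : ℝ, (∃ w : Fin n → ℝ, w ≠ 0 ∧ B.mulVec w = μ • w) ∧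
      (μ - lam) ^ 2 * (∑ i, z i ^ 2) ≤ ∑ i, (B.mulVec z i - lam * z i) ^ 2 := by
  haveI : Nonempty (Fin n) := ⟨⟨0, hn⟩⟩
  obtain ⟨i₀, -, hmin⟩ := Finset.exists_min_image Finset.univ
    (fun i => (hB.eigenvalues i - lam) ^ 2) ⟨Classical.arbitrary _, Finset.mem_univ _⟩
  refine ⟨hB.eigenvalues i₀, ⟨hB.eigenvectorBasis i₀,
      fun h => hB.eigenvectorBasis.orthonormal.ne_zero i₀ (by ext j; simpa using congrFun h j),
      hB.mulVec_eigenvectorBasis i₀⟩, ?_⟩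
  set b := hB.eigenvectorBasis with hbdef
  set zE : EuclideanSpace ℝ (Fin n) := (WithLp.equiv 2 _).symm z with hzE
  set y : Fin n → ℝ := fun i => B.mulVec z i - lam * z i with hy
  set yE : EuclideanSpace ℝ (Fin n) := (WithLp.equiv 2 _).symm y with hyE
  have hBsymm : Bᵀ = B := by
    have := hB; rwa [Matrix.IsHermitian, Matrix.conjTranspose_eq_transpose_of_trivial] at this
  have hrepr : ∀ i, b.repr yE i = (hB.eigenvalues i - lam) * b.repr zE i := by
    intro i
    have h1 : b.repr yE i = (inner ℝ (b i) yE : ℝ) := b.repr_apply_apply yE i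
    have h2 : b.repr zE i = (inner ℝ (b i) zE : ℝ) := b.repr_apply_apply zE i
    have hiy : (inner ℝ (b i) yE : ℝ) = dotProduct (⇑(b i)) y := by
      simp [PiLp.inner_apply, RCLike.inner_apply, dotProduct, hyE, mul_comm]
    have hiz : (inner ℝ (b i) zE : ℝ) = dotProduct (⇑(b i)) z := by
      simp [PiLp.inner_apply, RCLike.inner_apply, dotProduct, hzE, mul_comm]
    have hadj : dotProduct (⇑(b i)) (B.mulVec z)
        = hB.eigenvalues i * dotProduct (⇑(b i)) z := by
      rw [Matrix.dotProduct_mulVec, ← Matrix.mulVec_transpose, hBsymm,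
        hB.mulVec_eigenvectorBasis i, smul_dotProduct, smul_eq_mul]
    have hysplit : dotProduct (⇑(b i)) y
        = dotProduct (⇑(b i)) (B.mulVec z) - lam * dotProduct (⇑(b i)) z := by
      simp only [hy, dotProduct, Finset.mul_sum, mul_sub, ← Finset.sum_sub_distrib]
      congr 1; funext j; ring
    rw [h1, h2, hiy, hiz, hysplit, hadj]; ring
  have hnormy : ∑ i, y i ^ 2 = ∑ i, (b.repr yE i) ^ 2 := by
    have h1 : ‖yE‖ ^ 2 = ∑ i, y i ^ 2 := by
      rw [EuclideanSpace.norm_eq, Real.sq_sqrt (by positivity)]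
      simp [hyE, sq_abs]
    have h2 : ‖b.repr yE‖ ^ 2 = ∑ i, (b.repr yE i) ^ 2 := by
      rw [EuclideanSpace.norm_eq, Real.sq_sqrt (by positivity)]
      simp [sq_abs]
    rw [← h1, ← h2, b.repr.norm_map yE]
  have hnormz : ∑ i, z i ^ 2 = ∑ i, (b.repr zE i) ^ 2 := by
    have h1 : ‖zE‖ ^ 2 = ∑ i, z i ^ 2 := by
      rw [EuclideanSpace.norm_eq, Real.sq_sqrt (by positivity)]
      simp [hzE, sq_abs]
    have h2 : ‖b.repr zE‖ ^ 2 = ∑ i, (b.repr zE i) ^ 2 := by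
      rw [EuclideanSpace.norm_eq, Real.sq_sqrt (by positivity)]
      simp [sq_abs]
    rw [← h1, ← h2, b.repr.norm_map zE]
  have hyid : ∀ i, B.mulVec z i - lam * z i = y i := fun i => rfl
  calc (hB.eigenvalues i₀ - lam) ^ 2 * ∑ i, z i ^ 2
      = ∑ i, (hB.eigenvalues i₀ - lam) ^ 2 * (b.repr zE i) ^ 2 := by
        rw [hnormz, Finset.mul_sum]
    _ ≤ ∑ i, (b.repr yE i) ^ 2 := by
        refine Finset.sum_le_sum fun i _ => ?_
        rw [hrepr i]
        have h := hmin i (Finset.mem_univ i)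
        nlinarith [sq_nonneg (b.repr zE i), sq_nonneg ((hB.eigenvalues i - lam) * b.repr zE i)]
    _ = ∑ i, (B.mulVec z i - lam * z i) ^ 2 := hnormy.symm


lemma jacobi_row {n : ℕ} (a V : ℕ → ℝ) (w : Fin n → ℝ) (i : Fin n) :
    (jacobiMatrix n a V).mulVec w i =
      (if h : i.1 + 1 < n then a (i.1 + 2) * w ⟨i.1 + 1, h⟩ else 0) +
      ((if h : 1 ≤ i.1 then a (i.1 + 1) * w ⟨i.1 - 1, by omega⟩ else 0) +
        V (i.1 + 1) * w i) := by
  classical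
  have hsplit : ∀ j : Fin n, jacobiMatrix n a V i j * w j =
      (if i.1 + 1 = j.1 then a (i.1 + 2) * w j else 0) +
      ((if j.1 + 1 = i.1 then a (i.1 + 1) * w j else 0) +
       (if i = j then V (i.1 + 1) * w j else 0)) := by
    intro j
    simp only [jacobiMatrix]
    by_cases h1 : i.1 + 1 = j.1
    · have h2 : ¬ (j.1 + 1 = i.1) := by omega
      have h3 : i ≠ j := fun h => by rw [h] at h1; omega
      simp only [if_pos h1, if_neg h2, if_neg h3]
      rw [show j.1 + 1 = i.1 + 2 by omega]; ring
    · by_cases h2 : j.1 + 1 = i.1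
      · have h3 : i ≠ j := fun h => by rw [h] at h2; omega
        simp only [if_neg h1, if_pos h2, if_neg h3]; ring
      · by_cases h3 : i = j
        · simp only [if_neg h1, if_neg h2, if_pos h3]; ring
        · simp only [if_neg h1, if_neg h2, if_neg h3]; ring
  simp only [Matrix.mulVec, dotProduct]
  rw [Finset.sum_congr rfl (fun j _ => hsplit j), Finset.sum_add_distrib]
  congr 1
  · by_cases h : i.1 + 1 < n
    · rw [dif_pos h, Finset.sum_eq_single (⟨i.1 + 1, h⟩ : Fin n)]
      · rw [if_pos rfl]
      · intro j _ hj
        rw [if_neg]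
        exact fun hc => hj (Fin.ext hc.symm)
      · exact fun habs => absurd (Finset.mem_univ _) habs
    · rw [dif_neg h, Finset.sum_eq_zero]
      intro j _
      rw [if_neg]
      exact fun hc => h (hc ▸ j.2)
  · rw [Finset.sum_add_distrib]
    congr 1
    · by_cases h : 1 ≤ i.1
      · have hlt : i.1 - 1 < n := by omega
        rw [dif_pos h, Finset.sum_eq_single (⟨i.1 - 1, hlt⟩ : Fin n)]
        · rw [if_pos (by simp; omega)]
        · intro j _ hj
          rw [if_neg]
          exact fun hc => hj (Fin.ext (by simp only [Fin.val_mk]; omega))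
        · exact fun habs => absurd (Finset.mem_univ _) habs
      · rw [dif_neg h, Finset.sum_eq_zero]
        intro j _
        rw [if_neg]
        omega
    · rw [Finset.sum_ite_eq]
      simp


lemma extV_eq {L : ℕ} (u : Fin L → ℝ) (n : ℕ) (h1 : 1 ≤ n) (h2 : n ≤ L) :
    extV L u n = u ⟨n - 1, by omega⟩ := by rw [extV, dif_pos ⟨h1, h2⟩]

lemma extV_zero {L : ℕ} (u : Fin L → ℝ) (n : ℕ) (h : ¬ (1 ≤ n ∧ n ≤ L)) :
    extV L u n = 0 := by rw [extV, dif_neg h]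

lemma fin_congr {L : ℕ} (u : Fin L → ℝ) {x y : ℕ} (px : x < L) (py : y < L) (h : x = y) :
    u ⟨x, px⟩ = u ⟨y, py⟩ := by subst h; rfl

lemma eig_rec {L : ℕ} (a V : ℕ → ℝ) (u : Fin L → ℝ) (Eu : ℝ)
    (hu : (jacobiMatrix L a V).mulVec u = Eu • u) :
    ∀ n, 1 ≤ n → n ≤ L →
      a (n + 1) * extV L u (n + 1) + a n * extV L u (n - 1) + V n * extV L u n
        = Eu * extV L u n := by
  intro n h1 hL
  have hi : n - 1 < L := by omega
  have hrow := congrFun hu ⟨n - 1, hi⟩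
  rw [jacobi_row] at hrow
  simp only [Pi.smul_apply, smul_eq_mul] at hrow
  have e0 : extV L u n = u ⟨n - 1, hi⟩ := extV_eq u n h1 hL
  have eV : V ((⟨n - 1, hi⟩ : Fin L).1 + 1) = V n := by
    congr 1; simp only [Fin.val_mk]; omega
  have eEu : u ⟨n-1, hi⟩ = extV L u n := e0.symm
  -- super-diagonal term
  have hsup : (if h : (⟨n - 1, hi⟩ : Fin L).1 + 1 < L
      then a ((⟨n - 1, hi⟩ : Fin L).1 + 2) * u ⟨(⟨n - 1, hi⟩ : Fin L).1 + 1, h⟩ else 0)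
      = a (n + 1) * extV L u (n + 1) := by
    by_cases hc : n < L
    · have hcc : (⟨n - 1, hi⟩ : Fin L).1 + 1 < L := by simp only [Fin.val_mk]; omega
      rw [dif_pos hcc, extV_eq u (n+1) (by omega) (by omega)]
      have ha : (⟨n - 1, hi⟩ : Fin L).1 + 2 = n + 1 := by simp only [Fin.val_mk]; omega
      rw [ha]
      exact congrArg _ (fin_congr u _ _ (by simp only [Fin.val_mk]; omega))
    · have hcc : ¬ ((⟨n - 1, hi⟩ : Fin L).1 + 1 < L) := by simp only [Fin.val_mk]; omega
      rw [dif_neg hcc, extV_zero u (n+1) (by omega)]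
      ring
  -- sub-diagonal term
  have hsub : (if h : 1 ≤ (⟨n - 1, hi⟩ : Fin L).1
      then a ((⟨n - 1, hi⟩ : Fin L).1 + 1) * u ⟨(⟨n - 1, hi⟩ : Fin L).1 - 1, by omega⟩ else 0)
      = a n * extV L u (n - 1) := by
    by_cases hc : 2 ≤ n
    · have hcc : 1 ≤ (⟨n - 1, hi⟩ : Fin L).1 := by simp only [Fin.val_mk]; omega
      rw [dif_pos hcc, extV_eq u (n-1) (by omega) (by omega)]
      have ha : (⟨n - 1, hi⟩ : Fin L).1 + 1 = n := by simp only [Fin.val_mk]; omega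
      rw [ha]
      try exact congrArg _ (fin_congr u _ _ (by simp only [Fin.val_mk]; omega))
    · have hcc : ¬ (1 ≤ (⟨n - 1, hi⟩ : Fin L).1) := by simp only [Fin.val_mk]; omega
      rw [dif_neg hcc, extV_zero u (n-1) (by omega)]
      ring
  rw [hsup, hsub, eV, eEu] at hrow
  linarith [hrow]


set_option maxHeartbeats 1000000 in
lemma transfer_bound {L : ℕ} (a V : ℕ → ℝ) (u : Fin L → ℝ) (Eu M K C2 : ℝ)
    (hM : 1 < M) (hK : 0 < K)
    (ha : ∀ n, 1 ≤ n → n ≤ L + 1 → 1 / M ≤ |a n| ∧ |a n| ≤ M)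
    (hV : ∀ n, 1 ≤ n → n ≤ L → |V n| ≤ K)
    (hEuK : |Eu| ≤ K)
    (hu : (jacobiMatrix L a V).mulVec u = Eu • u)
    (hC2 : C2 = 8 * M^2 * K^2 + 2 * M^4 + 1) :
    ∀ n, 1 ≤ n → n ≤ L →
      (extV L u (n+1) ^ 2 + extV L u n ^ 2
         ≤ C2 * (extV L u n ^ 2 + extV L u (n-1) ^ 2)) ∧
      (extV L u n ^ 2 + extV L u (n-1) ^ 2
         ≤ C2 * (extV L u (n+1) ^ 2 + extV L u n ^ 2)) := by
  intro n h1 h2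
  have hrec := eig_rec a V u Eu hu n h1 h2
  set x2 := extV L u (n+1) with hx2
  set x1 := extV L u n with hx1
  set x0 := extV L u (n-1) with hx0
  set A1 := a (n+1) with hA1
  set A0 := a n with hA0
  have hM0 : (0:ℝ) < M := by linarith
  obtain ⟨hA1l, hA1u⟩ := ha (n+1) (by omega) (by omega)
  obtain ⟨hA0l, hA0u⟩ := ha n (by omega) (by omega)
  have hVn := hV n h1 h2
  -- squared coefficient bounds
  have hA1sq : A1^2 ≤ M^2 := by nlinarith [sq_abs A1, abs_nonneg A1]
  have hA0sq : A0^2 ≤ M^2 := by nlinarith [sq_abs A0, abs_nonneg A0]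
  have hA1low : 1 ≤ M^2 * A1^2 := by
    have h' : 1 ≤ |A1| * M := by
      rw [← div_le_iff₀ hM0]
      exact hA1l
    nlinarith [sq_abs A1, abs_nonneg A1]
  have hA0low : 1 ≤ M^2 * A0^2 := by
    have h' : 1 ≤ |A0| * M := by
      rw [← div_le_iff₀ hM0]
      exact hA0l
    nlinarith [sq_abs A0, abs_nonneg A0]
  have hEV : (Eu - V n)^2 ≤ 4 * K^2 := by
    obtain ⟨e1, e2⟩ := abs_le.mp hEuK
    obtain ⟨f1, f2⟩ := abs_le.mp hVn
    nlinarith [sq_nonneg (Eu + V n)]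
  constructor
  · -- forward
    have heq : A1 * x2 = (Eu - V n) * x1 - A0 * x0 := by linarith [hrec]
    have hsq : (A1 * x2)^2 ≤ 2 * (Eu - V n)^2 * x1^2 + 2 * A0^2 * x0^2 := by
      rw [heq]
      nlinarith [sq_nonneg ((Eu - V n) * x1 + A0 * x0)]
    have hx2b : x2^2 ≤ M^2 * (2 * (Eu - V n)^2 * x1^2 + 2 * A0^2 * x0^2) := by
      nlinarith [mul_le_mul_of_nonneg_left hA1low (sq_nonneg x2), sq_nonneg (A1*x2),
        mul_le_mul_of_nonneg_left hsq (sq_nonneg M)]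
    have hx2c : x2^2 ≤ 8 * M^2 * K^2 * x1^2 + 2 * M^4 * x0^2 := by
      nlinarith [sq_nonneg x1, sq_nonneg x0, sq_nonneg M, sq_nonneg (M*x0), sq_nonneg (M*x1),
        mul_le_mul_of_nonneg_left hEV (sq_nonneg (M*x1)),
        mul_le_mul_of_nonneg_left hA0sq (sq_nonneg (M*x0))]
    rw [hC2]
    nlinarith [sq_nonneg x0, sq_nonneg x1, sq_nonneg (M*K*x1), sq_nonneg (M^2*x0), sq_nonneg (M*K), sq_nonneg (M^2)]
  · -- backward
    have heq : A0 * x0 = (Eu - V n) * x1 - A1 * x2 := by linarith [hrec]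
    have hsq : (A0 * x0)^2 ≤ 2 * (Eu - V n)^2 * x1^2 + 2 * A1^2 * x2^2 := by
      rw [heq]
      nlinarith [sq_nonneg ((Eu - V n) * x1 + A1 * x2)]
    have hx0b : x0^2 ≤ M^2 * (2 * (Eu - V n)^2 * x1^2 + 2 * A1^2 * x2^2) := by
      nlinarith [mul_le_mul_of_nonneg_left hA0low (sq_nonneg x0), sq_nonneg (A0*x0),
        mul_le_mul_of_nonneg_left hsq (sq_nonneg M)]
    have hx0c : x0^2 ≤ 8 * M^2 * K^2 * x1^2 + 2 * M^4 * x2^2 := by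
      nlinarith [sq_nonneg x1, sq_nonneg x2, sq_nonneg M, sq_nonneg (M*x2), sq_nonneg (M*x1),
        mul_le_mul_of_nonneg_left hEV (sq_nonneg (M*x1)),
        mul_le_mul_of_nonneg_left hA1sq (sq_nonneg (M*x2))]
    rw [hC2]
    nlinarith [sq_nonneg x2, sq_nonneg x1, sq_nonneg (M*K*x1), sq_nonneg (M^2*x2), sq_nonneg (M*K), sq_nonneg (M^2)]

lemma chain_gen (R : ℕ → ℝ) (C2 : ℝ) (hC2 : 1 ≤ C2) (L : ℕ)
    (htr : ∀ n, 1 ≤ n → n ≤ L → R (n+1) ≤ C2 * R n ∧ R n ≤ C2 * R (n+1)) :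
    ∀ d n, 1 ≤ n → n + d ≤ L + 1 → R n ≤ C2^d * R (n+d) ∧ R (n+d) ≤ C2^d * R n := by
  have hC0 : (0:ℝ) ≤ C2 := by linarith
  intro d
  induction d with
  | zero => intro n h1 h2; constructor <;> simp
  | succ d ih =>
    intro n h1 h2
    obtain ⟨ih1, ih2⟩ := ih n h1 (by omega)
    obtain ⟨t1, t2⟩ := htr (n+d) (by omega) (by omega)
    constructor
    · calc R n ≤ C2^d * R (n+d) := ih1
        _ ≤ C2^d * (C2 * R (n+d+1)) := mul_le_mul_of_nonneg_left t2 (by positivity)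
        _ = C2^(d+1) * R (n+(d+1)) := by rw [show n + (d+1) = n + d + 1 from rfl]; ring
    · calc R (n+(d+1)) = R (n+d+1) := rfl
        _ ≤ C2 * R (n+d) := t1
        _ ≤ C2 * (C2^d * R n) := mul_le_mul_of_nonneg_left ih2 (by positivity)
        _ = C2^(d+1) * R n := by ring


lemma jacobi_herm {n : ℕ} (a V : ℕ → ℝ) : (jacobiMatrix n a V).IsHermitian := by
  rw [Matrix.IsHermitian, Matrix.conjTranspose_eq_transpose_of_trivial]
  ext i j
  simp only [Matrix.transpose_apply, jacobiMatrix]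
  by_cases h3 : i = j
  · subst h3; rfl
  · by_cases h1 : i.1 + 1 = j.1
    · have h2 : ¬ (j.1 + 1 = i.1) := by omega
      rw [if_neg h2, if_pos h1, if_pos h1]
    · by_cases h2 : j.1 + 1 = i.1
      · rw [if_pos h2, if_neg h1, if_pos h2]
      · rw [if_neg h2, if_neg h1, if_neg (fun h => h3 h.symm), if_neg h1, if_neg h2, if_neg h3]

-- sum of squares of extended vector over a sub-window is at most total
lemma sum_extV_sq_le {L m : ℕ} (w : Fin L → ℝ) (hm : m ≤ L)
    (hnorm : ∑ i, w i ^ 2 = 1) (off : ℕ) :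
    ∑ i : Fin m, extV L w (i.1 + off) ^ 2 ≤ 1 := by
  have hterm : ∀ i : Fin m, extV L w (i.1 + off) ^ 2
      ≤ extV L w (i.1 + off) ^ 2 := fun _ => le_refl _
  -- compare with full sum over ℕ range L+1+off  -- simpler: bound via sum over Fin L
  have key : ∑ i : Fin m, extV L w (i.1 + off) ^ 2
      ≤ ∑ n ∈ Finset.range (L + off + 1), extV L w n ^ 2 := by
    have : ∑ i : Fin m, extV L w (i.1 + off) ^ 2
        = ∑ n ∈ (Finset.range m).image (fun t => t + off), extV L w n ^ 2 := by
      rw [Finset.sum_image (by intro x _ y _ h; simp only at h; omega)]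
      rw [← Fin.sum_univ_eq_sum_range (fun t => extV L w (t + off) ^ 2) m]
    rw [this]
    apply Finset.sum_le_sum_of_subset_of_nonneg
    · intro t ht
      simp only [Finset.mem_image, Finset.mem_range] at ht ⊢
      obtain ⟨s, hs, rfl⟩ := ht
      omega
    · intro t _ _; positivity
  have full : ∑ n ∈ Finset.range (L + off + 1), extV L w n ^ 2 = 1 := by
    have h1 : ∑ n ∈ Finset.range (L + off + 1), extV L w n ^ 2
        = ∑ n ∈ Finset.range (L + 1), extV L w n ^ 2 := by
      apply (Finset.sum_subset _ _).symm
      · intro t ht; simp only [Finset.mem_range] at *; omega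
      · intro t _ ht2
        simp only [Finset.mem_range] at ht2
        rw [extV, dif_neg (by omega)]
        norm_num
    have h2 : ∑ n ∈ Finset.range (L + 1), extV L w n ^ 2
        = ∑ n ∈ Finset.range L, extV L w (n + 1) ^ 2 := by
      rw [Finset.sum_range_succ' (fun n => extV L w n ^ 2) L]
      rw [extV, dif_neg (by omega)]
      norm_num
    rw [h1, h2, ← Fin.sum_univ_eq_sum_range (fun t => extV L w (t + 1) ^ 2) L, ← hnorm]
    apply Finset.sum_congr rfl
    intro i _
    rw [extV, dif_pos ⟨by omega, by omega⟩]
    congr 2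
  rw [full] at key
  exact key

section cutlemma

variable {L : ℕ} (a V : ℕ → ℝ) (u v : Fin L → ℝ) (Eu Ev E : ℝ)

lemma sq_diff_comm (x y : ℝ) : (x - y) ^ 2 = (y - x) ^ 2 := by ring

lemma EuEv_sq (hEu : |Eu| ≤ E) (hEv : |Ev| ≤ E) : (Eu - Ev) ^ 2 ≤ 4 * E ^ 2 := by
  obtain ⟨h1, h2⟩ := abs_le.mp hEu
  obtain ⟨h3, h4⟩ := abs_le.mp hEv
  nlinarith [sq_nonneg (Eu + Ev)]

set_option maxHeartbeats 1000000 in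
lemma left_cut_core
    (hu : (jacobiMatrix L a V).mulVec u = Eu • u)
    (hv : (jacobiMatrix L a V).mulVec v = Ev • v)
    (hEu : |Eu| ≤ E) (hEv : |Ev| ≤ E) (hE : 0 ≤ E)
    (hnv : ∑ i, v i ^ 2 = 1)
    (ρ4 : ℝ) (hρ : 0 < ρ4) (hρ2 : ρ4 ≤ 1/2)
    (k : ℕ) (hk1 : 2 ≤ k) (hkL : k ≤ L)
    (hlow : 9 * ρ4 ^ 2 * (extV L u k ^ 2 + extV L v k ^ 2)
        ≤ ∑ i : Fin (k - 1 - 1 + 1),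
            (extV L v k * extV L u (i.1 + 1) - extV L u k * extV L v (i.1 + 1)) ^ 2)
    (hrne : 0 < extV L u k ^ 2 + extV L v k ^ 2)
    (hcase : extV L u k ^ 2 ≤ extV L v k ^ 2) :
    1 ≤ eigCount (jacobiSub 1 (k - 1) a V) (Set.Icc (-(E / ρ4)) (E / ρ4)) := by
  classical
  set uk := extV L u k with huk
  set vk := extV L v k with hvk
  set Z : ℕ → ℝ := fun n => vk * extV L u n - uk * extV L v n with hZ
  have hZk : Z k = 0 := by simp only [hZ]; ring
  have hZ0 : Z 0 = 0 := by
    have h1 : extV L u 0 = 0 := by rw [extV, dif_neg (by omega)]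
    have h2 : extV L v 0 = 0 := by rw [extV, dif_neg (by omega)]
    simp only [hZ, h1, h2]; ring
  have hZrec : ∀ n, 1 ≤ n → n ≤ L →
      a (n + 1) * Z (n + 1) + a n * Z (n - 1) + V n * Z n
        = vk * (Eu * extV L u n) - uk * (Ev * extV L v n) := by
    intro n h1 h2
    have hru := eig_rec a V u Eu hu n h1 h2
    have hrv := eig_rec a V v Ev hv n h1 h2
    simp only [hZ]
    linear_combination vk * hru - uk * hrv
  set m := k - 1 with hm
  set sz := m - 1 + 1 with hsz
  have hszm : sz = m := by omega
  have hBsub : jacobiSub 1 m a V = jacobiMatrix sz a V := by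
    unfold jacobiSub
    norm_num
    rfl
  set z : Fin sz → ℝ := fun i => Z (i.1 + 1) with hz
  have hZval : ∀ (j : ℕ) (hj : j < sz), z ⟨j, hj⟩ = Z (j + 1) := fun j hj => rfl
  have hrowz : ∀ i : Fin sz, (jacobiMatrix sz a V).mulVec z i
      = vk * (Eu * extV L u (i.1 + 1)) - uk * (Ev * extV L v (i.1 + 1)) := by
    intro i
    have hi : i.1 < sz := i.2
    have hn1 : 1 ≤ i.1 + 1 := by omega
    have hnL : i.1 + 1 ≤ L := by omega
    rw [jacobi_row]
    rw [← hZrec (i.1 + 1) hn1 hnL]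
    have hzi : z i = Z (i.1 + 1) := rfl
    by_cases hc1 : i.1 + 1 < sz
    · rw [dif_pos hc1, hZval (i.1 + 1) hc1]
      by_cases hc2 : 1 ≤ i.1
      · rw [dif_pos hc2, hZval (i.1 - 1) (by omega), hzi,
          show i.1 - 1 + 1 = i.1 + 1 - 1 by omega]
        ring
      · rw [dif_neg hc2, hzi, show i.1 + 1 - 1 = i.1 by omega,
          show i.1 = 0 by omega]
        rw [show (0 : ℕ) + 1 + 1 = 0 + 2 by rfl]
        simp only [hZ0]
        ring
    · rw [dif_neg hc1, hzi]
      have he : i.1 + 1 + 1 = k := by omega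
      rw [he, hZk]
      by_cases hc2 : 1 ≤ i.1
      · rw [dif_pos hc2, hZval (i.1 - 1) (by omega),
          show i.1 - 1 + 1 = i.1 + 1 - 1 by omega]
        ring
      · rw [dif_neg hc2, show i.1 + 1 - 1 = i.1 by omega, show i.1 = 0 by omega]
        simp only [hZ0]
        ring
  obtain ⟨μ, ⟨w, hw0, hww⟩, hineq⟩ :=
    spec_approx (Nat.succ_pos _) (jacobiMatrix sz a V) (jacobi_herm a V) z Eu
  have hres : ∑ i, ((jacobiMatrix sz a V).mulVec z i - Eu * z i) ^ 2
      ≤ 4 * E ^ 2 * uk ^ 2 := by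
    have hterm : ∀ i : Fin sz, ((jacobiMatrix sz a V).mulVec z i - Eu * z i) ^ 2
        = (uk * (Eu - Ev)) ^ 2 * extV L v (i.1 + 1) ^ 2 := by
      intro i
      rw [hrowz i]
      simp only [hz, hZ]
      ring
    rw [Finset.sum_congr rfl fun i _ => hterm i, ← Finset.mul_sum]
    have hsum := sum_extV_sq_le v (show sz ≤ L by omega) hnv 1
    have h1 := EuEv_sq Eu Ev E hEu hEv
    calc (uk * (Eu - Ev)) ^ 2 * ∑ i : Fin sz, extV L v (i.1 + 1) ^ 2
        ≤ (uk * (Eu - Ev)) ^ 2 * 1 :=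
          mul_le_mul_of_nonneg_left hsum (sq_nonneg _)
      _ ≤ 4 * E ^ 2 * uk ^ 2 := by nlinarith [sq_nonneg uk]
  have hlow2 : 9 * ρ4 ^ 2 * (uk ^ 2 + vk ^ 2) ≤ ∑ i, z i ^ 2 := hlow
  have hμEu : (μ - Eu) ^ 2 ≤ (E / (2 * ρ4)) ^ 2 := by
    have h2 : (μ - Eu) ^ 2 * (9 * ρ4 ^ 2 * (uk ^ 2 + vk ^ 2)) ≤ 4 * E ^ 2 * uk ^ 2 := by
      calc (μ - Eu) ^ 2 * (9 * ρ4 ^ 2 * (uk ^ 2 + vk ^ 2))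
          ≤ (μ - Eu) ^ 2 * (∑ i, z i ^ 2) :=
            mul_le_mul_of_nonneg_left hlow2 (sq_nonneg _)
        _ ≤ ∑ i, ((jacobiMatrix sz a V).mulVec z i - Eu * z i) ^ 2 := hineq
        _ ≤ 4 * E ^ 2 * uk ^ 2 := hres
    have h4 : (μ - Eu) ^ 2 * (9 * ρ4 ^ 2) * (uk ^ 2 + vk ^ 2)
        ≤ 2 * E ^ 2 * (uk ^ 2 + vk ^ 2) := by
      nlinarith [sq_nonneg (μ - Eu), sq_nonneg E]
    have h5 : (μ - Eu) ^ 2 * (9 * ρ4 ^ 2) ≤ 2 * E ^ 2 :=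
      le_of_mul_le_mul_right (by linarith [h4]) hrne
    rw [div_pow, le_div_iff₀ (by positivity)]
    nlinarith [sq_nonneg (μ - Eu), sq_nonneg E, sq_nonneg ρ4]
  have habs := abs_le_of_sq_le_sq' hμEu (by positivity)
  have hhalf : E / (2 * ρ4) + E / (2 * ρ4) = E / ρ4 := by
    field_simp
    ring
  have hE2 : E ≤ E / (2 * ρ4) := by
    rw [le_div_iff₀ (by positivity)]
    have h2ρ : 2 * ρ4 ≤ 1 := by linarith
    calc E * (2 * ρ4) ≤ E * 1 := mul_le_mul_of_nonneg_left h2ρ hE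
    _ = E := mul_one E
  obtain ⟨hEu1, hEu2⟩ := abs_le.mp hEu
  have hμδ : μ ∈ Set.Icc (-(E / ρ4)) (E / ρ4) := by
    constructor
    · linarith [habs.1]
    · linarith [habs.2]
  unfold eigCount
  rw [hBsub]
  exact eigCount_aux _ _ μ hμδ w hw0 hww

lemma left_cut
    (hu : (jacobiMatrix L a V).mulVec u = Eu • u)
    (hv : (jacobiMatrix L a V).mulVec v = Ev • v)
    (hEu : |Eu| ≤ E) (hEv : |Ev| ≤ E) (hE : 0 ≤ E)
    (hnu : ∑ i, u i ^ 2 = 1) (hnv : ∑ i, v i ^ 2 = 1)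
    (ρ4 : ℝ) (hρ : 0 < ρ4) (hρ2 : ρ4 ≤ 1/2)
    (k : ℕ) (hk1 : 2 ≤ k) (hkL : k ≤ L)
    (hlow : 9 * ρ4 ^ 2 * (extV L u k ^ 2 + extV L v k ^ 2)
        ≤ ∑ i : Fin (k - 1 - 1 + 1),
            (extV L v k * extV L u (i.1 + 1) - extV L u k * extV L v (i.1 + 1)) ^ 2)
    (hrne : 0 < extV L u k ^ 2 + extV L v k ^ 2) :
    1 ≤ eigCount (jacobiSub 1 (k - 1) a V) (Set.Icc (-(E / ρ4)) (E / ρ4)) := by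
  rcases le_total (extV L u k ^ 2) (extV L v k ^ 2) with hc | hc
  · exact left_cut_core a V u v Eu Ev E hu hv hEu hEv hE hnv ρ4 hρ hρ2 k hk1 hkL hlow hrne hc
  · apply left_cut_core a V v u Ev Eu E hv hu hEv hEu hE hnu ρ4 hρ hρ2 k hk1 hkL ?_ ?_ hc
    · have hsw : ∀ i : Fin (k - 1 - 1 + 1),
          (extV L u k * extV L v (i.1 + 1) - extV L v k * extV L u (i.1 + 1)) ^ 2
          = (extV L v k * extV L u (i.1 + 1) - extV L u k * extV L v (i.1 + 1)) ^ 2 :=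
        fun i => by ring
      rw [Finset.sum_congr rfl fun i _ => hsw i]
      linarith [hlow]
    · linarith [hrne]

set_option maxHeartbeats 1000000 in
lemma right_cut_core
    (hu : (jacobiMatrix L a V).mulVec u = Eu • u)
    (hv : (jacobiMatrix L a V).mulVec v = Ev • v)
    (hEu : |Eu| ≤ E) (hEv : |Ev| ≤ E) (hE : 0 ≤ E)
    (hnv : ∑ i, v i ^ 2 = 1)
    (ρ4 : ℝ) (hρ : 0 < ρ4) (hρ2 : ρ4 ≤ 1/2)
    (k : ℕ) (hk1 : 1 ≤ k) (hkL : k + 1 ≤ L)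
    (hlow : 9 * ρ4 ^ 2 * (extV L u k ^ 2 + extV L v k ^ 2)
        ≤ ∑ i : Fin (L - (k + 1) + 1),
            (extV L v k * extV L u (i.1 + k + 1) - extV L u k * extV L v (i.1 + k + 1)) ^ 2)
    (hrne : 0 < extV L u k ^ 2 + extV L v k ^ 2)
    (hcase : extV L u k ^ 2 ≤ extV L v k ^ 2) :
    1 ≤ eigCount (jacobiSub (k + 1) L a V) (Set.Icc (-(E / ρ4)) (E / ρ4)) := by
  classical
  set uk := extV L u k with huk
  set vk := extV L v k with hvk
  set Z : ℕ → ℝ := fun n => vk * extV L u n - uk * extV L v n with hZ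
  have hZk : Z k = 0 := by simp only [hZ]; ring
  have hZL1 : Z (L + 1) = 0 := by
    have h1 : extV L u (L + 1) = 0 := by rw [extV, dif_neg (by omega)]
    have h2 : extV L v (L + 1) = 0 := by rw [extV, dif_neg (by omega)]
    simp only [hZ, h1, h2]; ring
  have hZrec : ∀ n, 1 ≤ n → n ≤ L →
      a (n + 1) * Z (n + 1) + a n * Z (n - 1) + V n * Z n
        = vk * (Eu * extV L u n) - uk * (Ev * extV L v n) := by
    intro n h1 h2
    have hru := eig_rec a V u Eu hu n h1 h2
    have hrv := eig_rec a V v Ev hv n h1 h2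
    simp only [hZ]
    linear_combination vk * hru - uk * hrv
  set sz := L - (k + 1) + 1 with hsz
  have hBsub : jacobiSub (k + 1) L a V
      = jacobiMatrix sz (fun n => a (n + k)) (fun n => V (n + k)) := by
    unfold jacobiSub
    norm_num
    rfl
  set z : Fin sz → ℝ := fun i => Z (i.1 + k + 1) with hz
  have hZval : ∀ (j : ℕ) (hj : j < sz), z ⟨j, hj⟩ = Z (j + k + 1) := fun j hj => rfl
  have hrowz : ∀ i : Fin sz,
      (jacobiMatrix sz (fun n => a (n + k)) (fun n => V (n + k))).mulVec z i
      = vk * (Eu * extV L u (i.1 + k + 1)) - uk * (Ev * extV L v (i.1 + k + 1)) := by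
    intro i
    have hi : i.1 < sz := i.2
    set n := i.1 + k + 1 with hn
    have hn1 : 1 ≤ n := by omega
    have hnL : n ≤ L := by omega
    rw [jacobi_row]
    rw [← hZrec n hn1 hnL]
    have hzi : z i = Z n := rfl
    have ha2 : a (i.1 + 2 + k) = a (n + 1) := by rw [hn]; congr 1; omega
    have ha1 : a (i.1 + 1 + k) = a n := by rw [hn]; congr 1; omega
    have hV1 : V (i.1 + 1 + k) = V n := by rw [hn]; congr 1; omega
    by_cases hc1 : i.1 + 1 < sz
    · rw [dif_pos hc1, hZval (i.1 + 1) hc1]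
      rw [show i.1 + 1 + k + 1 = n + 1 by omega, ha2]
      by_cases hc2 : 1 ≤ i.1
      · rw [dif_pos hc2, hZval (i.1 - 1) (by omega),
          show i.1 - 1 + k + 1 = n - 1 by omega, ha1, hzi, hV1]
        ring
      · rw [dif_neg hc2, hzi, hV1]
        have hnk : n - 1 = k := by omega
        rw [hnk] at *
        rw [show a n * Z k = a n * 0 by rw [hZk]]
        ring
    · rw [dif_neg hc1, hzi, hV1]
      have hnL2 : n = L := by omega
      by_cases hc2 : 1 ≤ i.1
      · rw [dif_pos hc2, hZval (i.1 - 1) (by omega),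
          show i.1 - 1 + k + 1 = n - 1 by omega, ha1]
        rw [show a (n + 1) * Z (n + 1) = a (n + 1) * 0 by rw [hnL2, hZL1]]
        ring
      · rw [dif_neg hc2]
        rw [show a (n + 1) * Z (n + 1) = a (n + 1) * 0 by rw [hnL2, hZL1]]
        rw [show a n * Z (n - 1) = a n * 0 by rw [show n - 1 = k by omega, hZk]]
        ring
  obtain ⟨μ, ⟨w, hw0, hww⟩, hineq⟩ :=
    spec_approx (Nat.succ_pos _) (jacobiMatrix sz (fun n => a (n + k)) (fun n => V (n + k)))
      (jacobi_herm _ _) z Eu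
  have hres : ∑ i, ((jacobiMatrix sz (fun n => a (n + k)) (fun n => V (n + k))).mulVec z i
        - Eu * z i) ^ 2
      ≤ 4 * E ^ 2 * uk ^ 2 := by
    have hterm : ∀ i : Fin sz,
        ((jacobiMatrix sz (fun n => a (n + k)) (fun n => V (n + k))).mulVec z i - Eu * z i) ^ 2
        = (uk * (Eu - Ev)) ^ 2 * extV L v (i.1 + k + 1) ^ 2 := by
      intro i
      rw [hrowz i]
      simp only [hz, hZ]
      ring
    rw [Finset.sum_congr rfl fun i _ => hterm i, ← Finset.mul_sum]
    have hsum := sum_extV_sq_le v (show sz ≤ L by omega) hnv (k + 1)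
    have h1 := EuEv_sq Eu Ev E hEu hEv
    calc (uk * (Eu - Ev)) ^ 2 * ∑ i : Fin sz, extV L v (i.1 + k + 1) ^ 2
        ≤ (uk * (Eu - Ev)) ^ 2 * 1 :=
          mul_le_mul_of_nonneg_left hsum (sq_nonneg _)
      _ ≤ 4 * E ^ 2 * uk ^ 2 := by nlinarith [sq_nonneg uk]
  have hlow2 : 9 * ρ4 ^ 2 * (uk ^ 2 + vk ^ 2) ≤ ∑ i, z i ^ 2 := hlow
  have hμEu : (μ - Eu) ^ 2 ≤ (E / (2 * ρ4)) ^ 2 := by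
    have h2 : (μ - Eu) ^ 2 * (9 * ρ4 ^ 2 * (uk ^ 2 + vk ^ 2)) ≤ 4 * E ^ 2 * uk ^ 2 := by
      calc (μ - Eu) ^ 2 * (9 * ρ4 ^ 2 * (uk ^ 2 + vk ^ 2))
          ≤ (μ - Eu) ^ 2 * (∑ i, z i ^ 2) :=
            mul_le_mul_of_nonneg_left hlow2 (sq_nonneg _)
        _ ≤ ∑ i, ((jacobiMatrix sz (fun n => a (n + k)) (fun n => V (n + k))).mulVec z i
              - Eu * z i) ^ 2 := hineq
        _ ≤ 4 * E ^ 2 * uk ^ 2 := hres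
    have h4 : (μ - Eu) ^ 2 * (9 * ρ4 ^ 2) * (uk ^ 2 + vk ^ 2)
        ≤ 2 * E ^ 2 * (uk ^ 2 + vk ^ 2) := by
      nlinarith [sq_nonneg (μ - Eu), sq_nonneg E]
    have h5 : (μ - Eu) ^ 2 * (9 * ρ4 ^ 2) ≤ 2 * E ^ 2 :=
      le_of_mul_le_mul_right (by linarith [h4]) hrne
    rw [div_pow, le_div_iff₀ (by positivity)]
    nlinarith [sq_nonneg (μ - Eu), sq_nonneg E, sq_nonneg ρ4]
  have habs := abs_le_of_sq_le_sq' hμEu (by positivity)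
  have hhalf : E / (2 * ρ4) + E / (2 * ρ4) = E / ρ4 := by
    field_simp
    ring
  have hE2 : E ≤ E / (2 * ρ4) := by
    rw [le_div_iff₀ (by positivity)]
    have h2ρ : 2 * ρ4 ≤ 1 := by linarith
    calc E * (2 * ρ4) ≤ E * 1 := mul_le_mul_of_nonneg_left h2ρ hE
    _ = E := mul_one E
  obtain ⟨hEu1, hEu2⟩ := abs_le.mp hEu
  have hμδ : μ ∈ Set.Icc (-(E / ρ4)) (E / ρ4) := by
    constructor
    · linarith [habs.1]
    · linarith [habs.2]
  unfold eigCount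
  rw [hBsub]
  exact eigCount_aux _ _ μ hμδ w hw0 hww

lemma right_cut
    (hu : (jacobiMatrix L a V).mulVec u = Eu • u)
    (hv : (jacobiMatrix L a V).mulVec v = Ev • v)
    (hEu : |Eu| ≤ E) (hEv : |Ev| ≤ E) (hE : 0 ≤ E)
    (hnu : ∑ i, u i ^ 2 = 1) (hnv : ∑ i, v i ^ 2 = 1)
    (ρ4 : ℝ) (hρ : 0 < ρ4) (hρ2 : ρ4 ≤ 1/2)
    (k : ℕ) (hk1 : 1 ≤ k) (hkL : k + 1 ≤ L)
    (hlow : 9 * ρ4 ^ 2 * (extV L u k ^ 2 + extV L v k ^ 2)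
        ≤ ∑ i : Fin (L - (k + 1) + 1),
            (extV L v k * extV L u (i.1 + k + 1) - extV L u k * extV L v (i.1 + k + 1)) ^ 2)
    (hrne : 0 < extV L u k ^ 2 + extV L v k ^ 2) :
    1 ≤ eigCount (jacobiSub (k + 1) L a V) (Set.Icc (-(E / ρ4)) (E / ρ4)) := by
  rcases le_total (extV L u k ^ 2) (extV L v k ^ 2) with hc | hc
  · exact right_cut_core a V u v Eu Ev E hu hv hEu hEv hE hnv ρ4 hρ hρ2 k hk1 hkL hlow hrne hc
  · apply right_cut_core a V v u Ev Eu E hv hu hEv hEu hE hnu ρ4 hρ hρ2 k hk1 hkL ?_ ?_ hc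
    · have hsw : ∀ i : Fin (L - (k + 1) + 1),
          (extV L u k * extV L v (i.1 + k + 1) - extV L v k * extV L u (i.1 + k + 1)) ^ 2
          = (extV L v k * extV L u (i.1 + k + 1) - extV L u k * extV L v (i.1 + k + 1)) ^ 2 :=
        fun i => by ring
      rw [Finset.sum_congr rfl fun i _ => hsw i]
      linarith [hlow]
    · linarith [hrne]

end cutlemma


lemma cut_arith (CG t η us vs uk vk X : ℝ)
    (hCG : 1 ≤ CG) (ht0 : 0 < t) (ht1 : t ≤ 1) (hη : 0 < η)
    (hus : t / 2 ≤ us ^ 2) (hvs : vs ^ 2 ≤ η ^ 2 * t)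
    (huk : uk ^ 2 ≤ 2 * CG * vk ^ 2)
    (hη2 : 32 * CG * η ^ 2 ≤ 1) (hη8 : 72 * (2 * CG + 1) * η ^ 8 ≤ 1)
    (hX : (vk * us - uk * vs) ^ 2 ≤ X) :
    9 * (η * t) ^ 8 * (uk ^ 2 + vk ^ 2) ≤ X := by
  have h1 : vk ^ 2 * us ^ 2 / 2 - 2 * (uk ^ 2 * vs ^ 2) ≤ (vk * us - uk * vs) ^ 2 := by
    nlinarith [sq_nonneg (vk * us - 2 * (uk * vs)), sq_nonneg (uk * vs)]
  have h2 : vk ^ 2 * (t / 2) ≤ vk ^ 2 * us ^ 2 := mul_le_mul_of_nonneg_left hus (sq_nonneg vk)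
  have h3 : uk ^ 2 * vs ^ 2 ≤ (2 * CG * vk ^ 2) * (η ^ 2 * t) :=
    mul_le_mul huk hvs (sq_nonneg vs) (by positivity)
  have k1 : (0:ℝ) ≤ vk ^ 2 * t := by positivity
  have k2 : (0:ℝ) ≤ 1 - 32 * CG * η ^ 2 := by linarith
  have h4 : vk ^ 2 * t / 8 ≤ vk ^ 2 * (t / 2) / 2 - 2 * ((2 * CG * vk ^ 2) * (η ^ 2 * t)) := by
    nlinarith [mul_nonneg k1 k2]
  have ht7 : t ^ 7 ≤ 1 := pow_le_one₀ ht0.le ht1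
  have hA : (0:ℝ) ≤ η ^ 8 := by positivity
  have hT : (0:ℝ) ≤ t ^ 7 := by positivity
  have h9 : 9 * (2 * CG + 1) * (η ^ 8 * t ^ 7) ≤ 1 / 8 := by
    have : 9 * (2 * CG + 1) * (η ^ 8 * t ^ 7) ≤ 9 * (2 * CG + 1) * η ^ 8 := by
      have hcoef : (0:ℝ) ≤ 9 * (2 * CG + 1) * η ^ 8 := by positivity
      nlinarith [mul_le_mul_of_nonneg_left ht7 hcoef]
    linarith
  have h6 : 9 * (η * t) ^ 8 * ((2 * CG + 1) * vk ^ 2) ≤ vk ^ 2 * t / 8 := by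
    have hexp : 9 * (η * t) ^ 8 * ((2 * CG + 1) * vk ^ 2)
        = (9 * (2 * CG + 1) * (η ^ 8 * t ^ 7)) * (vk ^ 2 * t) := by ring
    rw [hexp]
    calc (9 * (2 * CG + 1) * (η ^ 8 * t ^ 7)) * (vk ^ 2 * t)
        ≤ (1 / 8) * (vk ^ 2 * t) := mul_le_mul_of_nonneg_right h9 k1
      _ = vk ^ 2 * t / 8 := by ring
  have h5 : 9 * (η * t) ^ 8 * (uk ^ 2 + vk ^ 2) ≤ 9 * (η * t) ^ 8 * ((2 * CG + 1) * vk ^ 2) := by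
    apply mul_le_mul_of_nonneg_left _ (by positivity)
    nlinarith [huk]
  linarith [h1, h2, h3, h4, h5, h6, hX]

lemma peak_lemma {L : ℕ} (u : Fin L → ℝ) (hL : 1 ≤ L) (hnu : ∑ i, u i ^ 2 = 1) :
    ∃ p, 1 ≤ p ∧ p ≤ L ∧ 1 / (L:ℝ) ≤ extV L u p ^ 2 + extV L u (p - 1) ^ 2 := by
  by_contra hcon
  push_neg at hcon
  have hLpos : (0:ℝ) < L := by exact_mod_cast hL
  have hterm : ∀ i : Fin L, u i ^ 2 < 1 / (L:ℝ) := by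
    intro i
    have h := hcon (i.1 + 1) (by omega) (by omega)
    have he : extV L u (i.1 + 1) = u i := by
      rw [extV, dif_pos ⟨by omega, by omega⟩]
      exact congrArg u (Fin.ext rfl)
    rw [he] at h
    nlinarith [sq_nonneg (extV L u (i.1 + 1 - 1)), sq_nonneg (u i)]
  have hsum : ∑ i : Fin L, u i ^ 2 < ∑ _i : Fin L, 1 / (L:ℝ) := by
    apply Finset.sum_lt_sum_of_nonempty
    · exact Finset.univ_nonempty_iff.mpr ⟨⟨0, by omega⟩⟩
    · intro i _; exact hterm i
  rw [hnu, Finset.sum_const, Finset.card_univ, Fintype.card_fin, nsmul_eq_mul] at hsum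
  rw [mul_one_div, div_self (ne_of_gt hLpos)] at hsum
  exact lt_irrefl 1 hsum


lemma eta_facts (C2 η : ℝ) (S : ℕ)
    (hC23 : 3 ≤ C2) (hη : 0 < η)
    (hη0 : η < 1 / (100 * C2 ^ (2*S+12))) :
    η < 1/100 ∧ 32 * (C2 * C2 ^ (2*S+8)) * η ^ 2 ≤ 1
      ∧ 72 * (2 * (C2 * C2 ^ (2*S+8)) + 1) * η ^ 8 ≤ 1
      ∧ C2 ^ (2*S+8) * η ^ 2 < 1 := by
  have hC21 : (1:ℝ) ≤ C2 := by linarith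
  set CG : ℝ := C2 * C2 ^ (2*S+8) with hCG
  have hCG1 : (1:ℝ) ≤ CG := by
    calc (1:ℝ) = 1 * 1 := by ring
      _ ≤ C2 * C2 ^ (2*S+8) := by
          apply mul_le_mul hC21 (one_le_pow₀ hC21) zero_le_one (by linarith)
  have hbig1 : (1:ℝ) ≤ C2 ^ (2*S+12) := one_le_pow₀ hC21
  have hX0 : (0:ℝ) < 100 * C2 ^ (2*S+12) := by positivity
  have hηX : η * (100 * C2 ^ (2*S+12)) < 1 := by
    rw [← lt_div_iff₀ hX0]; exact hη0
  have hCGle : CG ≤ C2 ^ (2*S+12) := by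
    have h1 : CG = C2 ^ (2*S+9) := by rw [hCG, ← pow_succ']
    rw [h1]
    exact pow_le_pow_right₀ hC21 (by omega)
  have hη100 : η < 1/100 := by nlinarith
  have hCGη : CG * η < 1/100 := by nlinarith [mul_le_mul_of_nonneg_right hCGle hη.le]
  have hη2 : 32 * CG * η ^ 2 ≤ 1 := by nlinarith
  have hΓη : C2 ^ (2*S+8) * η ^ 2 < 1 := by
    have h3 : (3:ℝ) * (C2 ^ (2*S+8) * η^2) ≤ 32 * CG * η^2 := by
      have : (3:ℝ) * C2 ^ (2*S+8) ≤ 32 * CG := by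
        rw [hCG]; nlinarith [one_le_pow₀ hC21 (n := 2*S+8)]
      nlinarith [sq_nonneg η, mul_le_mul_of_nonneg_right this (sq_nonneg η)]
    nlinarith [pow_nonneg (by linarith : (0:ℝ) ≤ C2) (2*S+8), sq_nonneg η, hη]
  refine ⟨hη100, hη2, ?_, hΓη⟩
  have hη6 : η ^ 6 ≤ 1 := pow_le_one₀ hη.le (by linarith)
  have hsplit : 72 * (2 * CG + 1) * η ^ 8 = (144 * CG * η^2 + 72 * η^2) * η ^ 6 := by ring
  rw [hsplit]
  have hb : 144 * CG * η^2 + 72 * η^2 ≤ 1 := by nlinarith [hη2, sq_nonneg η, hCG1]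
  have hbn : (0:ℝ) ≤ 144 * CG * η^2 + 72 * η^2 := by positivity
  calc (144 * CG * η^2 + 72 * η^2) * η ^ 6 ≤ 1 * η^6 := mul_le_mul_of_nonneg_right hb (by positivity)
    _ ≤ 1 := by nlinarith [hη6]

lemma crossing_gen (Ru Rv : ℕ → ℝ) (p q : ℕ) (hpq : p < q)
    (hPp : Rv p < Ru p) (hPq : Ru q ≤ Rv q) :
    ∃ ks, p ≤ ks ∧ ks + 1 ≤ q ∧ Rv ks < Ru ks ∧ Ru (ks+1) ≤ Rv (ks+1) := by
  classical
  set T := (Finset.Icc p q).filter (fun k => Ru k ≤ Rv k) with hT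
  have hqT : q ∈ T := by
    rw [hT, Finset.mem_filter]
    exact ⟨Finset.mem_Icc.mpr ⟨by omega, le_refl _⟩, hPq⟩
  have hTne : T.Nonempty := ⟨q, hqT⟩
  set k0 := T.min' hTne with hk0
  have hk0T : k0 ∈ T := Finset.min'_mem T hTne
  obtain ⟨hk0Icc, hk0P⟩ := Finset.mem_filter.mp hk0T
  obtain ⟨hk0p, hk0q⟩ := Finset.mem_Icc.mp hk0Icc
  have hk0p' : p < k0 := by
    rcases eq_or_lt_of_le hk0p with he | hl
    · exfalso; rw [← he] at hk0P; linarith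
    · exact hl
  refine ⟨k0 - 1, by omega, by omega, ?_, ?_⟩
  · by_contra hcon
    push_neg at hcon
    have hmem : k0 - 1 ∈ T := by
      rw [hT, Finset.mem_filter]
      exact ⟨Finset.mem_Icc.mpr ⟨by omega, by omega⟩, hcon⟩
    have := Finset.min'_le T _ hmem
    omega
  · rw [show k0 - 1 + 1 = k0 by omega]
    exact hk0P

lemma window_gen (Ru Rv : ℕ → ℝ) (C2 : ℝ) (hC21 : 1 ≤ C2) (L S ks : ℕ)
    (hks1 : 1 ≤ ks)
    (chainu : ∀ d n, 1 ≤ n → n + d ≤ L + 1 → Ru n ≤ C2^d * Ru (n+d) ∧ Ru (n+d) ≤ C2^d * Ru n)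
    (chainv : ∀ d n, 1 ≤ n → n + d ≤ L + 1 → Rv n ≤ C2^d * Rv (n+d) ∧ Rv (n+d) ≤ C2^d * Rv n)
    (hRunn : ∀ n, 0 ≤ Ru n) (hRvnn : ∀ n, 0 ≤ Rv n)
    (hksA : Rv ks ≤ Ru ks) (hksB : Ru (ks+1) ≤ Rv (ks+1)) :
    (∀ i, i ≤ S + 3 → ks + 1 + i ≤ L → Ru (ks+1+i) ≤ C2 ^ (2*S+8) * Rv (ks+1+i)) ∧
    (∀ i, i ≤ S + 3 → ks + 1 + i ≤ L → Rv (ks+1+i) ≤ C2 ^ (2*S+8) * Ru (ks+1+i)) := by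
  constructor
  · intro i hi hiL
    obtain ⟨c1, c2⟩ := chainu i (ks+1) (by omega) (by omega)
    obtain ⟨c3, c4⟩ := chainv i (ks+1) (by omega) (by omega)
    have hpow : C2 ^ i * C2 ^ i ≤ C2 ^ (2*S+8) := by
      rw [← pow_add]
      exact pow_le_pow_right₀ hC21 (by omega)
    have hCpos : (0:ℝ) < C2 ^ i := pow_pos (by linarith) i
    calc Ru (ks+1+i) ≤ C2 ^ i * Ru (ks+1) := c2
      _ ≤ C2 ^ i * Rv (ks+1) := mul_le_mul_of_nonneg_left hksB hCpos.le
      _ ≤ C2 ^ i * (C2 ^ i * Rv (ks+1+i)) := mul_le_mul_of_nonneg_left c3 hCpos.le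
      _ = (C2 ^ i * C2 ^ i) * Rv (ks+1+i) := by ring
      _ ≤ C2 ^ (2*S+8) * Rv (ks+1+i) := mul_le_mul_of_nonneg_right hpow (hRvnn _)
  · intro i hi hiL
    obtain ⟨c1, c2⟩ := chainv (i+1) ks (by omega) (by omega)
    obtain ⟨c3, c4⟩ := chainu (i+1) ks (by omega) (by omega)
    rw [show ks + (i+1) = ks + 1 + i by omega] at c2 c3
    have hpow : C2 ^ (i+1) * C2 ^ (i+1) ≤ C2 ^ (2*S+8) := by
      rw [← pow_add]
      exact pow_le_pow_right₀ hC21 (by omega)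
    have hCpos : (0:ℝ) < C2 ^ (i+1) := pow_pos (by linarith) (i+1)
    calc Rv (ks+1+i) ≤ C2 ^ (i+1) * Rv ks := c2
      _ ≤ C2 ^ (i+1) * Ru ks := mul_le_mul_of_nonneg_left hksA hCpos.le
      _ ≤ C2 ^ (i+1) * (C2 ^ (i+1) * Ru (ks+1+i)) := mul_le_mul_of_nonneg_left c3 hCpos.le
      _ = (C2 ^ (i+1) * C2 ^ (i+1)) * Ru (ks+1+i) := by ring
      _ ≤ C2 ^ (2*S+8) * Ru (ks+1+i) := mul_le_mul_of_nonneg_right hpow (hRunn _)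

lemma pick_site (f : ℕ → ℝ) (R : ℕ → ℝ) (C2 : ℝ) (hC21 : 1 ≤ C2) (m : ℕ)
    (hRnn : 0 ≤ R (m+2))
    (hsplit : R (m+2) = f (m+2)^2 + f (m+1)^2)
    (htr : R (m+1) ≤ C2 * R (m+2)) :
    ∃ k, m + 1 ≤ k ∧ k ≤ m + 2 ∧ R k / (2*C2) ≤ f k ^ 2 := by
  rcases le_or_gt (R (m+2) / 2) (f (m+2) ^ 2) with hc | hc
  · refine ⟨m+2, by omega, le_refl _, ?_⟩
    calc R (m+2) / (2*C2) ≤ R (m+2) / 2 := by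
          apply div_le_div_of_nonneg_left hRnn (by norm_num) (by linarith)
      _ ≤ f (m+2) ^ 2 := hc
  · have h2 : R (m+2) / 2 ≤ f (m+1) ^ 2 := by nlinarith
    refine ⟨m+1, le_refl _, by omega, ?_⟩
    calc R (m+1) / (2*C2) ≤ R (m+2) / 2 := by
          rw [div_le_div_iff₀ (by linarith) (by norm_num)]
          nlinarith
      _ ≤ f (m+1) ^ 2 := h2


lemma peak_site (uE vE : ℕ → ℝ) (Lr η : ℝ) (hLr0 : 0 < Lr) (p : ℕ) (hp1 : 1 ≤ p)
    (hzero : uE 0 = 0) (hpk : 1/Lr ≤ uE p ^ 2 + uE (p-1) ^ 2)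
    (hRvp : vE p ^ 2 + vE (p-1) ^ 2 ≤ η^2/Lr) :
    ∃ s, 1 ≤ s ∧ p - 1 ≤ s ∧ s ≤ p ∧ 1/(2*Lr) ≤ uE s ^ 2 ∧ vE s ^ 2 ≤ η^2/Lr := by
  rcases le_or_gt (1/(2*Lr)) (uE p ^ 2) with hc | hc
  · exact ⟨p, hp1, by omega, le_refl _, hc, by nlinarith [sq_nonneg (vE (p-1))]⟩
  · have hhalf : 1/Lr = 1/(2*Lr) + 1/(2*Lr) := by field_simp; ring
    have hc2 : 1/(2*Lr) ≤ uE (p-1) ^ 2 := by linarith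
    have hp2 : 2 ≤ p := by
      by_contra hcc
      have hp1' : p - 1 = 0 := by omega
      rw [hp1', hzero] at hc2
      have : (0:ℝ) < 1/(2*Lr) := by positivity
      nlinarith
    exact ⟨p - 1, by omega, by omega, by omega, hc2, by nlinarith [sq_nonneg (vE p)]⟩

lemma amp_bound (X Y t ρ2 : ℝ) (ht : 0 < t) (hX : 1/t ≤ X) (hY : 0 ≤ Y)
    (hprod : X * Y ≤ ρ2) : Y ≤ ρ2 * t := by
  have h1 : Y * (1/t) ≤ Y * X := mul_le_mul_of_nonneg_left hX hY
  have h2 : Y * (1/t) * t ≤ ρ2 * t := by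
    apply mul_le_mul_of_nonneg_right _ ht.le
    nlinarith
  calc Y = Y * (1/t) * t := by field_simp
    _ ≤ ρ2 * t := h2

set_option maxHeartbeats 1000000 in
lemma core {L : ℕ} (M K : ℝ) (hM : 1 < M) (hK : 0 < K) (S : ℕ)
    (η E : ℝ) (hη : 0 < η)
    (hη0 : η < 1 / (100 * (8 * M^2 * K^2 + 2 * M^4 + 1) ^ (2*S+12)))
    (hE0 : 0 ≤ E) (hEK : E ≤ K)
    (a V : ℕ → ℝ)
    (ha : ∀ n, 1 ≤ n → n ≤ L + 1 → 1 / M ≤ |a n| ∧ |a n| ≤ M)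
    (hV : ∀ n, 1 ≤ n → n ≤ L → |V n| ≤ K)
    (u v : Fin L → ℝ) (Eu Ev : ℝ)
    (hu : (jacobiMatrix L a V).mulVec u = Eu • u) (hEu : |Eu| ≤ E)
    (hv : (jacobiMatrix L a V).mulVec v = Ev • v) (hEv : |Ev| ≤ E)
    (hnu : ∑ i, u i ^ 2 = 1) (hnv : ∑ i, v i ^ 2 = 1)
    (hL : 1 ≤ L)
    (hprod : ∀ n, 1 ≤ n → n ≤ L →
      (extV L u n ^ 2 + extV L u (n-1) ^ 2) * (extV L v n ^ 2 + extV L v (n-1) ^ 2)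
        ≤ (η / (L:ℝ)) ^ 2)
    (p q : ℕ) (hp1 : 1 ≤ p) (hpL : p ≤ L) (hq1 : 1 ≤ q) (hqL : q ≤ L)
    (hpk : 1 / (L:ℝ) ≤ extV L u p ^ 2 + extV L u (p-1) ^ 2)
    (hqk : 1 / (L:ℝ) ≤ extV L v q ^ 2 + extV L v (q-1) ^ 2)
    (hpq : p < q) :
    ∃ xm xp : ℕ, 1 ≤ xm ∧ xp ≤ L ∧ xm + S ≤ xp ∧
      1 ≤ eigCount (jacobiSub 1 xm a V)
            (Set.Icc (-(E * (L:ℝ)^4 / η^4)) (E * (L:ℝ)^4 / η^4)) ∧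
      1 ≤ eigCount (jacobiSub xp L a V)
            (Set.Icc (-(E * (L:ℝ)^4 / η^4)) (E * (L:ℝ)^4 / η^4)) := by
  classical
  have hLr1 : (1:ℝ) ≤ (L:ℝ) := by exact_mod_cast hL
  have hLr0 : (0:ℝ) < (L:ℝ) := by linarith
  set C2 : ℝ := 8 * M^2 * K^2 + 2 * M^4 + 1 with hC2def
  have hC23 : (3:ℝ) ≤ C2 := by
    have h1 : (1:ℝ) ≤ M^2 := by nlinarith
    have h2 : (1:ℝ) ≤ M^4 := by nlinarith
    nlinarith [sq_nonneg (M*K)]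
  have hC21 : (1:ℝ) ≤ C2 := by linarith
  obtain ⟨hη100, hη2, hη8, hΓη⟩ := eta_facts C2 η S hC23 hη hη0
  set Γ : ℝ := C2 ^ (2*S+8) with hΓdef
  set CG : ℝ := C2 * Γ with hCGdef
  have hΓ1 : (1:ℝ) ≤ Γ := one_le_pow₀ hC21
  have hCG1 : (1:ℝ) ≤ CG := by
    calc (1:ℝ) = 1*1 := by ring
      _ ≤ C2 * Γ := mul_le_mul hC21 hΓ1 zero_le_one (by linarith)
  -- R functions
  set Ru : ℕ → ℝ := fun n => extV L u n ^ 2 + extV L u (n-1) ^ 2 with hRudef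
  set Rv : ℕ → ℝ := fun n => extV L v n ^ 2 + extV L v (n-1) ^ 2 with hRvdef
  have hEuK : |Eu| ≤ K := le_trans hEu hEK
  have hEvK : |Ev| ≤ K := le_trans hEv hEK
  have htru : ∀ n, 1 ≤ n → n ≤ L → Ru (n+1) ≤ C2 * Ru n ∧ Ru n ≤ C2 * Ru (n+1) :=
    fun n h1 h2 => transfer_bound a V u Eu M K C2 hM hK ha hV hEuK hu hC2def n h1 h2
  have htrv : ∀ n, 1 ≤ n → n ≤ L → Rv (n+1) ≤ C2 * Rv n ∧ Rv n ≤ C2 * Rv (n+1) :=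
    fun n h1 h2 => transfer_bound a V v Ev M K C2 hM hK ha hV hEvK hv hC2def n h1 h2
  have chainu := chain_gen Ru C2 hC21 L htru
  have chainv := chain_gen Rv C2 hC21 L htrv
  have hRunn : ∀ n, 0 ≤ Ru n := fun n => by positivity
  have hRvnn : ∀ n, 0 ≤ Rv n := fun n => by positivity
  have hRupos : ∀ n, 1 ≤ n → n ≤ L + 1 → 0 < Ru n := by
    intro n h1 h2
    have hpp : (0:ℝ) < Ru p := lt_of_lt_of_le (by positivity) hpk
    have hC2pos : ∀ d : ℕ, (0:ℝ) < C2 ^ d := fun d => pow_pos (by linarith) d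
    rcases le_or_gt n p with hc | hc
    · obtain ⟨-, h⟩ := chainu (p - n) n h1 (by omega)
      rw [show n + (p - n) = p by omega] at h
      rcases (hRunn n).lt_or_eq with hlt | heq
      · exact hlt
      · exfalso; rw [← heq, mul_zero] at h; linarith
    · obtain ⟨h, -⟩ := chainu (n - p) p hp1 (by omega)
      rw [show p + (n - p) = n by omega] at h
      rcases (hRunn n).lt_or_eq with hlt | heq
      · exact hlt
      · exfalso; rw [← heq, mul_zero] at h; linarith
  have hRvpos : ∀ n, 1 ≤ n → n ≤ L + 1 → 0 < Rv n := by
    intro n h1 h2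
    have hpp : (0:ℝ) < Rv q := lt_of_lt_of_le (by positivity) hqk
    have hC2pos : ∀ d : ℕ, (0:ℝ) < C2 ^ d := fun d => pow_pos (by linarith) d
    rcases le_or_gt n q with hc | hc
    · obtain ⟨-, h⟩ := chainv (q - n) n h1 (by omega)
      rw [show n + (q - n) = q by omega] at h
      rcases (hRvnn n).lt_or_eq with hlt | heq
      · exact hlt
      · exfalso; rw [← heq, mul_zero] at h; linarith
    · obtain ⟨h, -⟩ := chainv (n - q) q hq1 (by omega)
      rw [show q + (n - q) = n by omega] at h
      rcases (hRvnn n).lt_or_eq with hlt | heq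
      · exact hlt
      · exfalso; rw [← heq, mul_zero] at h; linarith
  -- amplitude bounds at peaks
  have hconv : (η/(L:ℝ))^2 * (L:ℝ) = η^2/(L:ℝ) := by
    field_simp
  have hRvp : Rv p ≤ η^2/(L:ℝ) := by
    rw [← hconv]
    exact amp_bound (Ru p) (Rv p) (L:ℝ) ((η/(L:ℝ))^2) hLr0 hpk (hRvnn p) (hprod p hp1 hpL)
  have hRuq : Ru q ≤ η^2/(L:ℝ) := by
    rw [← hconv]
    refine amp_bound (Rv q) (Ru q) (L:ℝ) ((η/(L:ℝ))^2) hLr0 hqk (hRunn q) ?_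
    calc Rv q * Ru q = Ru q * Rv q := by ring
      _ ≤ (η/(L:ℝ))^2 := hprod q hq1 hqL
  have hzu : extV L u 0 = 0 := by rw [extV, dif_neg (by omega)]
  have hzv : extV L v 0 = 0 := by rw [extV, dif_neg (by omega)]
  obtain ⟨su, hsu1, hsu0, hsu2, hsuA, hsuB⟩ :=
    peak_site (extV L u) (extV L v) (L:ℝ) η hLr0 p hp1 hzu hpk hRvp
  obtain ⟨sv, hsv1, hsv0, hsv2, hsvA, hsvB⟩ :=
    peak_site (extV L v) (extV L u) (L:ℝ) η hLr0 q hq1 hzv hqk hRuq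
  -- strict comparisons at peaks and crossing
  have hηsq1 : η^2 < 1 := pow_lt_one₀ hη.le (by linarith) (by norm_num)
  have hdivlt : η^2/(L:ℝ) < 1/(L:ℝ) := by gcongr
  have hPp : Rv p < Ru p := lt_of_le_of_lt hRvp (lt_of_lt_of_le hdivlt hpk)
  have hPq : Ru q < Rv q := lt_of_le_of_lt hRuq (lt_of_lt_of_le hdivlt hqk)
  obtain ⟨ks, hksp, hksq, hksA, hksB⟩ := crossing_gen Ru Rv p q hpq hPp hPq.le
  have hks1 : 1 ≤ ks := le_trans hp1 hksp
  obtain ⟨claimA, claimB⟩ :=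
    window_gen Ru Rv C2 hC21 L S ks hks1 chainu chainv hRunn hRvnn hksA.le hksB
  -- separation of q from the crossing
  have hqsep : ks + S + 5 ≤ q := by
    by_contra hcon
    push_neg at hcon
    have hi : q - (ks+1) ≤ S + 3 := by omega
    have hB := claimB (q - (ks+1)) hi (by omega)
    rw [show ks + 1 + (q - (ks+1)) = q by omega] at hB
    have h1 : 1/(L:ℝ) ≤ Γ * (η^2/(L:ℝ)) :=
      le_trans hqk (le_trans hB (mul_le_mul_of_nonneg_left hRuq (by linarith)))
    have h2 : Γ * (η^2/(L:ℝ)) = (Γ * η^2)/(L:ℝ) := by ring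
    rw [h2] at h1
    have h3 : (1:ℝ) ≤ Γ * η^2 := by
      have h4 := mul_le_mul_of_nonneg_right h1 hLr0.le
      rw [one_div, inv_mul_cancel₀ (ne_of_gt hLr0), div_mul_cancel₀ _ (ne_of_gt hLr0)] at h4
      exact h4
    linarith [hΓη]
  -- cut sites
  obtain ⟨kA, hkA1, hkA2, hkAv⟩ := pick_site (extV L v) Rv C2 hC21 ks (hRvnn _) rfl
    (htrv (ks+1) (by omega) (by omega)).2
  have hkAL : kA ≤ L := by omega
  obtain ⟨kB, hkB1, hkB2, hkBu⟩ := pick_site (extV L u) Ru C2 hC21 (ks+S) (hRunn _) rfl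
    (htru (ks+S+1) (by omega) (by omega)).2
  have hkBL : kB + 1 ≤ L := by omega
  -- left cut data
  have hvkA2 : Rv kA ≤ 2*C2*(extV L v kA)^2 := by
    rw [div_le_iff₀ (by positivity)] at hkAv
    linarith [hkAv]
  have hRukA : Ru kA ≤ Γ * Rv kA := by
    have hi : kA - (ks+1) ≤ S+3 := by omega
    have hcl := claimA (kA - (ks+1)) hi (by omega)
    rw [show ks+1+(kA-(ks+1)) = kA by omega] at hcl
    exact hcl
  have hukA : (extV L u kA)^2 ≤ 2*CG*(extV L v kA)^2 := by
    have h1 : (extV L u kA)^2 ≤ Ru kA := by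
      simp only [hRudef]
      linarith [sq_nonneg (extV L u (kA-1))]
    calc (extV L u kA)^2 ≤ Ru kA := h1
      _ ≤ Γ * Rv kA := hRukA
      _ ≤ Γ * (2*C2*(extV L v kA)^2) := mul_le_mul_of_nonneg_left hvkA2 (by linarith)
      _ = 2*CG*(extV L v kA)^2 := by rw [hCGdef]; ring
  have hvkApos : 0 < (extV L v kA)^2 :=
    lt_of_lt_of_le (div_pos (hRvpos kA (by omega) (by omega)) (by linarith)) hkAv
  have hrneL : 0 < (extV L u kA)^2 + (extV L v kA)^2 :=
    add_pos_of_nonneg_of_pos (sq_nonneg _) hvkApos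
  have hkA2' : 2 ≤ kA := by omega
  have hsingleL : (extV L v kA * extV L u su - extV L u kA * extV L v su)^2
      ≤ ∑ i : Fin (kA - 1 - 1 + 1),
          (extV L v kA * extV L u (i.1+1) - extV L u kA * extV L v (i.1+1))^2 := by
    have hidx : su - 1 < kA - 1 - 1 + 1 := by omega
    have hterm := Finset.single_le_sum
      (f := fun i : Fin (kA-1-1+1) =>
        (extV L v kA * extV L u (i.1+1) - extV L u kA * extV L v (i.1+1))^2)
      (fun i _ => sq_nonneg _) (Finset.mem_univ (⟨su - 1, hidx⟩ : Fin (kA-1-1+1)))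
    simp only [Fin.val_mk] at hterm
    rw [show su - 1 + 1 = su by omega] at hterm
    exact hterm
  have ht1L : 1/(L:ℝ) ≤ 1 := by
    rw [div_le_one hLr0]; exact hLr1
  have h8 : ((η/(L:ℝ))^4)^2 = (η * (1/(L:ℝ)))^8 := by
    rw [div_eq_mul_one_div]; ring
  have hlowL : 9 * ((η/(L:ℝ))^4)^2 * ((extV L u kA)^2 + (extV L v kA)^2)
      ≤ ∑ i : Fin (kA - 1 - 1 + 1),
          (extV L v kA * extV L u (i.1+1) - extV L u kA * extV L v (i.1+1))^2 := by
    rw [h8]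
    apply cut_arith CG (1/(L:ℝ)) η (extV L u su) (extV L v su) (extV L u kA) (extV L v kA) _
      hCG1 (by positivity) ht1L hη ?_ ?_ hukA hη2 hη8 hsingleL
    · rw [show (1/(L:ℝ))/2 = 1/(2*(L:ℝ)) by ring]
      exact hsuA
    · rw [show η^2 * (1/(L:ℝ)) = η^2/(L:ℝ) by ring]
      exact hsuB
  have hρ4pos : (0:ℝ) < (η/(L:ℝ))^4 := by positivity
  have hρ4half : (η/(L:ℝ))^4 ≤ 1/2 := by
    have h1 : η/(L:ℝ) ≤ η := div_le_self hη.le hLr1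
    calc (η/(L:ℝ))^4 ≤ η^4 := pow_le_pow_left₀ (by positivity) h1 4
      _ ≤ (1/100)^4 := pow_le_pow_left₀ hη.le hη100.le 4
      _ ≤ 1/2 := by norm_num
  have hcutL := left_cut a V u v Eu Ev E hu hv hEu hEv hE0 hnu hnv ((η/(L:ℝ))^4)
    hρ4pos hρ4half kA hkA2' hkAL hlowL hrneL
  have hδ : E / ((η/(L:ℝ))^4) = E * (L:ℝ)^4 / η^4 := by
    rw [div_pow, div_div_eq_mul_div]
  rw [hδ] at hcutL
  -- right cut data
  have hukB2 : Ru kB ≤ 2*C2*(extV L u kB)^2 := by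
    rw [div_le_iff₀ (by positivity)] at hkBu
    linarith [hkBu]
  have hRvkB : Rv kB ≤ Γ * Ru kB := by
    have hi : kB - (ks+1) ≤ S+3 := by omega
    have hcl := claimB (kB - (ks+1)) hi (by omega)
    rw [show ks+1+(kB-(ks+1)) = kB by omega] at hcl
    exact hcl
  have hvkB : (extV L v kB)^2 ≤ 2*CG*(extV L u kB)^2 := by
    have h1 : (extV L v kB)^2 ≤ Rv kB := by
      simp only [hRvdef]
      linarith [sq_nonneg (extV L v (kB-1))]
    calc (extV L v kB)^2 ≤ Rv kB := h1
      _ ≤ Γ * Ru kB := hRvkB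
      _ ≤ Γ * (2*C2*(extV L u kB)^2) := mul_le_mul_of_nonneg_left hukB2 (by linarith)
      _ = 2*CG*(extV L u kB)^2 := by rw [hCGdef]; ring
  have hukBpos : 0 < (extV L u kB)^2 :=
    lt_of_lt_of_le (div_pos (hRupos kB (by omega) (by omega)) (by linarith)) hkBu
  have hrneR : 0 < (extV L u kB)^2 + (extV L v kB)^2 :=
    add_pos_of_pos_of_nonneg hukBpos (sq_nonneg _)
  have hsvkB : kB + 1 ≤ sv := by omega
  have hsingleR : (extV L v kB * extV L u sv - extV L u kB * extV L v sv)^2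
      ≤ ∑ i : Fin (L - (kB + 1) + 1),
          (extV L v kB * extV L u (i.1 + kB + 1) - extV L u kB * extV L v (i.1 + kB + 1))^2 := by
    have hidx : sv - kB - 1 < L - (kB + 1) + 1 := by omega
    have hterm := Finset.single_le_sum
      (f := fun i : Fin (L - (kB+1) + 1) =>
        (extV L v kB * extV L u (i.1 + kB + 1) - extV L u kB * extV L v (i.1 + kB + 1))^2)
      (fun i _ => sq_nonneg _) (Finset.mem_univ (⟨sv - kB - 1, hidx⟩ : Fin (L - (kB+1) + 1)))
    simp only [Fin.val_mk] at hterm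
    rw [show sv - kB - 1 + kB + 1 = sv by omega] at hterm
    exact hterm
  have hlowR : 9 * ((η/(L:ℝ))^4)^2 * ((extV L u kB)^2 + (extV L v kB)^2)
      ≤ ∑ i : Fin (L - (kB + 1) + 1),
          (extV L v kB * extV L u (i.1 + kB + 1) - extV L u kB * extV L v (i.1 + kB + 1))^2 := by
    have hc := cut_arith CG (1/(L:ℝ)) η (extV L v sv) (extV L u sv) (extV L v kB) (extV L u kB)
      (∑ i : Fin (L - (kB + 1) + 1),
        (extV L v kB * extV L u (i.1 + kB + 1) - extV L u kB * extV L v (i.1 + kB + 1))^2)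
      hCG1 (by positivity) ht1L hη ?_ ?_ hvkB hη2 hη8 ?_
    · rw [h8]
      have hcomm : 9 * (η * (1/(L:ℝ)))^8 * ((extV L v kB)^2 + (extV L u kB)^2)
          = 9 * (η * (1/(L:ℝ)))^8 * ((extV L u kB)^2 + (extV L v kB)^2) := by ring
      rw [hcomm] at hc
      exact hc
    · rw [show (1/(L:ℝ))/2 = 1/(2*(L:ℝ)) by ring]
      exact hsvA
    · rw [show η^2 * (1/(L:ℝ)) = η^2/(L:ℝ) by ring]
      exact hsvB
    · have := hsingleR
      have hC : (extV L u kB * extV L v sv - extV L v kB * extV L u sv)^2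
          = (extV L v kB * extV L u sv - extV L u kB * extV L v sv)^2 := by ring
      rw [hC]
      exact this
  have hcutR := right_cut a V u v Eu Ev E hu hv hEu hEv hE0 hnu hnv ((η/(L:ℝ))^4)
    hρ4pos hρ4half kB (by omega) hkBL hlowR hrneR
  rw [hδ] at hcutR
  exact ⟨kA - 1, kB + 1, by omega, by omega, by omega, hcutL, hcutR⟩


end JacobiProofHelpers

/-- Theorem `part1`. -/
theorem stmt1 (M K : ℝ) (hM : 1 < M) (hK : 0 < K) (S : ℕ) :
    ∃ η₀ : ℝ, 0 < η₀ ∧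
      ∀ η : ℝ, 0 < η → η < η₀ →
      ∀ (L : ℕ) (E : ℝ), 0 ≤ E → E < η ^ 4 / (L : ℝ) ^ 4 → E ≤ K →
      ∀ (a V : ℕ → ℝ),
        (∀ n, 1 ≤ n → n ≤ L + 1 → 1 / M ≤ |a n| ∧ |a n| ≤ M) →
        (∀ n, 1 ≤ n → n ≤ L → |V n| ≤ K) →
        ∀ (u v : Fin L → ℝ) (Eu Ev : ℝ),
          (jacobiMatrix L a V).mulVec u = Eu • u → Eu ∈ Set.Icc (-E) E →
          (jacobiMatrix L a V).mulVec v = Ev • v → Ev ∈ Set.Icc (-E) E →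
          (∑ i, u i ^ 2) = 1 → (∑ i, v i ^ 2) = 1 → (∑ i, u i * v i) = 0 →
          (∀ n, 1 ≤ n → n ≤ L → pruferR L u n * pruferR L v n ≤ η / (L : ℝ)) →
          ∃ xm xp : ℕ, 1 ≤ xm ∧ xp ≤ L ∧ xm + S ≤ xp ∧
            1 ≤ eigCount (jacobiSub 1 xm a V)
                  (Set.Icc (-(E * (L : ℝ) ^ 4 / η ^ 4)) (E * (L : ℝ) ^ 4 / η ^ 4)) ∧
            1 ≤ eigCount (jacobiSub xp L a V)
                  (Set.Icc (-(E * (L : ℝ) ^ 4 / η ^ 4)) (E * (L : ℝ) ^ 4 / η ^ 4)) := by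
  refine ⟨1 / (100 * (8 * M^2 * K^2 + 2 * M^4 + 1) ^ (2*S+12)), ?_, ?_⟩
  · have h1 : (0:ℝ) < 8 * M^2 * K^2 + 2 * M^4 + 1 := by positivity
    positivity
  intro η hη hη0 L E hE0 hE2 hEK a V ha hV u v Eu Ev hu hEuI hv hEvI hnu hnv horth hpr
  have hEu : |Eu| ≤ E := abs_le.mpr ⟨(Set.mem_Icc.mp hEuI).1, (Set.mem_Icc.mp hEuI).2⟩
  have hEv : |Ev| ≤ E := abs_le.mpr ⟨(Set.mem_Icc.mp hEvI).1, (Set.mem_Icc.mp hEvI).2⟩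
  have hL : 1 ≤ L := by
    by_contra hc
    have hL0 : L = 0 := by omega
    rw [hL0] at hE2
    norm_num at hE2
    linarith
  have hLr1 : (1:ℝ) ≤ (L:ℝ) := by exact_mod_cast hL
  have hLr0 : (0:ℝ) < (L:ℝ) := by linarith
  -- product bound in squared form
  have hprod : ∀ n, 1 ≤ n → n ≤ L →
      (extV L u n ^ 2 + extV L u (n-1) ^ 2) * (extV L v n ^ 2 + extV L v (n-1) ^ 2)
        ≤ (η / (L:ℝ)) ^ 2 := by
    intro n h1 h2
    have h := hpr n h1 h2
    have hn1 : (0:ℝ) ≤ extV L u n ^ 2 + extV L u (n-1) ^ 2 := by positivity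
    have hn2 : (0:ℝ) ≤ extV L v n ^ 2 + extV L v (n-1) ^ 2 := by positivity
    have hs : Real.sqrt ((extV L u n ^ 2 + extV L u (n-1) ^ 2)
        * (extV L v n ^ 2 + extV L v (n-1) ^ 2)) ≤ η / (L:ℝ) := by
      rw [Real.sqrt_mul hn1]
      exact h
    calc (extV L u n ^ 2 + extV L u (n-1) ^ 2) * (extV L v n ^ 2 + extV L v (n-1) ^ 2)
        = Real.sqrt ((extV L u n ^ 2 + extV L u (n-1) ^ 2)
            * (extV L v n ^ 2 + extV L v (n-1) ^ 2)) ^ 2 :=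
          (Real.sq_sqrt (mul_nonneg hn1 hn2)).symm
      _ ≤ (η / (L:ℝ)) ^ 2 := pow_le_pow_left₀ (Real.sqrt_nonneg _) hs 2
  obtain ⟨p, hp1, hpL, hpk⟩ := peak_lemma u hL hnu
  obtain ⟨q, hq1, hqL, hqk⟩ := peak_lemma v hL hnv
  have hη1 : η < 1 := by
    have hb : (1:ℝ) ≤ 100 * (8 * M^2 * K^2 + 2 * M^4 + 1) ^ (2*S+12) := by
      have h1 : (1:ℝ) ≤ 8 * M^2 * K^2 + 2 * M^4 + 1 := by nlinarith [sq_nonneg (M*K), sq_nonneg (M^2)]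
      have h2 : (1:ℝ) ≤ (8 * M^2 * K^2 + 2 * M^4 + 1) ^ (2*S+12) := one_le_pow₀ h1
      linarith
    have : 1 / (100 * (8 * M^2 * K^2 + 2 * M^4 + 1) ^ (2*S+12)) ≤ 1 := by
      rw [div_le_one (by linarith)]
      exact hb
    linarith
  have hpq : p ≠ q := by
    intro he
    rw [he] at hpk
    have hXY := hprod q hq1 hqL
    have hmul : (1/(L:ℝ)) * (1/(L:ℝ))
        ≤ (extV L u q ^ 2 + extV L u (q-1) ^ 2) * (extV L v q ^ 2 + extV L v (q-1) ^ 2) :=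
      mul_le_mul hpk hqk (by positivity) (le_trans (by positivity) hpk)
    have hcomb : (1/(L:ℝ)) * (1/(L:ℝ)) ≤ (η / (L:ℝ))^2 := le_trans hmul hXY
    have hmul2 := mul_le_mul_of_nonneg_right hcomb (by positivity : (0:ℝ) ≤ (L:ℝ)^2)
    have e1 : (1/(L:ℝ)) * (1/(L:ℝ)) * (L:ℝ)^2 = 1 := by
      field_simp
    have e2 : (η / (L:ℝ))^2 * (L:ℝ)^2 = η^2 := by
      field_simp
    rw [e1, e2] at hmul2
    nlinarith [hη, hη1]
  rcases lt_or_gt_of_ne hpq with hlt | hgt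
  · exact core M K hM hK S η E hη hη0 hE0 hEK a V ha hV u v Eu Ev hu hEu hv hEv hnu hnv hL
      hprod p q hp1 hpL hq1 hqL hpk hqk hlt
  · refine core M K hM hK S η E hη hη0 hE0 hEK a V ha hV v u Ev Eu hv hEv hu hEu hnv hnu hL
      ?_ q p hq1 hqL hp1 hpL hqk hpk hgt
    intro n h1 h2
    calc (extV L v n ^ 2 + extV L v (n-1) ^ 2) * (extV L u n ^ 2 + extV L u (n-1) ^ 2)
        = (extV L u n ^ 2 + extV L u (n-1) ^ 2) * (extV L v n ^ 2 + extV L v (n-1) ^ 2) := by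
          ring
      _ ≤ (η / (L:ℝ)) ^ 2 := hprod n h1 h2
end

section
/- Let H be a Jacobi matrix as in the context and let u, v be normalized eigenvectors of H with respective eigenvalues E_u and E_v, extended by u(0) = v(0) = 0. Define the Wronskian W(n) := a(n)·(u(n)v(n−1) − u(n−1)v(n)). Then for every n ∈ {1,…,L} one has |W(n)| ≤ |E_u − E_v|, and consequently |u(n)v(n−1) − u(n−1)v(n)| ≤ M·|E_u − E_v|. -/
lemma sum_if1 (L : ℕ) (g : Fin L → ℝ) (m : ℕ) :
    (∑ j : Fin L, if m = j.val then g j else 0)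
      = if h : m < L then g ⟨m, h⟩ else 0 := by
  split_ifs with h
  · rw [Finset.sum_eq_single ⟨m, h⟩]
    · simp
    · intro j _ hj
      rw [if_neg]
      intro hc; exact hj (Fin.ext hc.symm)
    · simp
  · apply Finset.sum_eq_zero; intro j _
    rw [if_neg]; have := j.isLt; omega

lemma sum_if2 (L : ℕ) (g : Fin L → ℝ) (m : ℕ) :
    (∑ j : Fin L, if j.val + 1 = m then g j else 0)
      = if h : 1 ≤ m ∧ m - 1 < L then g ⟨m - 1, h.2⟩ else 0 := by
  split_ifs with h
  · rw [Finset.sum_eq_single ⟨m - 1, h.2⟩]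
    · rw [if_pos (show m - 1 + 1 = m by omega)]
    · intro j _ hj
      rw [if_neg]
      intro hc; exact hj (Fin.ext (show (j : ℕ) = m - 1 by omega))
    · simp
  · apply Finset.sum_eq_zero; intro j _
    rw [if_neg]; have := j.isLt; omega

lemma eigen_rec (L : ℕ) (a V : ℕ → ℝ) (u : Fin L → ℝ) (E : ℝ)
    (hu : (jacobiMatrix L a V).mulVec u = E • u) :
    ∀ n, 1 ≤ n → n ≤ L →
      a (n+1) * extV L u (n+1) + a n * extV L u (n-1) + V n * extV L u n
        = E * extV L u n := by
  intro n h1 h2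
  have h := congrFun hu ⟨n - 1, by omega⟩
  simp only [Matrix.mulVec, dotProduct, Pi.smul_apply, smul_eq_mul] at h
  have hn : (n : ℕ) - 1 + 1 = n := by omega
  have key : ∀ j : Fin L, jacobiMatrix L a V ⟨n - 1, by omega⟩ j * u j
      = (if n = j.val then a (j.val + 1) * u j else 0)
        + (if j.val + 1 = n - 1 then a n * u j else 0)
        + (if n - 1 = j.val then V n * u j else 0) := by
    intro j
    simp only [jacobiMatrix, Fin.ext_iff, Fin.val_mk, hn]
    split_ifs <;> first | ring1 | (exfalso; omega)
  rw [Finset.sum_congr rfl (fun j _ => key j), Finset.sum_add_distrib,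
      Finset.sum_add_distrib, sum_if1 L (fun j => a (j.val + 1) * u j) n,
      sum_if2 L (fun j => a n * u j) (n-1),
      sum_if1 L (fun j => V n * u j) (n-1)] at h
  simp only [Fin.val_mk] at h
  simp only [extV, Nat.add_sub_cancel]
  rw [dif_pos (show 1 ≤ n ∧ n ≤ L by omega)]
  rw [dif_pos (show n - 1 < L by omega)] at h
  by_cases hnL : n < L
  · rw [dif_pos hnL] at h
    rw [dif_pos (show 1 ≤ n + 1 ∧ n + 1 ≤ L by omega)]
    by_cases hn2 : 1 ≤ n - 1
    · rw [dif_pos (show 1 ≤ n - 1 ∧ n - 1 - 1 < L by omega)] at h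
      rw [dif_pos (show 1 ≤ n - 1 ∧ n - 1 ≤ L by omega)]
      linarith [h]
    · rw [dif_neg (show ¬(1 ≤ n - 1 ∧ n - 1 - 1 < L) by omega)] at h
      rw [dif_neg (show ¬(1 ≤ n - 1 ∧ n - 1 ≤ L) by omega)]
      linarith [h]
  · rw [dif_neg hnL] at h
    rw [dif_neg (show ¬(1 ≤ n + 1 ∧ n + 1 ≤ L) by omega)]
    by_cases hn2 : 1 ≤ n - 1
    · rw [dif_pos (show 1 ≤ n - 1 ∧ n - 1 - 1 < L by omega)] at h
      rw [dif_pos (show 1 ≤ n - 1 ∧ n - 1 ≤ L by omega)]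
      linarith [h]
    · rw [dif_neg (show ¬(1 ≤ n - 1 ∧ n - 1 - 1 < L) by omega)] at h
      rw [dif_neg (show ¬(1 ≤ n - 1 ∧ n - 1 ≤ L) by omega)]
      linarith [h]

lemma wronsky (L : ℕ) (a V : ℕ → ℝ) (u v : Fin L → ℝ) (Eu Ev : ℝ)
    (hu : (jacobiMatrix L a V).mulVec u = Eu • u)
    (hv : (jacobiMatrix L a V).mulVec v = Ev • v) :
    ∀ n, 1 ≤ n → n ≤ L + 1 →
      a n * (extV L u n * extV L v (n-1) - extV L u (n-1) * extV L v n)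
        = (Eu - Ev) * ∑ k ∈ Finset.Ico 1 n, extV L u k * extV L v k := by
  intro n
  induction n with
  | zero => omega
  | succ m ih =>
    intro _ hm
    rcases Nat.eq_zero_or_pos m with hm0 | hm1
    · subst hm0
      simp [extV]
    · have ihm := ih hm1 (by omega)
      have hru := eigen_rec L a V u Eu hu m hm1 (by omega)
      have hrv := eigen_rec L a V v Ev hv m hm1 (by omega)
      rw [Finset.sum_Ico_succ_top hm1, Nat.add_sub_cancel]
      linear_combination ihm + extV L v m * hru - extV L u m * hrv

lemma sum_sq_le (L : ℕ) (u : Fin L → ℝ) (hnu : (∑ i, u i ^ 2) = 1) (n : ℕ)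
    (hn : n ≤ L + 1) :
    ∑ k ∈ Finset.Ico 1 n, (extV L u k) ^ 2 ≤ 1 := by
  have h1 : ∑ k ∈ Finset.Ico 1 (L+1), (extV L u k) ^ 2 = 1 := by
    rw [Finset.sum_Ico_eq_sum_range, Nat.add_sub_cancel,
        ← Fin.sum_univ_eq_sum_range (fun k => extV L u (1 + k) ^ 2) L, ← hnu]
    apply Finset.sum_congr rfl
    intro i _
    have : extV L u (1 + ↑i) = u i := by
      simp only [extV]
      rw [dif_pos (show 1 ≤ 1 + ↑i ∧ 1 + ↑i ≤ L by omega)]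
      congr 1
      exact Fin.ext (by simp)
    rw [this]
  rw [← h1]
  apply Finset.sum_le_sum_of_subset_of_nonneg
  · exact Finset.Ico_subset_Ico le_rfl hn
  · intro k _ _; positivity

/-- bound on the Wronskian
`W(n) = a(n)·(u(n)v(n-1) - u(n-1)v(n))` of two normalized eigenvectors. -/
theorem stmt3 (M K : ℝ) (hM : 1 < M) (hK : 0 < K)
    (L : ℕ) (a V : ℕ → ℝ)
    (ha : ∀ n, 1 ≤ n → n ≤ L + 1 → 1 / M ≤ |a n| ∧ |a n| ≤ M)
    (hV : ∀ n, 1 ≤ n → n ≤ L → |V n| ≤ K)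
    (u v : Fin L → ℝ) (Eu Ev : ℝ)
    (hu : (jacobiMatrix L a V).mulVec u = Eu • u)
    (hv : (jacobiMatrix L a V).mulVec v = Ev • v)
    (hnu : (∑ i, u i ^ 2) = 1) (hnv : (∑ i, v i ^ 2) = 1) :
    ∀ n, 1 ≤ n → n ≤ L →
      |a n * (extV L u n * extV L v (n - 1) - extV L u (n - 1) * extV L v n)|
        ≤ |Eu - Ev| ∧
      |extV L u n * extV L v (n - 1) - extV L u (n - 1) * extV L v n|
        ≤ M * |Eu - Ev| := by
  intro n h1 h2
  set S := ∑ k ∈ Finset.Ico 1 n, extV L u k * extV L v k with hS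
  have hW := wronsky L a V u v Eu Ev hu hv n h1 (by omega)
  have hCS : S ^ 2 ≤ 1 := by
    have hcs := Finset.sum_mul_sq_le_sq_mul_sq (Finset.Ico 1 n) (extV L u) (extV L v)
    have h3 := sum_sq_le L u hnu n (by omega)
    have h4 := sum_sq_le L v hnv n (by omega)
    have h5 : (0:ℝ) ≤ ∑ k ∈ Finset.Ico 1 n, (extV L u k) ^ 2 := by positivity
    have h6 : (0:ℝ) ≤ ∑ k ∈ Finset.Ico 1 n, (extV L v k) ^ 2 := by positivity
    nlinarith
  have hSabs : |S| ≤ 1 := by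
    nlinarith [sq_abs S, abs_nonneg S]
  have hW1 : |a n * (extV L u n * extV L v (n - 1) - extV L u (n - 1) * extV L v n)|
      ≤ |Eu - Ev| := by
    rw [hW, abs_mul]
    calc |Eu - Ev| * |S| ≤ |Eu - Ev| * 1 :=
          mul_le_mul_of_nonneg_left hSabs (abs_nonneg _)
      _ = |Eu - Ev| := mul_one _
  refine ⟨hW1, ?_⟩
  have han := (ha n h1 (by omega)).1
  have hM0 : (0:ℝ) < M := by linarith
  set d := extV L u n * extV L v (n - 1) - extV L u (n - 1) * extV L v n with hd
  have h8 : (1 / M) * |d| ≤ |Eu - Ev| := by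
    calc (1 / M) * |d| ≤ |a n| * |d| :=
          mul_le_mul_of_nonneg_right han (abs_nonneg _)
      _ = |a n * d| := (abs_mul _ _).symm
      _ ≤ |Eu - Ev| := hW1
  calc |d| = M * ((1 / M) * |d|) := by field_simp
    _ ≤ M * |Eu - Ev| := mul_le_mul_of_nonneg_left h8 (le_of_lt hM0)
end

section
/- Let n ≥ 2 and let u, v ∈ ℝ₊ⁿ be vectors with nonnegative entries satisfying ‖u‖₁ = ‖v‖₁ = 1. Then max over pairs j ≠ k of the squared 2×2 determinant (u_j·v_k − u_k·v_j)² is at least ‖u − v‖₁² / (4 n⁵). -/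
/-- Lemma `grad->jac`.  If `u, v ∈ ℝ₊ⁿ` with `‖u‖₁ = ‖v‖₁ = 1`, then the
maximum over pairs `j ≠ k` of the squared 2×2 determinants `(u_j v_k - u_k v_j)²` is at
least `‖u - v‖₁² / (4 n⁵)`. -/
theorem stmt4 (n : ℕ) (hn : 2 ≤ n) (u v : Fin n → ℝ)
    (hu0 : ∀ i, 0 ≤ u i) (hv0 : ∀ i, 0 ≤ v i)
    (hu1 : (∑ i, |u i|) = 1) (hv1 : (∑ i, |v i|) = 1) :
    ∃ j k : Fin n, j ≠ k ∧
      (∑ i, |u i - v i|) ^ 2 / (4 * (n : ℝ) ^ 5) ≤ (u j * v k - u k * v j) ^ 2 := by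
  have hnpos : 0 < n := by omega
  set N : ℝ := (n : ℝ) with hNdef
  have hN2 : (2:ℝ) ≤ N := by rw [hNdef]; exact_mod_cast hn
  have hN0 : (0:ℝ) < N := by linarith
  set D : ℝ := ∑ i, |u i - v i| with hDdef
  have hD0 : 0 ≤ D := Finset.sum_nonneg fun i _ => abs_nonneg _
  rcases eq_or_lt_of_le hD0 with hD | hD
  · -- D = 0
    refine ⟨⟨0, by omega⟩, ⟨1, by omega⟩, by simp [Fin.ext_iff], ?_⟩
    rw [← hD]
    have : (0:ℝ)^2 / (4 * N^5) = 0 := by norm_num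
    rw [this]
    positivity
  · -- D > 0
    have hsu : ∑ i, u i = 1 := by
      rw [← hu1]; exact Finset.sum_congr rfl fun i _ => (abs_of_nonneg (hu0 i)).symm
    have hsv : ∑ i, v i = 1 := by
      rw [← hv1]; exact Finset.sum_congr rfl fun i _ => (abs_of_nonneg (hv0 i)).symm
    have hsd : ∑ i, (u i - v i) = 0 := by
      rw [Finset.sum_sub_distrib, hsu, hsv]; ring
    haveI : Nonempty (Fin n) := ⟨⟨0, hnpos⟩⟩
    have hne : (Finset.univ : Finset (Fin n)).Nonempty := Finset.univ_nonempty
    -- max of u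
    obtain ⟨m, -, hmax⟩ := Finset.exists_max_image Finset.univ u hne
    have h1 : 1 ≤ N * u m := by
      have : (1:ℝ) ≤ ∑ _i : Fin n, u m := by
        rw [← hsu]; exact Finset.sum_le_sum fun i _ => hmax i (Finset.mem_univ i)
      simpa [Finset.sum_const, Finset.card_univ, mul_comm] using this
    -- index with u j - v j large
    have key : ∀ w z : Fin n → ℝ, (∑ i, (w i - z i)) = 0 → (∑ i, |w i - z i|) = D →
        ∃ j, D ≤ 2 * N * (w j - z j) := by
      intro w z hs ha
      have hsum : (∑ _i : Fin n, D / N) ≤ ∑ i, ((w i - z i) + |w i - z i|) := by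
        rw [Finset.sum_add_distrib, hs, ha, zero_add, Finset.sum_const,
          Finset.card_univ, Fintype.card_fin, nsmul_eq_mul]
        rw [mul_div_cancel₀ _ (ne_of_gt hN0)]
      obtain ⟨j, -, hj⟩ := Finset.exists_le_of_sum_le hne hsum
      refine ⟨j, ?_⟩
      rcases le_or_gt (w j - z j) 0 with h | h
      · rw [abs_of_nonpos h] at hj
        have : D / N ≤ 0 := by linarith
        exfalso
        have : 0 < D / N := div_pos hD hN0
        linarith
      · rw [abs_of_pos h] at hj
        have := (div_le_iff₀ hN0).mp (by linarith : D / N ≤ 2 * (w j - z j))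
        linarith [this]
    obtain ⟨j, hj⟩ := key u v hsd rfl
    obtain ⟨k, hk⟩ := key v u (by rw [← neg_eq_zero, ← Finset.sum_neg_distrib]; simpa using hsd)
      ((Finset.sum_congr rfl fun i _ => abs_sub_comm (v i) (u i)).trans hDdef.symm)
    have hjpos : 0 < u j - v j := by nlinarith
    have hkpos : 0 < v k - u k := by nlinarith
    -- main inequality from det ≥ D/(2N²)
    have final : ∀ a b : Fin n, D ≤ 2 * N^2 * (u a * v b - u b * v a) → a ≠ b →
        D ^ 2 / (4 * N ^ 5) ≤ (u a * v b - u b * v a) ^ 2 := by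
      intro a b hdet hab2
      have hdpos : 0 < u a * v b - u b * v a := by nlinarith
      rw [div_le_iff₀ (by positivity)]
      nlinarith [mul_le_mul hdet hdet (le_of_lt hD) (by positivity),
        mul_nonneg (mul_nonneg (by linarith : (0:ℝ) ≤ N - 1) (pow_nonneg hN0.le 4))
          (sq_nonneg (u a * v b - u b * v a))]
    rcases le_or_gt (v m) (u m) with hm | hm
    · -- j = m, k = k
      have hmk : m ≠ k := by intro h; rw [h] at hm; linarith
      refine ⟨m, k, hmk, final m k ?_ hmk⟩
      nlinarith [mul_nonneg (hu0 k) (by linarith : (0:ℝ) ≤ u m - v m),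
        mul_nonneg (hu0 m) (le_of_lt hkpos), mul_pos hN0 hN0,
        mul_nonneg (le_of_lt hD) (by linarith : (0:ℝ) ≤ N * u m - 1)]
    · -- j = j, k = m
      have hjm : j ≠ m := by intro h; rw [h] at hjpos; linarith
      refine ⟨j, m, hjm, final j m ?_ hjm⟩
      nlinarith [mul_nonneg (hu0 j) (by linarith : (0:ℝ) ≤ v m - u m),
        mul_nonneg (hu0 m) (le_of_lt hjpos), mul_pos hN0 hN0,
        mul_nonneg (le_of_lt hD) (by linarith : (0:ℝ) ≤ N * u m - 1)]
end

section
/- Let n ∈ ℕ, C > 1, and let u, v ∈ ℝ₊ⁿ with ‖u‖₁ = ‖v‖₁ = 1. Let j₀ be an index such that u_{j₀} = max_j u_j (so that u_{j₀} ≥ 1/n), set 𝒦 := {1,…,n} \ {j₀−1, j₀, j₀+1} and λ := v_{j₀}/u_{j₀}. Assume that ∑_{k∈𝒦} u_k ∈ (1/C, 1) and ∑_{k∈𝒦} v_k ∈ (1/C, 1), and that there exists ε ∈ (0, 1/(2n²C)) such that |u_{j₀}·v_k − v_{j₀}·u_k| ≤ ε for every k ∈ 𝒦. Then λ ∈ [1/(2C),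 2C] and ∑_{k∈𝒦} |v_k − λ·u_k| ≤ n²·ε. -/
/-- Lemma `grad->jac2`.  Indices are `0`-based: `j : Fin n` represents the
site `j+1 ∈ {1,…,n}`, and `𝒦 = {1,…,n} \ {j₀-1, j₀, j₀+1}` is the set of `k` with
`|k - j₀| ≥ 2`. -/
theorem stmt10 (n : ℕ) (C : ℝ) (hC : 1 < C) (u v : Fin n → ℝ)
    (hu0 : ∀ i, 0 ≤ u i) (hv0 : ∀ i, 0 ≤ v i)
    (hu1 : (∑ i, u i) = 1) (hv1 : (∑ i, v i) = 1)
    (j₀ : Fin n) (hj₀ : ∀ j, u j ≤ u j₀)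
    (hsu : 1 / C < ∑ k ∈ Finset.univ.filter
              (fun k : Fin n => k.val + 1 < j₀.val ∨ j₀.val + 1 < k.val), u k)
    (hsu1 : (∑ k ∈ Finset.univ.filter
              (fun k : Fin n => k.val + 1 < j₀.val ∨ j₀.val + 1 < k.val), u k) < 1)
    (hsv : 1 / C < ∑ k ∈ Finset.univ.filter
              (fun k : Fin n => k.val + 1 < j₀.val ∨ j₀.val + 1 < k.val), v k)
    (hsv1 : (∑ k ∈ Finset.univ.filter
              (fun k : Fin n => k.val + 1 < j₀.val ∨ j₀.val + 1 < k.val), v k) < 1)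
    (ε : ℝ) (hε0 : 0 < ε) (hε1 : ε < 1 / (2 * (n : ℝ) ^ 2 * C))
    (hjac : ∀ k ∈ Finset.univ.filter
              (fun k : Fin n => k.val + 1 < j₀.val ∨ j₀.val + 1 < k.val),
            |u j₀ * v k - v j₀ * u k| ≤ ε) :
    v j₀ / u j₀ ∈ Set.Icc (1 / (2 * C)) (2 * C) ∧
    (∑ k ∈ Finset.univ.filter
        (fun k : Fin n => k.val + 1 < j₀.val ∨ j₀.val + 1 < k.val),
      |v k - (v j₀ / u j₀) * u k|) ≤ (n : ℝ) ^ 2 * ε := by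
  set S := Finset.univ.filter
      (fun k : Fin n => k.val + 1 < j₀.val ∨ j₀.val + 1 < k.val) with hS
  have hn : 0 < n := n.pos_of_ne_zero (by rintro rfl; simp at hu1)
  have hnR : (0:ℝ) < n := Nat.cast_pos.mpr hn
  have hC0 : (0:ℝ) < C := by linarith
  have hsum_le : (1:ℝ) ≤ n * u j₀ := by
    calc (1:ℝ) = ∑ i, u i := hu1.symm
    _ ≤ ∑ _i : Fin n, u j₀ := Finset.sum_le_sum fun i _ => hj₀ i
    _ = n * u j₀ := by simp [Finset.sum_const, mul_comm]
  have huj : 0 < u j₀ := by nlinarith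
  set lam := v j₀ / u j₀ with hlam
  have hlam0 : 0 ≤ lam := div_nonneg (hv0 j₀) huj.le
  -- pointwise bound
  have key : ∀ k ∈ S, |v k - lam * u k| ≤ n * ε := by
    intro k hk
    have heq : v k - lam * u k = (u j₀ * v k - v j₀ * u k) / u j₀ := by
      rw [hlam, sub_div, mul_div_cancel_left₀ _ huj.ne']; ring
    rw [heq, abs_div, abs_of_pos huj, div_le_iff₀ huj]
    have h1 := hjac k hk
    nlinarith [h1, hsum_le, hε0.le]
  -- sum bound
  have hcard : (S.card : ℝ) ≤ n := by
    exact_mod_cast (Finset.card_filter_le _ _).trans (by simp)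
  have hsum2 : (∑ k ∈ S, |v k - lam * u k|) ≤ (n:ℝ) ^ 2 * ε := by
    calc (∑ k ∈ S, |v k - lam * u k|) ≤ S.card • ((n:ℝ) * ε) :=
          Finset.sum_le_card_nsmul S _ _ key
    _ = (S.card : ℝ) * ((n:ℝ) * ε) := by rw [nsmul_eq_mul]
    _ ≤ (n:ℝ) * ((n:ℝ) * ε) := by
          apply mul_le_mul_of_nonneg_right hcard (by positivity)
    _ = (n:ℝ) ^ 2 * ε := by ring
  refine ⟨?_, hsum2⟩
  -- bound the ratio
  have hdiff : |(∑ k ∈ S, v k) - lam * (∑ k ∈ S, u k)| ≤ (n:ℝ) ^ 2 * ε := by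
    rw [Finset.mul_sum, ← Finset.sum_sub_distrib]
    exact (Finset.abs_sum_le_sum_abs _ _).trans hsum2
  have hn2ε : (n:ℝ) ^ 2 * ε < 1 / (2 * C) := by
    have h2 : ε * (2 * (n:ℝ) ^ 2 * C) < 1 := (lt_div_iff₀ (by positivity)).mp hε1
    rw [lt_div_iff₀ (by positivity)]
    nlinarith
  have habs := abs_le.mp hdiff
  have hCinv : 1 / C - 1 / (2 * C) = 1 / (2 * C) := by field_simp; ring
  constructor
  · -- lower bound
    have h1 : lam * (∑ k ∈ S, u k) ≤ lam := by nlinarith [habs.2]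
    linarith [habs.2]
  · -- upper bound
    have h2 : lam * (1 / C) ≤ lam * (∑ k ∈ S, u k) :=
      mul_le_mul_of_nonneg_left hsu.le hlam0
    have h3 : lam * (1 / C) < 1 + 1 / (2 * C) := by linarith [habs.1]
    have h4 : lam < C + 1 / 2 := by
      have h5 := mul_lt_mul_of_pos_right h3 hC0
      have e1 : lam * (1 / C) * C = lam := by field_simp
      have e2 : (1 + 1 / (2 * C)) * C = C + 1 / 2 := by field_simp
      rw [e1, e2] at h5; exact h5
    linarith
end

section
/- Fix M > 1. There exist C > 1 and l₀ ∈ ℕ (depending only on M) such that for every l ≥ l₀, every sequence a : {1,…,l−1} → ℝ with 1/M ≤ |a(n)| ≤ M for all n, and every normalized eigenvector φ of the l×l real symmetric tridiagonal matrix with zero diagonal and off-diagonal entries a(1),…,a(l−1), the following holds: setting u(i) := φ(i)², letting j₀ be an index maximizing u, and 𝒦 := {1,…,l} \ {j₀−1, j₀, j₀+1}, one has 1/C < ∑_{k∈𝒦} u(k) < 1. -/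
/-- Hopping matrix on `ℓ²({1,…,l})` with Dirichlet boundary conditions: zero diagonal and
off-diagonal entries `a 1, …, a (l-1)` (entry between sites `n` and `n+1` is `a n`). -/
noncomputable def hoppingMatrix (l : ℕ) (a : ℕ → ℝ) : Matrix (Fin l) (Fin l) ℝ :=
  fun i j =>
    if i.val + 1 = j.val then a (i.val + 1)
    else if j.val + 1 = i.val then a (j.val + 1) else 0

private lemma aux_key (M c x s t : ℝ) (hM : 1 < M) (hc : 1/M ≤ |c|)
    (h : |c*x| ≤ 2*M*|s| + M*|t|) : x^2 ≤ 8*M^4*(s^2+t^2) := by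
  have hM0 : (0:ℝ) < M := by linarith
  have h2 : (1/M) * |x| ≤ 2*M*|s| + M*|t| := by
    calc (1/M) * |x| ≤ |c| * |x| := mul_le_mul_of_nonneg_right hc (abs_nonneg x)
    _ = |c*x| := (abs_mul c x).symm
    _ ≤ _ := h
  have h3 : |x| ≤ M*(2*M*|s| + M*|t|) := by
    have h4 := mul_le_mul_of_nonneg_left h2 hM0.le
    rw [← mul_assoc, mul_one_div_cancel hM0.ne', one_mul] at h4
    exact h4
  rw [← sq_abs x, ← sq_abs s, ← sq_abs t]
  nlinarith [abs_nonneg x, abs_nonneg s, abs_nonneg t, hM0,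
    mul_le_mul h3 h3 (abs_nonneg x) (by positivity),
    mul_nonneg (sq_nonneg (M^2)) (sq_nonneg (|s| - |t|))]

set_option maxHeartbeats 1600000

/-- Lemma `resteiglargehopp`.  Indices are `0`-based: `j : Fin l`
represents the site `j+1 ∈ {1,…,l}`, and `𝒦` is the set of `k` with `|k - j₀| ≥ 2`. -/
theorem stmt11 (M : ℝ) (hM : 1 < M) :
    ∃ C : ℝ, 1 < C ∧ ∃ l₀ : ℕ, ∀ l : ℕ, l₀ ≤ l →
      ∀ a : ℕ → ℝ, (∀ n, 1 ≤ n → n ≤ l - 1 → 1 / M ≤ |a n| ∧ |a n| ≤ M) →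
      ∀ (φ : Fin l → ℝ) (E : ℝ),
        (hoppingMatrix l a).mulVec φ = E • φ → (∑ i, φ i ^ 2) = 1 →
        ∀ j₀ : Fin l, (∀ j, φ j ^ 2 ≤ φ j₀ ^ 2) →
          1 / C < (∑ k ∈ Finset.univ.filter
              (fun k : Fin l => k.val + 1 < j₀.val ∨ j₀.val + 1 < k.val), φ k ^ 2) ∧
          (∑ k ∈ Finset.univ.filter
              (fun k : Fin l => k.val + 1 < j₀.val ∨ j₀.val + 1 < k.val), φ k ^ 2) < 1 := by
  have hM0 : (0:ℝ) < M := by linarith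
  refine ⟨3*(8*M^4+1)^2+2, by nlinarith [sq_nonneg (8*M^4+1)], 7, ?_⟩
  intro l hl a ha φ E hmul hnorm j₀ hmax
  set ψ : ℕ → ℝ := fun n => if h : n < l then φ ⟨n, h⟩ else 0 with hψdef
  have hψlt : ∀ (n : ℕ) (h : n < l), ψ n = φ ⟨n, h⟩ := by
    intro n h; simp only [hψdef]; rw [dif_pos h]
  have hψge : ∀ n : ℕ, l ≤ n → ψ n = 0 := by
    intro n h; simp only [hψdef]; rw [dif_neg (by omega)]
  have hψj₀ : ψ j₀.1 = φ j₀ := by rw [hψlt _ j₀.2]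
  -- pointwise bound on ψ
  have hψsq : ∀ n : ℕ, ψ n ^ 2 ≤ φ j₀ ^ 2 := by
    intro n
    by_cases h : n < l
    · rw [hψlt n h]; exact hmax _
    · rw [hψge n (by omega)]; nlinarith [sq_nonneg (φ j₀)]
  have habsmax : ∀ n : ℕ, |ψ n| ≤ |φ j₀| := by
    intro n
    have h1 := hψsq n
    nlinarith [abs_nonneg (ψ n), abs_nonneg (φ j₀), sq_abs (ψ n), sq_abs (φ j₀)]
  -- the maximum is positive
  have hm : 0 < φ j₀ ^ 2 := by
    by_contra hcon
    push_neg at hcon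
    have : (∑ i, φ i ^ 2) ≤ 0 :=
      Finset.sum_nonpos (fun i _ => le_trans (hmax i) hcon)
    linarith
  have hφj₀ : 0 < |φ j₀| := by
    rw [abs_pos]; intro h0; rw [h0] at hm; simp at hm
  -- row computation
  have hrow : ∀ i : Fin l, (∑ j, hoppingMatrix l a i j * φ j)
      = a (i.1+1) * ψ (i.1+1) + (if 1 ≤ i.1 then a i.1 * ψ (i.1-1) else 0) := by
    intro i
    have hsplit : ∀ j : Fin l, hoppingMatrix l a i j * φ j =
        (if i.1+1 = j.1 then a (i.1+1) * φ j else 0)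
        + (if j.1+1 = i.1 then a (j.1+1) * φ j else 0) := by
      intro j
      simp only [hoppingMatrix]
      split_ifs <;> first | (exfalso; omega) | ring
    rw [Finset.sum_congr rfl (fun j _ => hsplit j), Finset.sum_add_distrib]
    congr 1
    · by_cases h : i.1 + 1 < l
      · rw [Finset.sum_eq_single (⟨i.1+1, h⟩ : Fin l)]
        · rw [if_pos rfl, hψlt _ h]
        · intro b _ hb
          rw [if_neg]
          exact fun hc => hb (Fin.ext hc.symm)
        · intro hb; exact absurd (Finset.mem_univ _) hb
      · rw [Finset.sum_eq_zero, hψge _ (by omega), mul_zero]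
        intro j _
        rw [if_neg (by omega)]
    · by_cases h : 1 ≤ i.1
      · rw [if_pos h, Finset.sum_eq_single (⟨i.1-1, by omega⟩ : Fin l)]
        · rw [if_pos (by simp; omega), hψlt _ (by omega)]
          congr 1
          · congr 1
            simp; omega
        · intro b _ hb
          rw [if_neg]
          intro hc
          exact hb (Fin.ext (by simp; omega))
        · intro hb; exact absurd (Finset.mem_univ _) hb
      · rw [if_neg h, Finset.sum_eq_zero]
        intro j _
        rw [if_neg (by omega)]
    -- eigen equation in ψ coordinates
  have hEq : ∀ (n : ℕ), n < l →
      a (n+1) * ψ (n+1) + (if 1 ≤ n then a n * ψ (n-1) else 0) = E * ψ n := by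
    intro n h
    have h1 := congrFun hmul ⟨n, h⟩
    simp only [Matrix.mulVec, dotProduct, Pi.smul_apply, smul_eq_mul] at h1
    rw [hrow ⟨n, h⟩] at h1
    rw [hψlt n h]
    exact h1
  -- bound on |E|
  have hE : |E| ≤ 2*M := by
    have h1 := hEq j₀.1 j₀.2
    rw [hψj₀] at h1
    have hB1 : |a (j₀.1+1) * ψ (j₀.1+1)| ≤ M * |φ j₀| := by
      by_cases hb : j₀.1 + 2 ≤ l
      · rw [abs_mul]
        exact mul_le_mul (ha (j₀.1+1) (by omega) (by omega)).2 (habsmax _)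
          (abs_nonneg _) hM0.le
      · rw [hψge _ (by omega), mul_zero, abs_zero]
        positivity
    have hB2 : |(if 1 ≤ j₀.1 then a j₀.1 * ψ (j₀.1-1) else 0)| ≤ M * |φ j₀| := by
      by_cases hb : 1 ≤ j₀.1
      · rw [if_pos hb, abs_mul]
        exact mul_le_mul (ha j₀.1 hb (by omega)).2 (habsmax _) (abs_nonneg _) hM0.le
      · rw [if_neg hb, abs_zero]; positivity
    have h2 : |E * φ j₀| ≤ 2*M*|φ j₀| := by
      rw [← h1]
      calc |a (j₀.1+1) * ψ (j₀.1+1) + (if 1 ≤ j₀.1 then a j₀.1 * ψ (j₀.1-1) else 0)|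
          ≤ |a (j₀.1+1) * ψ (j₀.1+1)| + |(if 1 ≤ j₀.1 then a j₀.1 * ψ (j₀.1-1) else 0)| :=
            abs_add_le _ _
        _ ≤ M * |φ j₀| + M * |φ j₀| := add_le_add hB1 hB2
        _ = 2*M*|φ j₀| := by ring
    rw [abs_mul] at h2
    have := le_of_mul_le_mul_right h2 hφj₀
    linarith
  -- transfer steps
  have hstep : ∀ n₀ n₁ n₂ : ℕ, n₁ = n₀+1 → n₂ = n₁+1 → n₂ < l →
      ψ n₀^2 ≤ 8*M^4*(ψ n₁^2 + ψ n₂^2) ∧ ψ n₂^2 ≤ 8*M^4*(ψ n₁^2 + ψ n₀^2) := by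
    intro n₀ n₁ n₂ h1 h2 h3
    subst h1; subst h2
    have he := hEq (n₀+1) (by omega)
    rw [if_pos (by omega), Nat.add_sub_cancel] at he
    have ha1 := ha (n₀+1) (by omega) (by omega)
    have ha2 := ha (n₀+1+1) (by omega) (by omega)
    constructor
    · apply aux_key M (a (n₀+1)) _ (ψ (n₀+1)) (ψ (n₀+1+1)) hM ha1.1
      have hcx : a (n₀+1) * ψ n₀ = E * ψ (n₀+1) - a (n₀+1+1) * ψ (n₀+1+1) := by
        linarith
      rw [hcx]
      calc |E * ψ (n₀+1) - a (n₀+1+1) * ψ (n₀+1+1)|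
          ≤ |E * ψ (n₀+1)| + |a (n₀+1+1) * ψ (n₀+1+1)| := abs_sub _ _
        _ = |E| * |ψ (n₀+1)| + |a (n₀+1+1)| * |ψ (n₀+1+1)| := by rw [abs_mul, abs_mul]
        _ ≤ 2*M*|ψ (n₀+1)| + M*|ψ (n₀+1+1)| := by
            gcongr
            exact ha2.2
    · apply aux_key M (a (n₀+1+1)) _ (ψ (n₀+1)) (ψ n₀) hM ha2.1
      have hcx : a (n₀+1+1) * ψ (n₀+1+1) = E * ψ (n₀+1) - a (n₀+1) * ψ n₀ := by
        linarith
      rw [hcx]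
      calc |E * ψ (n₀+1) - a (n₀+1) * ψ n₀|
          ≤ |E * ψ (n₀+1)| + |a (n₀+1) * ψ n₀| := abs_sub _ _
        _ = |E| * |ψ (n₀+1)| + |a (n₀+1)| * |ψ n₀| := by rw [abs_mul, abs_mul]
        _ ≤ 2*M*|ψ (n₀+1)| + M*|ψ n₀| := by
            gcongr
            exact ha1.2
  -- the sums
  set P : Fin l → Prop := fun k => k.val + 1 < j₀.val ∨ j₀.val + 1 < k.val with hPdef
  set S := (∑ k ∈ Finset.univ.filter
      (fun k : Fin l => k.val + 1 < j₀.val ∨ j₀.val + 1 < k.val), φ k ^ 2) with hSdef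
  set T := Finset.univ.filter (fun k : Fin l =>
      ¬(k.val + 1 < j₀.val ∨ j₀.val + 1 < k.val)) with hTdef
  have hsplitsum : S + ∑ k ∈ T, φ k ^ 2 = 1 := by
    rw [hSdef, hTdef, Finset.sum_filter_add_sum_filter_not]
    exact hnorm
  have hj₀T : j₀ ∈ T := by
    rw [hTdef, Finset.mem_filter]
    exact ⟨Finset.mem_univ _, by omega⟩
  have hTm : φ j₀ ^ 2 ≤ ∑ k ∈ T, φ k ^ 2 :=
    Finset.single_le_sum (f := fun k => φ k ^ 2) (fun i _ => sq_nonneg _) hj₀T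
  have hTcard : T.card ≤ 3 := by
    have h3 : (Finset.range 3).card = 3 := Finset.card_range 3
    rw [← h3]
    apply Finset.card_le_card_of_injOn (fun k : Fin l => k.val + 1 - j₀.val)
    · intro k hk
      simp only [hTdef, Finset.mem_coe, Finset.mem_filter, Finset.mem_univ, true_and, not_or,
        not_lt] at hk
      show k.val + 1 - j₀.val ∈ Finset.range 3
      simp only [Finset.mem_range]
      omega
    · intro k hk k' hk' hkk'
      simp only [hTdef, Finset.mem_coe, Finset.mem_filter, Finset.mem_univ, true_and,
        not_or, not_lt] at hk hk'
      have h2 : k.val + 1 - j₀.val = k'.val + 1 - j₀.val := hkk'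
      apply Fin.ext
      omega
  have hT3m : ∑ k ∈ T, φ k ^ 2 ≤ 3 * φ j₀ ^ 2 := by
    calc ∑ k ∈ T, φ k ^ 2 ≤ ∑ _k ∈ T, φ j₀ ^ 2 := Finset.sum_le_sum (fun k _ => hmax k)
      _ = T.card * φ j₀ ^ 2 := by rw [Finset.sum_const, nsmul_eq_mul]
      _ ≤ 3 * φ j₀ ^ 2 := by
          have : (T.card : ℝ) ≤ 3 := by exact_mod_cast hTcard
          nlinarith [hm]
  -- main lower bound: m ≤ (8M⁴+1)² * S
  have hmain : φ j₀ ^ 2 ≤ (8*M^4+1)^2 * S := by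
    have hM4 : (0:ℝ) ≤ M^4 := by positivity
    by_cases hcase : j₀.1 + 3 < l
    · -- go right
      have e1 := (hstep j₀.1 (j₀.1+1) (j₀.1+2) rfl (by omega) (by omega)).1
      have e2 := (hstep (j₀.1+1) (j₀.1+2) (j₀.1+3) (by omega) (by omega) (by omega)).1
      have hpair : ψ (j₀.1+2)^2 + ψ (j₀.1+3)^2 ≤ S := by
        have h2l : j₀.1 + 2 < l := by omega
        have h3l : j₀.1 + 3 < l := hcase
        rw [hψlt _ h2l, hψlt _ h3l, hSdef]
        have hne : (⟨j₀.1+2, h2l⟩ : Fin l) ≠ ⟨j₀.1+3, h3l⟩ := by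
          simp [Fin.ext_iff]
        calc φ ⟨j₀.1+2, h2l⟩^2 + φ ⟨j₀.1+3, h3l⟩^2
            = ∑ k ∈ ({⟨j₀.1+2, h2l⟩, ⟨j₀.1+3, h3l⟩} : Finset (Fin l)), φ k ^ 2 :=
              (Finset.sum_pair (f := fun k : Fin l => φ k ^ 2) hne).symm
          _ ≤ _ := by
              apply Finset.sum_le_sum_of_subset_of_nonneg
              · intro k hk
                simp only [Finset.mem_insert, Finset.mem_singleton] at hk
                rw [Finset.mem_filter]
                refine ⟨Finset.mem_univ _, ?_⟩
                rcases hk with h | h <;> subst h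
                · exact Or.inr (show j₀.1 + 1 < j₀.1 + 2 by omega)
                · exact Or.inr (show j₀.1 + 1 < j₀.1 + 3 by omega)
              · intro _ _ _; exact sq_nonneg _
      have e3 := mul_le_mul_of_nonneg_left e2 (by positivity : (0:ℝ) ≤ 8*M^4)
      have e4 := mul_le_mul_of_nonneg_left hpair
        (by positivity : (0:ℝ) ≤ (8*M^4+1)^2)
      rw [← hψj₀]
      nlinarith [sq_nonneg (ψ (j₀.1+2)), sq_nonneg (ψ (j₀.1+3)),
        mul_nonneg hM4 (sq_nonneg (ψ (j₀.1+2))), mul_nonneg hM4 (sq_nonneg (ψ (j₀.1+3)))]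
    · -- go left;  l ≥ 7 forces j₀.1 ≥ 3
      have hj3 : 3 ≤ j₀.1 := by
        have := j₀.2
        omega
      have e1 := (hstep (j₀.1-2) (j₀.1-1) j₀.1 (by omega) (by omega) j₀.2).2
      have e2 := (hstep (j₀.1-3) (j₀.1-2) (j₀.1-1) (by omega) (by omega) (by omega)).2
      have hpair : ψ (j₀.1-2)^2 + ψ (j₀.1-3)^2 ≤ S := by
        have h2l : j₀.1 - 2 < l := by omega
        have h3l : j₀.1 - 3 < l := by omega
        rw [hψlt _ h2l, hψlt _ h3l, hSdef]
        have hne : (⟨j₀.1-2, h2l⟩ : Fin l) ≠ ⟨j₀.1-3, h3l⟩ := by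
          simp [Fin.ext_iff]; omega
        calc φ ⟨j₀.1-2, h2l⟩^2 + φ ⟨j₀.1-3, h3l⟩^2
            = ∑ k ∈ ({⟨j₀.1-2, h2l⟩, ⟨j₀.1-3, h3l⟩} : Finset (Fin l)), φ k ^ 2 :=
              (Finset.sum_pair (f := fun k : Fin l => φ k ^ 2) hne).symm
          _ ≤ _ := by
              apply Finset.sum_le_sum_of_subset_of_nonneg
              · intro k hk
                simp only [Finset.mem_insert, Finset.mem_singleton] at hk
                rw [Finset.mem_filter]
                refine ⟨Finset.mem_univ _, ?_⟩
                rcases hk with h | h <;> subst h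
                · exact Or.inl (show j₀.1 - 2 + 1 < j₀.1 by omega)
                · exact Or.inl (show j₀.1 - 3 + 1 < j₀.1 by omega)
              · intro _ _ _; exact sq_nonneg _
      have e3 := mul_le_mul_of_nonneg_left e2 (by positivity : (0:ℝ) ≤ 8*M^4)
      have e4 := mul_le_mul_of_nonneg_left hpair
        (by positivity : (0:ℝ) ≤ (8*M^4+1)^2)
      rw [← hψj₀]
      nlinarith [sq_nonneg (ψ (j₀.1-2)), sq_nonneg (ψ (j₀.1-3)),
        mul_nonneg hM4 (sq_nonneg (ψ (j₀.1-2))), mul_nonneg hM4 (sq_nonneg (ψ (j₀.1-3)))]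
  -- conclude
  have h1S : 1 ≤ (3*(8*M^4+1)^2+1) * S := by nlinarith [hT3m, hTm, hsplitsum, hmain]
  have hq : (0:ℝ) < 3*(8*M^4+1)^2+1 := by positivity
  have hSpos : 0 < S := by nlinarith [h1S, hq]
  constructor
  · rw [div_lt_iff₀ (by positivity : (0:ℝ) < 3*(8*M^4+1)^2+2)]
    nlinarith [h1S, hSpos]
  · linarith [hsplitsum, hTm, hm]
end

section
/- There exists C > 1 (depending only on M and K) such that for every L, every solution u of the difference equation as in the context that is not identically zero, one has r_u(n) > 0 for every n ∈ {1,…,L}, and (1/C)·r_u(n+1) ≤ r_u(n) ≤ C·r_u(n+1) for every n ∈ {1,…,L−1}. -/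
/-- Prüfer radius `r_u(n) = √(u(n)² + u(n-1)²)` of a sequence `u : ℕ → ℝ`. -/
noncomputable def pruf (u : ℕ → ℝ) (n : ℕ) : ℝ :=
  Real.sqrt (u n ^ 2 + u (n - 1) ^ 2)

/-- Zero propagation for the difference equation. -/
lemma stmt16_zero_prop (L : ℕ) (a W u : ℕ → ℝ) (ha : ∀ n, a n ≠ 0)
    (heq : ∀ n, 1 ≤ n → n ≤ L - 1 →
      a (n + 1) * u (n + 1) + a n * u (n - 1) = W n * u n)
    (n : ℕ) (hn1 : 1 ≤ n) (hnL : n ≤ L) (h0 : u n = 0) (h1 : u (n - 1) = 0) :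
    ∀ m, m ≤ L → u m = 0 := by
  have down : ∀ j, u (n - j) = 0 ∧ u (n - (j + 1)) = 0 := by
    intro j
    induction j with
    | zero => exact ⟨h0, h1⟩
    | succ j ih =>
      refine ⟨ih.2, ?_⟩
      by_cases hc : n ≤ j + 1
      · have : n - (j + 1 + 1) = n - (j + 1) := by omega
        rw [this]; exact ih.2
      · push_neg at hc
        set m := n - (j + 1) with hm
        have hm1 : 1 ≤ m := by omega
        have hmL : m ≤ L - 1 := by omega
        have e := heq m hm1 hmL
        have e1 : m + 1 = n - j := by omega
        have e2 : m - 1 = n - (j + 1 + 1) := by omega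
        rw [e1, e2, ih.1] at e
        have : a m * u (n - (j + 1 + 1)) = 0 := by
          have hum : u m = 0 := ih.2
          rw [hum] at e; linarith
        rcases mul_eq_zero.mp this with h | h
        · exact absurd h (ha m)
        · exact h
  have up : ∀ j, n + j ≤ L → u (n + j) = 0 ∧ u (n + j - 1) = 0 := by
    intro j
    induction j with
    | zero => intro _; exact ⟨h0, h1⟩
    | succ j ih =>
      intro hjL
      have hj : n + j ≤ L := by omega
      obtain ⟨i1, i2⟩ := ih hj
      have hm1 : 1 ≤ n + j := by omega
      have hmL : n + j ≤ L - 1 := by omega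
      have e := heq (n + j) hm1 hmL
      rw [i1, i2] at e
      have : a (n + j + 1) * u (n + j + 1) = 0 := by linarith
      rcases mul_eq_zero.mp this with h | h
      · exact absurd h (ha (n + j + 1))
      · have hne : n + (j + 1) = n + j + 1 := by omega
        rw [hne]
        exact ⟨h, by simpa using i1⟩
  intro m hmL
  by_cases hc : n ≤ m
  · have := (up (m - n) (by omega)).1
    have e : n + (m - n) = m := by omega
    rwa [e] at this
  · have := (down (n - m)).1
    have e : n - (n - m) = m := by omega
    rwa [e] at this

set_option maxHeartbeats 1000000 in
/-- Lemma `progress`.  For any not identically zero solution of the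
second-order finite-difference equation, the Prüfer radius is positive and two
consecutive Prüfer radii are comparable, with a constant depending only on `M, K`. -/
theorem stmt16 (M K : ℝ) (hM : 1 < M) (hK : 0 < K) :
    ∃ C : ℝ, 1 < C ∧
      ∀ (L : ℕ) (a W u : ℕ → ℝ),
        (∀ n, 1 / M ≤ |a n| ∧ |a n| ≤ M) → (∀ n, |W n| ≤ K) →
        (∀ n, 1 ≤ n → n ≤ L - 1 →
          a (n + 1) * u (n + 1) + a n * u (n - 1) = W n * u n) →
        (∃ n, n ≤ L ∧ u n ≠ 0) →
        (∀ n, 1 ≤ n → n ≤ L → 0 < pruf u n) ∧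
        (∀ n, 1 ≤ n → n ≤ L - 1 →
          (1 / C) * pruf u (n + 1) ≤ pruf u n ∧ pruf u n ≤ C * pruf u (n + 1)) := by
  have hM0 : (0:ℝ) < M := by linarith
  obtain ⟨C, hC1, hCkey⟩ : ∃ C : ℝ, 1 < C ∧ 1 + 2 * M ^ 2 * (K ^ 2 + M ^ 2) ≤ C ^ 2 := by
    refine ⟨1 + 2 * M ^ 2 * (K ^ 2 + M ^ 2), ?_, ?_⟩
    · have : (0:ℝ) < 2 * M ^ 2 * (K ^ 2 + M ^ 2) := by positivity
      linarith
    · nlinarith [sq_nonneg (2 * M ^ 2 * (K ^ 2 + M ^ 2))]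
  have hC0 : (0:ℝ) < C := by linarith
  refine ⟨C, hC1, ?_⟩
  intro L a W u ha hW heq hnz
  have haL : ∀ n, (1 / M) ^ 2 ≤ (a n) ^ 2 := by
    intro n
    have h := (ha n).1
    calc (1 / M) ^ 2 ≤ |a n| ^ 2 := by
          apply pow_le_pow_left₀ (by positivity) h
      _ = (a n) ^ 2 := sq_abs _
  have haU : ∀ n, (a n) ^ 2 ≤ M ^ 2 := by
    intro n
    calc (a n) ^ 2 = |a n| ^ 2 := (sq_abs _).symm
      _ ≤ M ^ 2 := by apply pow_le_pow_left₀ (abs_nonneg _) (ha n).2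
  have hWU : ∀ n, (W n) ^ 2 ≤ K ^ 2 := by
    intro n
    calc (W n) ^ 2 = |W n| ^ 2 := (sq_abs _).symm
      _ ≤ K ^ 2 := by apply pow_le_pow_left₀ (abs_nonneg _) (hW n)
  have hane : ∀ n, a n ≠ 0 := by
    intro n h
    have h1 := (ha n).1
    rw [h, abs_zero] at h1
    have h2 : (0:ℝ) < 1 / M := by positivity
    linarith
  -- positivity of pruf
  have hpos : ∀ n, 1 ≤ n → n ≤ L → 0 < pruf u n := by
    intro n hn1 hnL
    rcases hnz with ⟨m, hmL, hm⟩
    have hne : pruf u n ≠ 0 := by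
      intro h
      have hnn : (0:ℝ) ≤ u n ^ 2 + u (n - 1) ^ 2 := by positivity
      have hsum : u n ^ 2 + u (n - 1) ^ 2 = 0 := by
        have h' : Real.sqrt (u n ^ 2 + u (n - 1) ^ 2) = 0 := h
        nlinarith [Real.sq_sqrt hnn]
      have h0 : u n = 0 := by nlinarith [sq_nonneg (u n), sq_nonneg (u (n-1))]
      have h1 : u (n - 1) = 0 := by nlinarith [sq_nonneg (u n), sq_nonneg (u (n-1))]
      exact hm (stmt16_zero_prop L a W u hane heq n hn1 hnL h0 h1 m hmL)
    exact lt_of_le_of_ne (Real.sqrt_nonneg _) (Ne.symm hne)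
  refine ⟨hpos, ?_⟩
  intro n hn1 hnL
  have e := heq n hn1 hnL
  have hA1 : 1 ≤ M ^ 2 * (a (n+1)) ^ 2 := by
    have := mul_le_mul_of_nonneg_left (haL (n+1)) (sq_nonneg M)
    have hMne : M ≠ 0 := ne_of_gt hM0
    calc (1:ℝ) = M ^ 2 * (1 / M) ^ 2 := by field_simp
      _ ≤ M ^ 2 * (a (n+1)) ^ 2 := this
  have hA2 : 1 ≤ M ^ 2 * (a n) ^ 2 := by
    have := mul_le_mul_of_nonneg_left (haL n) (sq_nonneg M)
    have hMne : M ≠ 0 := ne_of_gt hM0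
    calc (1:ℝ) = M ^ 2 * (1 / M) ^ 2 := by field_simp
      _ ≤ M ^ 2 * (a n) ^ 2 := this
  -- key square inequalities
  have h1 : u (n + 1) ^ 2 ≤ 2 * M ^ 2 * (K ^ 2 * u n ^ 2 + M ^ 2 * u (n - 1) ^ 2) := by
    have e1 : a (n+1) * u (n+1) = W n * u n - a n * u (n-1) := by linarith
    have e2 : (a (n+1))^2 * u (n+1)^2 = (W n * u n - a n * u (n-1))^2 := by
      have := congrArg (· ^ 2) e1
      simpa [mul_pow] using this
    have hstep : (a (n+1)) ^ 2 * u (n + 1) ^ 2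
        ≤ 2 * (K ^ 2 * u n ^ 2 + M ^ 2 * u (n - 1) ^ 2) := by
      nlinarith [e2, sq_nonneg (W n * u n + a n * u (n-1)),
        mul_le_mul_of_nonneg_right (hWU n) (sq_nonneg (u n)),
        mul_le_mul_of_nonneg_right (haU n) (sq_nonneg (u (n-1)))]
    nlinarith [mul_le_mul_of_nonneg_left hstep (sq_nonneg M),
      mul_le_mul_of_nonneg_right hA1 (sq_nonneg (u (n+1)))]
  have h2 : u (n - 1) ^ 2 ≤ 2 * M ^ 2 * (K ^ 2 * u n ^ 2 + M ^ 2 * u (n + 1) ^ 2) := by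
    have e1 : a n * u (n - 1) = W n * u n - a (n+1) * u (n+1) := by linarith
    have e2 : (a n)^2 * u (n - 1)^2 = (W n * u n - a (n+1) * u (n+1))^2 := by
      have := congrArg (· ^ 2) e1
      simpa [mul_pow] using this
    have hstep : (a n) ^ 2 * u (n - 1) ^ 2
        ≤ 2 * (K ^ 2 * u n ^ 2 + M ^ 2 * u (n + 1) ^ 2) := by
      nlinarith [e2, sq_nonneg (W n * u n + a (n+1) * u (n+1)),
        mul_le_mul_of_nonneg_right (hWU n) (sq_nonneg (u n)),
        mul_le_mul_of_nonneg_right (haU (n+1)) (sq_nonneg (u (n+1)))]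
    nlinarith [mul_le_mul_of_nonneg_left hstep (sq_nonneg M),
      mul_le_mul_of_nonneg_right hA2 (sq_nonneg (u (n-1)))]
  have hx : (0:ℝ) ≤ C ^ 2 - 1 - 2 * M ^ 2 * K ^ 2 := by nlinarith [sq_nonneg M, sq_nonneg (M^2)]
  have hy : (0:ℝ) ≤ C ^ 2 - 2 * M ^ 2 * M ^ 2 := by nlinarith [sq_nonneg M, sq_nonneg K]
  have hsimp : pruf u (n + 1) = Real.sqrt (u (n + 1) ^ 2 + u n ^ 2) := by
    unfold pruf; norm_num
  have key : ∀ x y : ℝ, x ≤ C ^ 2 * y → 0 ≤ x → Real.sqrt x ≤ C * Real.sqrt y := by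
    intro x y hxy hx'
    have hy' : 0 ≤ y := by
      by_contra h
      push_neg at h
      have : C ^ 2 * y < 0 := mul_neg_of_pos_of_neg (pow_pos hC0 2) h
      linarith
    calc Real.sqrt x ≤ Real.sqrt (C ^ 2 * y) := Real.sqrt_le_sqrt hxy
      _ = C * Real.sqrt y := by
          rw [Real.sqrt_mul (sq_nonneg C), Real.sqrt_sq hC0.le]
  constructor
  · have hle : pruf u (n + 1) ≤ C * pruf u n := by
      rw [hsimp]
      unfold pruf
      apply key
      · nlinarith [h1, mul_nonneg hx (sq_nonneg (u n)), mul_nonneg hy (sq_nonneg (u (n-1)))]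
      · positivity
    calc (1 / C) * pruf u (n + 1) ≤ (1 / C) * (C * pruf u n) := by
          apply mul_le_mul_of_nonneg_left hle (by positivity)
      _ = pruf u n := by field_simp
  · rw [hsimp]
    unfold pruf
    apply key
    · nlinarith [h2, mul_nonneg hx (sq_nonneg (u n)), mul_nonneg hy (sq_nonneg (u (n+1)))]
    · positivity
end

section
/- There exists ε₀ > 0 (depending only on M and K) such that for every L, every solution u of the difference equation as in the context that is not identically zero, every n ∈ {1,…,L−1} and every ε with 0 ≤ ε ≤ ε₀: if |u(n)| ≤ ε·r_u(n), then |u(n+1)| ≥ ε₀·r_u(n+1). (In Prüfer variables: if |sin(φ_u(n))| ≤ ε then |sin(φ_u(n+1))| ≥ ε₀.) -/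
lemma sqrt_le_abs_add_abs (x y : ℝ) : Real.sqrt (x ^ 2 + y ^ 2) ≤ |x| + |y| := by
  have h : x ^ 2 + y ^ 2 ≤ (|x| + |y|) ^ 2 := by
    nlinarith [sq_abs x, sq_abs y, mul_nonneg (abs_nonneg x) (abs_nonneg y)]
  calc Real.sqrt (x ^ 2 + y ^ 2) ≤ Real.sqrt ((|x| + |y|) ^ 2) := Real.sqrt_le_sqrt h
    _ = |x| + |y| := Real.sqrt_sq (by positivity)

lemma other_big (x y ε : ℝ) (hε0 : 0 ≤ ε) (hεhalf : ε ≤ 1/2)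
    (h : |y| ≤ ε * Real.sqrt (y ^ 2 + x ^ 2)) :
    (3/4) * Real.sqrt (y ^ 2 + x ^ 2) ≤ |x| := by
  set r := Real.sqrt (y ^ 2 + x ^ 2) with hr
  have hr0 : 0 ≤ r := Real.sqrt_nonneg _
  have hrsq : r ^ 2 = y ^ 2 + x ^ 2 := Real.sq_sqrt (by positivity)
  nlinarith [sq_abs x, sq_abs y, abs_nonneg x, abs_nonneg y,
    mul_le_mul h h (abs_nonneg y) (by positivity : (0:ℝ) ≤ ε * r),
    mul_le_mul hεhalf hεhalf hε0 (by norm_num : (0:ℝ) ≤ 1/2)]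

/-- Core real-number estimate: `x = u(n-1)`, `y = u n`, `z = u(n+1)`. -/
lemma stmt17_core (M K : ℝ) (hM : 1 < M) (hK : 0 < K) (x y z ε : ℝ)
    (hε0 : 0 ≤ ε) (hεE : ε ≤ min (1/2) (min (1/(4*M*K)) (1/(4*M^2))))
    (hun : |y| ≤ ε * Real.sqrt (y ^ 2 + x ^ 2))
    (h1' : |x| ≤ M * K * |y| + M ^ 2 * |z|) :
    min (1/2) (min (1/(4*M*K)) (1/(4*M^2))) * Real.sqrt (z ^ 2 + y ^ 2) ≤ |z| := by
  have hM0 : (0:ℝ) < M := lt_trans one_pos hM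
  set E := min (1/2) (min (1/(4*M*K)) (1/(4*M^2))) with hE
  have hEpos : 0 < E := by positivity
  have hE1 : E ≤ 1/2 := min_le_left _ _
  have hE2 : E ≤ 1/(4*M*K) := le_trans (min_le_right _ _) (min_le_left _ _)
  have hE3 : E ≤ 1/(4*M^2) := le_trans (min_le_right _ _) (min_le_right _ _)
  set r := Real.sqrt (y ^ 2 + x ^ 2) with hr
  have hr0 : 0 ≤ r := Real.sqrt_nonneg _
  have hun1 : (3/4) * r ≤ |x| :=
    other_big x y ε hε0 (le_trans hεE hE1) hun
  have hMKε : M * K * ε ≤ 1 / 4 := by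
    have h := le_trans hεE hE2
    have h2 : ε * (4 * M * K) ≤ 1 := (le_div_iff₀ (by positivity)).mp h
    nlinarith
  have hrle : r ≤ 2 * M ^ 2 * |z| := by
    have h6 : M * K * |y| ≤ (1/4) * r := by
      have a1 : M * K * |y| ≤ M * K * (ε * r) :=
        mul_le_mul_of_nonneg_left hun (by positivity)
      have a2 : M * K * ε * r ≤ (1/4) * r := mul_le_mul_of_nonneg_right hMKε hr0
      nlinarith
    linarith
  have hr' : Real.sqrt (z ^ 2 + y ^ 2) ≤ |z| + |y| := sqrt_le_abs_add_abs z y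
  have hεr : ε * r ≤ E * r := mul_le_mul_of_nonneg_right (le_trans hεE (le_refl E)) hr0
  have hEr2 : E * r ≤ (1/2) * |z| := by
    have b1 : E * r ≤ (1/(4*M^2)) * r := mul_le_mul_of_nonneg_right hE3 hr0
    have b2 : (1/(4*M^2)) * r ≤ (1/(4*M^2)) * (2*M^2*|z|) :=
      mul_le_mul_of_nonneg_left hrle (by positivity)
    have b3 : (1/(4*M^2)) * (2*M^2*|z|) = (1/2) * |z| := by field_simp; ring
    linarith
  calc E * Real.sqrt (z ^ 2 + y ^ 2) ≤ E * (|z| + |y|) :=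
        mul_le_mul_of_nonneg_left hr' hEpos.le
    _ = E * |z| + E * |y| := by ring
    _ ≤ (1/2) * |z| + (1/2) * |z| := by
        have c1 : E * |z| ≤ (1/2) * |z| := mul_le_mul_of_nonneg_right hE1 (abs_nonneg _)
        have c2 : E * |y| ≤ E * (ε * r) := mul_le_mul_of_nonneg_left hun hEpos.le
        have c3 : E * (ε * r) ≤ 1 * (ε * r) :=
          mul_le_mul_of_nonneg_right (le_trans hE1 (by norm_num)) (by positivity)
        have c4 : ε * r ≤ (1/2) * |z| := le_trans hεr hEr2
        linarith
    _ ≤ |z| := by linarith [abs_nonneg z]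

/-- Lemma `not0`.  If `|sin φ_u(n)| ≤ ε`, i.e. `|u(n)| ≤ ε r_u(n)`, then
`|sin φ_u(n+1)| ≥ ε₀`, i.e. `|u(n+1)| ≥ ε₀ r_u(n+1)`, with `ε₀` depending only on `M, K`. -/
theorem stmt17 (M K : ℝ) (hM : 1 < M) (hK : 0 < K) :
    ∃ ε₀ : ℝ, 0 < ε₀ ∧
      ∀ (L : ℕ) (a W u : ℕ → ℝ),
        (∀ n, 1 / M ≤ |a n| ∧ |a n| ≤ M) → (∀ n, |W n| ≤ K) →
        (∀ n, 1 ≤ n → n ≤ L - 1 →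
          a (n + 1) * u (n + 1) + a n * u (n - 1) = W n * u n) →
        (∃ n, n ≤ L ∧ u n ≠ 0) →
        ∀ n, 1 ≤ n → n ≤ L - 1 →
        ∀ ε : ℝ, 0 ≤ ε → ε ≤ ε₀ →
          |u n| ≤ ε * pruf u n → ε₀ * pruf u (n + 1) ≤ |u (n + 1)| := by
  have hM0 : (0:ℝ) < M := lt_trans one_pos hM
  refine ⟨min (1/2) (min (1/(4*M*K)) (1/(4*M^2))), by positivity, ?_⟩
  intro L a W u ha hW heq _ n hn1 hnL ε hε0 hεE hun
  have e : a (n + 1) * u (n + 1) + a n * u (n - 1) = W n * u n := heq n hn1 hnL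
  have htri : |a n * u (n - 1)| ≤ |W n * u n| + |a (n + 1) * u (n + 1)| := by
    have h : a n * u (n - 1) = W n * u n - a (n + 1) * u (n + 1) := by linarith
    rw [h]
    exact abs_sub _ _
  have hmid : |a n| * |u (n - 1)| ≤ K * |u n| + M * |u (n + 1)| := by
    have e2 : |W n| * |u n| ≤ K * |u n| :=
      mul_le_mul_of_nonneg_right (hW n) (abs_nonneg _)
    have e3 : |a (n+1)| * |u (n+1)| ≤ M * |u (n+1)| :=
      mul_le_mul_of_nonneg_right (ha (n+1)).2 (abs_nonneg _)
    rw [abs_mul, abs_mul, abs_mul] at htri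
    linarith
  have h1' : |u (n - 1)| ≤ M * K * |u n| + M ^ 2 * |u (n + 1)| := by
    nlinarith [mul_le_mul_of_nonneg_left hmid hM0.le,
      mul_le_mul_of_nonneg_right ((div_le_iff₀ hM0).mp (ha n).1) (abs_nonneg (u (n - 1))),
      abs_nonneg (u (n - 1))]
  have hp1 : pruf u n = Real.sqrt (u n ^ 2 + u (n - 1) ^ 2) := rfl
  have hp2 : pruf u (n + 1) = Real.sqrt (u (n + 1) ^ 2 + u n ^ 2) := by
    simp [pruf]
  rw [hp1] at hun
  rw [hp2]
  exact stmt17_core M K hM hK (u (n-1)) (u n) (u (n+1)) ε hε0 hεE hun h1'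
end

section
/- There exists ε₀ > 0 (depending only on M and K) such that the following holds for all real E and ε with 0 ≤ E < ε ≤ ε₀. Let u be a not identically zero solution of a(n+1)·u(n+1) + a(n)·u(n−1) = W(n)·u(n), and let v be a not identically zero solution of a(n+1)·v(n+1) + a(n)·v(n−1) = (W(n) + E)·v(n), with a and W as in the context. If at some n ∈ {1,…,L−1} one has |u(n)/r_u(n) − v(n)/r_v(n)| ≤ ε and |u(n−1)/r_u(n) − v(n−1)/r_v(n)| ≤ ε, then |u(n+1)/r_u(n+1) − v(n+1)/r_v(n+1)| ≤ ε/ε₀ and |u(n)/r_u(n+1) − v(n)/r_v(n+1)| ≤ ε/ε₀. (In Prüfer variables: if the angle difference δφ(n) = φ_u(n) − φ_v(n) lies in [0, ε], then δφ(n+1) lies in [0, ε/ε₀].) -/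
lemma sqrt_diff_le (x y x' y' : ℝ) :
    |Real.sqrt (x^2+y^2) - Real.sqrt (x'^2+y'^2)| ≤ |x-x'| + |y-y'| := by
  have h1 : ∀ z w : ℝ, Real.sqrt (z^2+w^2) = ‖(⟨z, w⟩ : ℂ)‖ := by
    intro z w
    rw [Complex.norm_def, Complex.normSq_mk]; ring_nf
  rw [h1, h1]
  calc |‖(⟨x,y⟩ : ℂ)‖ - ‖(⟨x',y'⟩ : ℂ)‖| ≤ ‖((⟨x,y⟩ : ℂ) - ⟨x',y'⟩)‖ :=
        abs_norm_sub_norm_le _ _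
    _ ≤ |(Complex.mk x y - Complex.mk x' y').re| + |(Complex.mk x y - Complex.mk x' y').im| :=
        Complex.norm_le_abs_re_add_abs_im _
    _ = |x - x'| + |y - y'| := by simp [Complex.ext_iff, Complex.sub_re, Complex.sub_im]

lemma sqrt_le_abs_add (x y : ℝ) : Real.sqrt (x^2+y^2) ≤ |x| + |y| := by
  calc Real.sqrt (x^2+y^2) = |Real.sqrt (x^2+y^2) - Real.sqrt (0^2+0^2)| := by
        simp [abs_of_nonneg, Real.sqrt_nonneg]
    _ ≤ |x-0| + |y-0| := sqrt_diff_le x y 0 0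
    _ = |x| + |y| := by simp

lemma abs_le_sqrt_add (x y : ℝ) : |x| ≤ Real.sqrt (x^2+y^2) := by
  rw [← Real.sqrt_sq_eq_abs]
  exact Real.sqrt_le_sqrt (by nlinarith [sq_nonneg y])

lemma norm_lip (t s t' s' m B : ℝ) (hm : 0 < m)
    (hρ : m ≤ Real.sqrt (t^2+s^2)) (hρ' : m ≤ Real.sqrt (t'^2+s'^2))
    (ht' : |t'| ≤ B) (hs' : |s'| ≤ B) :
    |t/Real.sqrt (t^2+s^2) - t'/Real.sqrt (t'^2+s'^2)| ≤ (3*B*|t-t'| + B*|s-s'|)/m^2 := by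
  set ρ := Real.sqrt (t^2+s^2) with hρdef
  set ρ' := Real.sqrt (t'^2+s'^2) with hρ'def
  have hρ0 : 0 < ρ := lt_of_lt_of_le hm hρ
  have hρ'0 : 0 < ρ' := lt_of_lt_of_le hm hρ'
  have hB0 : 0 ≤ B := le_trans (abs_nonneg t') ht'
  have hρ'2B : ρ' ≤ 2*B := by
    calc ρ' ≤ |t'| + |s'| := sqrt_le_abs_add t' s'
      _ ≤ 2*B := by linarith
  have key : t/ρ - t'/ρ' = (t*ρ' - t'*ρ)/(ρ*ρ') := by
    field_simp
  rw [key, abs_div, abs_of_pos (mul_pos hρ0 hρ'0)]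
  have hnum : |t*ρ' - t'*ρ| ≤ 3*B*|t-t'| + B*|s-s'| := by
    have h1 : t*ρ' - t'*ρ = (t-t')*ρ' + t'*(ρ'-ρ) := by ring
    rw [h1]
    have h2 : |ρ' - ρ| ≤ |t'-t| + |s'-s| := sqrt_diff_le t' s' t s
    have h3 : |(t-t')*ρ'| ≤ |t-t'| * (2*B) := by
      rw [abs_mul, abs_of_pos hρ'0]
      exact mul_le_mul_of_nonneg_left hρ'2B (abs_nonneg _)
    have h4 : |t'*(ρ'-ρ)| ≤ B*(|t'-t| + |s'-s|) := by
      rw [abs_mul]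
      exact mul_le_mul ht' h2 (abs_nonneg _) hB0
    calc |(t-t')*ρ' + t'*(ρ'-ρ)| ≤ |(t-t')*ρ'| + |t'*(ρ'-ρ)| := abs_add_le _ _
      _ ≤ |t-t'| * (2*B) + B*(|t'-t| + |s'-s|) := add_le_add h3 h4
      _ = 3*B*|t-t'| + B*|s-s'| := by rw [abs_sub_comm t' t, abs_sub_comm s' s]; ring
  have hden : m^2 ≤ ρ*ρ' := by nlinarith
  exact div_le_div₀ (by positivity) hnum (by positivity) hden

lemma core_s18 (M K a a' W' s c : ℝ) (hM : 1 < M) (hK : 0 < K)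
    (ha1 : 1/M ≤ |a|) (ha'1 : 1/M ≤ |a'|) (ha'2 : |a'| ≤ M)
    (hW : |W'| ≤ K + 1) (hsc : s^2 + c^2 = 1) :
    min (min (1/2) (1/(4*M*(K+1)))) (1/(4*M^2)) ≤ Real.sqrt (((W'*s - a*c)/a')^2 + s^2) := by
  have hM0 : (0:ℝ) < M := by linarith
  set δ : ℝ := min (1/2) (1/(4*M*(K+1))) with hδdef
  set m : ℝ := min δ (1/(4*M^2)) with hmdef
  have hδpos : 0 < δ := lt_min (by norm_num) (by positivity)
  by_cases hs : δ ≤ |s|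
  · calc m ≤ δ := min_le_left _ _
      _ ≤ |s| := hs
      _ ≤ _ := by rw [add_comm]; exact abs_le_sqrt_add s _
  · push_neg at hs
    have hδhalf : δ ≤ 1/2 := min_le_left _ _
    have hs2 : s^2 ≤ 1/4 := by
      have : |s| ≤ 1/2 := le_of_lt (lt_of_lt_of_le hs hδhalf)
      nlinarith [abs_nonneg s, sq_abs s]
    have hc : 1/2 ≤ |c| := by nlinarith [abs_nonneg c, sq_abs c]
    have hWs : |W'*s| ≤ 1/(4*M) := by
      rw [abs_mul]
      have h1 : |s| ≤ 1/(4*M*(K+1)) := le_of_lt (lt_of_lt_of_le hs (min_le_right _ _))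
      calc |W'| * |s| ≤ (K+1)*(1/(4*M*(K+1))) :=
            mul_le_mul hW h1 (abs_nonneg s) (by linarith)
        _ = 1/(4*M) := by field_simp
    have hac : 1/(2*M) ≤ |a*c| := by
      rw [abs_mul]
      calc 1/(2*M) = (1/M)*(1/2) := by ring
        _ ≤ |a| * |c| := mul_le_mul ha1 hc (by norm_num) (abs_nonneg a)
    have hnum : 1/(4*M) ≤ |W'*s - a*c| := by
      have h3 : |a*c| - |W'*s| ≤ |W'*s - a*c| := by
        calc |a*c| - |W'*s| ≤ |a*c - W'*s| := abs_sub_abs_le_abs_sub _ _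
          _ = |W'*s - a*c| := abs_sub_comm _ _
      have h5 : 1/(2*M) - 1/(4*M) = 1/(4*M) := by field_simp; ring
      linarith
    have ha'pos : 0 < |a'| := lt_of_lt_of_le (by positivity) ha'1
    have ht : 1/(4*M^2) ≤ |(W'*s - a*c)/a'| := by
      rw [abs_div]
      calc 1/(4*M^2) = (1/(4*M))/M := by field_simp
        _ ≤ |W'*s - a*c|/|a'| := div_le_div₀ (abs_nonneg _) hnum ha'pos ha'2
    calc m ≤ 1/(4*M^2) := min_le_right _ _
      _ ≤ |(W'*s - a*c)/a'| := ht
      _ ≤ _ := abs_le_sqrt_add _ s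

lemma zero_prop (L : ℕ) (a W u : ℕ → ℝ) (ha : ∀ n, a n ≠ 0)
    (hu : ∀ n, 1 ≤ n → n ≤ L - 1 → a (n+1) * u (n+1) + a n * u (n-1) = W n * u n)
    (n : ℕ) (hn1 : 1 ≤ n) (hn2 : n ≤ L - 1) (h0 : u n = 0) (h1 : u (n-1) = 0) :
    ∀ m ≤ L, u m = 0 := by
  have hL : 2 ≤ L := by omega
  have F : ∀ k, n + k ≤ L → u (n - 1 + k) = 0 ∧ u (n + k) = 0 := by
    intro k
    induction k with
    | zero => intro _; simpa using ⟨h1, h0⟩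
    | succ k ih =>
      intro hk
      obtain ⟨hA, hB⟩ := ih (by omega)
      have hidx : n - 1 + (k+1) = n + k := by omega
      refine ⟨by rw [hidx]; exact hB, ?_⟩
      have heq := hu (n+k) (by omega) (by omega)
      have hprev : n + k - 1 = n - 1 + k := by omega
      rw [hprev, hA, hB] at heq
      have hz : a (n+k+1) * u (n+k+1) = 0 := by linarith
      rcases mul_eq_zero.mp hz with h | h
      · exact absurd h (ha _)
      · have hx : n + (k+1) = n + k + 1 := by omega
        rw [hx]; exact h
  have Bk : ∀ k, k ≤ n - 1 → u (n - k) = 0 ∧ u (n - 1 - k) = 0 := by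
    intro k
    induction k with
    | zero => intro _; simpa using ⟨h0, h1⟩
    | succ k ih =>
      intro hk
      obtain ⟨hA, hB⟩ := ih (by omega)
      have hidx : n - (k+1) = n - 1 - k := by omega
      refine ⟨by rw [hidx]; exact hB, ?_⟩
      set j := n - 1 - k with hj
      have heq := hu j (by omega) (by omega)
      have hsucc : j + 1 = n - k := by omega
      rw [hsucc, hA, hB] at heq
      have hz : a j * u (j-1) = 0 := by linarith
      rcases mul_eq_zero.mp hz with h | h
      · exact absurd h (ha _)
      · have hx : n - 1 - (k+1) = j - 1 := by omega
        rw [hx]; exact h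
  intro m hm
  by_cases hmn : n ≤ m
  · have h := (F (m - n) (by omega)).2
    rwa [show n + (m - n) = m by omega] at h
  · have h := (Bk (n - 1 - m) (by omega)).2
    rwa [show n - 1 - (n - 1 - m) = m by omega] at h

lemma seq_data (a W u : ℕ → ℝ) (n : ℕ)
    (ha : ∀ k, a k ≠ 0)
    (heq : a (n+1) * u (n+1) + a n * u (n-1) = W n * u n)
    (hrpos : 0 < pruf u n) :
    (u n / pruf u n)^2 + (u (n-1) / pruf u n)^2 = 1 ∧
    u (n+1) / pruf u n
      = (W n * (u n / pruf u n) - a n * (u (n-1) / pruf u n)) / a (n+1) ∧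
    u (n+1) / pruf u (n+1)
      = (u (n+1) / pruf u n) / Real.sqrt ((u (n+1) / pruf u n)^2 + (u n / pruf u n)^2) ∧
    u n / pruf u (n+1)
      = (u n / pruf u n) / Real.sqrt ((u (n+1) / pruf u n)^2 + (u n / pruf u n)^2) := by
  set r := pruf u n with hrdef
  have hr2 : r^2 = u n ^ 2 + u (n-1) ^ 2 := Real.sq_sqrt (by positivity)
  have hrne : r ≠ 0 := ne_of_gt hrpos
  set t := u (n+1) / r with htdef
  set s := u n / r with hsdef
  have hut : u (n+1) = r * t := by rw [htdef]; field_simp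
  have hus : u n = r * s := by rw [hsdef]; field_simp
  have hp : pruf u (n+1) = r * Real.sqrt (t^2 + s^2) := by
    have h1 : (n+1) - 1 = n := rfl
    rw [pruf, h1, hut, hus]
    rw [show (r*t)^2 + (r*s)^2 = r^2 * (t^2+s^2) by ring]
    rw [Real.sqrt_mul (sq_nonneg r), Real.sqrt_sq hrpos.le]
  refine ⟨?_, ?_, ?_, ?_⟩
  · field_simp [hsdef]
    rw [hsdef, div_pow, div_mul_cancel₀ _ (pow_ne_zero 2 hrne)]; linarith [hr2]
  · rw [htdef, hsdef]
    field_simp [hrne, ha (n+1)]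
    linear_combination heq
  · rw [hp, hut, mul_comm r (Real.sqrt (t^2+s^2))]
    rw [show r * t / (Real.sqrt (t^2+s^2) * r) = (r * t) / (r * Real.sqrt (t^2+s^2)) by ring_nf]
    exact mul_div_mul_left t _ hrne
  · rw [hp, hus]
    exact mul_div_mul_left s _ hrne

set_option maxHeartbeats 1000000 in
/-- Lemma `coli`.  If the Prüfer angle difference of two solutions (for
potentials `W` and `W + E`) is small at `n` — expressed through sines and cosines — then
it stays controlled at `n+1`. -/
theorem stmt18 (M K : ℝ) (hM : 1 < M) (hK : 0 < K) :
    ∃ ε₀ : ℝ, 0 < ε₀ ∧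
      ∀ E ε : ℝ, 0 ≤ E → E < ε → ε ≤ ε₀ →
      ∀ (L : ℕ) (a W u v : ℕ → ℝ),
        (∀ n, 1 / M ≤ |a n| ∧ |a n| ≤ M) → (∀ n, |W n| ≤ K) →
        (∀ n, 1 ≤ n → n ≤ L - 1 →
          a (n + 1) * u (n + 1) + a n * u (n - 1) = W n * u n) →
        (∀ n, 1 ≤ n → n ≤ L - 1 →
          a (n + 1) * v (n + 1) + a n * v (n - 1) = (W n + E) * v n) →
        (∃ n, n ≤ L ∧ u n ≠ 0) → (∃ n, n ≤ L ∧ v n ≠ 0) →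
        ∀ n, 1 ≤ n → n ≤ L - 1 →
          |u n / pruf u n - v n / pruf v n| ≤ ε →
          |u (n - 1) / pruf u n - v (n - 1) / pruf v n| ≤ ε →
          |u (n + 1) / pruf u (n + 1) - v (n + 1) / pruf v (n + 1)| ≤ ε / ε₀ ∧
          |u n / pruf u (n + 1) - v n / pruf v (n + 1)| ≤ ε / ε₀ := by
  have hM0 : (0:ℝ) < M := by linarith
  set B : ℝ := M*(K+1+M) with hBdef
  set m : ℝ := min (min (1/2) (1/(4*M*(K+1)))) (1/(4*M^2)) with hmdef
  have hmpos : 0 < m := lt_min (lt_min (by norm_num) (by positivity)) (by positivity)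
  have hmhalf : m ≤ 1/2 := le_trans (min_le_left _ _) (min_le_left _ _)
  have hB1 : 1 ≤ B := by nlinarith
  refine ⟨m^2/(4*B^2), by positivity, ?_⟩
  intro E ε hE hEε hεε₀ L a W u v haW hW hu hv hunz hvnz n hn1 hn2 hs hc
  have hε₀1 : m^2/(4*B^2) ≤ 1 := by
    rw [div_le_one (by positivity)]
    nlinarith
  have hε0 : 0 ≤ ε := le_trans hE hEε.le
  have hE1 : E ≤ 1 := le_trans hEε.le (le_trans hεε₀ hε₀1)
  have hane : ∀ k, a k ≠ 0 := by
    intro k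
    have h := (haW k).1
    have : 0 < |a k| := lt_of_lt_of_le (by positivity) h
    exact abs_pos.mp this
  -- positivity of Prüfer radii
  have hrupos : 0 < pruf u n := by
    rw [pruf, Real.sqrt_pos]
    by_contra h
    push_neg at h
    have h1 : u n = 0 ∧ u (n-1) = 0 := by
      constructor <;> nlinarith [sq_nonneg (u n), sq_nonneg (u (n-1))]
    obtain ⟨k, hk, hk0⟩ := hunz
    exact hk0 (zero_prop L a W u hane hu n hn1 hn2 h1.1 h1.2 k hk)
  have hrvpos : 0 < pruf v n := by
    rw [pruf, Real.sqrt_pos]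
    by_contra h
    push_neg at h
    have h1 : v n = 0 ∧ v (n-1) = 0 := by
      constructor <;> nlinarith [sq_nonneg (v n), sq_nonneg (v (n-1))]
    obtain ⟨k, hk, hk0⟩ := hvnz
    exact hk0 (zero_prop L a (fun k => W k + E) v hane hv n hn1 hn2 h1.1 h1.2 k hk)
  obtain ⟨hscu, htu, hru1, hru2⟩ := seq_data a W u n hane (hu n hn1 hn2) hrupos
  obtain ⟨hscv, htv, hrv1, hrv2⟩ :=
    seq_data a (fun k => W k + E) v n hane (hv n hn1 hn2) hrvpos
  set su := u n / pruf u n with hsu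
  set cu := u (n-1) / pruf u n with hcu
  set tu := u (n+1) / pruf u n with htuu
  set sv := v n / pruf v n with hsv
  set cv := v (n-1) / pruf v n with hcv
  set tv := v (n+1) / pruf v n with htvv
  clear_value su cu tu sv cv tv
  have hsu1 : |su| ≤ 1 := by nlinarith [sq_abs su, sq_abs cu, abs_nonneg su, abs_nonneg cu]
  have hsv1 : |sv| ≤ 1 := by nlinarith [sq_abs sv, sq_abs cv, abs_nonneg sv, abs_nonneg cv]
  have hcv1 : |cv| ≤ 1 := by nlinarith [sq_abs sv, sq_abs cv, abs_nonneg sv, abs_nonneg cv]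
  -- lower bounds via core
  have hcoreu : m ≤ Real.sqrt (tu^2 + su^2) := by
    rw [htu]
    exact core_s18 M K (a n) (a (n+1)) (W n) su cu hM hK (haW n).1 (haW (n+1)).1 (haW (n+1)).2
      (by linarith [hW n, abs_nonneg (W n)]) hscu
  have hcorev : m ≤ Real.sqrt (tv^2 + sv^2) := by
    rw [htv]
    exact core_s18 M K (a n) (a (n+1)) (W n + E) sv cv hM hK (haW n).1 (haW (n+1)).1 (haW (n+1)).2
      (by
        calc |W n + E| ≤ |W n| + |E| := abs_add_le _ _
          _ ≤ K + 1 := by rw [abs_of_nonneg hE]; linarith [hW n]) hscv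
  -- upper bound on |tv|
  have ha'inv : 1/M ≤ |a (n+1)| := (haW (n+1)).1
  have ha'pos : 0 < |a (n+1)| := lt_of_lt_of_le (by positivity) ha'inv
  have htvB : |tv| ≤ B := by
    rw [htv, abs_div]
    have hnum : |(W n + E) * sv - a n * cv| ≤ K + 1 + M := by
      calc |(W n + E) * sv - a n * cv| ≤ |(W n + E) * sv| + |a n * cv| := abs_sub _ _
        _ = |W n + E| * |sv| + |a n| * |cv| := by rw [abs_mul, abs_mul]
        _ ≤ (K + 1) * 1 + M * 1 := by
            apply add_le_add
            · apply mul_le_mul _ hsv1 (abs_nonneg _) (by linarith)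
              calc |W n + E| ≤ |W n| + |E| := abs_add_le _ _
                _ ≤ K + 1 := by rw [abs_of_nonneg hE]; linarith [hW n]
            · exact mul_le_mul (haW n).2 hcv1 (abs_nonneg _) (by linarith)
        _ = K + 1 + M := by ring
    calc |(W n + E) * sv - a n * cv| / |a (n+1)| ≤ (K+1+M)/(1/M) :=
          div_le_div₀ (by linarith) hnum (by positivity) ha'inv
      _ = B := by rw [hBdef]; field_simp
  have hsvB : |sv| ≤ B := le_trans hsv1 hB1
  -- difference bounds
  have hdt : |tu - tv| ≤ B * ε := by
    have hdiff : tu - tv = (W n * (su - sv) - E * sv - a n * (cu - cv)) / a (n+1) := by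
      rw [htu, htv]
      field_simp [hane (n+1)]
      ring
    rw [hdiff, abs_div]
    have hnum : |W n * (su - sv) - E * sv - a n * (cu - cv)| ≤ (K + 1 + M) * ε := by
      calc |W n * (su - sv) - E * sv - a n * (cu - cv)|
          ≤ |W n * (su - sv) - E * sv| + |a n * (cu - cv)| := abs_sub _ _
        _ ≤ |W n * (su - sv)| + |E * sv| + |a n * (cu - cv)| := by
            linarith [abs_sub (W n * (su - sv)) (E * sv)]
        _ = |W n| * |su - sv| + |E| * |sv| + |a n| * |cu - cv| := by
            rw [abs_mul, abs_mul, abs_mul]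
        _ ≤ K * ε + ε * 1 + M * ε := by
            apply add_le_add (add_le_add ?_ ?_) ?_
            · exact mul_le_mul (hW n) hs (abs_nonneg _) hK.le
            · rw [abs_of_nonneg hE]; exact mul_le_mul hEε.le hsv1 (abs_nonneg _) hε0
            · exact mul_le_mul (haW n).2 hc (abs_nonneg _) (by linarith)
        _ = (K + 1 + M) * ε := by ring
    calc |W n * (su - sv) - E * sv - a n * (cu - cv)| / |a (n+1)| ≤ ((K+1+M)*ε)/(1/M) :=
          div_le_div₀ (by positivity) hnum (by positivity) ha'inv
      _ = B * ε := by rw [hBdef]; field_simp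
  clear_value m B
  -- final bound
  have hB0 : (0:ℝ) ≤ B := by linarith
  have hfin : 4*B^2*ε/m^2 = ε / (m^2/(4*B^2)) := by
    rw [div_div_eq_mul_div]
    ring
  constructor
  · rw [hru1, hrv1]
    calc |tu / Real.sqrt (tu^2 + su^2) - tv / Real.sqrt (tv^2 + sv^2)|
        ≤ (3*B*|tu - tv| + B*|su - sv|)/m^2 :=
          norm_lip tu su tv sv m B hmpos hcoreu hcorev htvB hsvB
      _ ≤ (3*B*(B*ε) + B*(B*ε))/m^2 := by
          have hBε : 0 ≤ B*ε := mul_nonneg hB0 hε0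
          have h1 : 3*B*|tu-tv| ≤ 3*B*(B*ε) := mul_le_mul_of_nonneg_left hdt (by linarith)
          have h2a : B*|su-sv| ≤ B*ε := mul_le_mul_of_nonneg_left hs hB0
          have h2b : B*ε ≤ B*(B*ε) := by
            calc B*ε = 1*(B*ε) := by ring
              _ ≤ B*(B*ε) := mul_le_mul_of_nonneg_right hB1 hBε
          have hnn : 0 ≤ 3*B*(B*ε) + B*(B*ε) :=
            add_nonneg (mul_nonneg (by linarith) hBε) (mul_nonneg hB0 hBε)
          exact div_le_div₀ hnn (by linarith) (pow_pos hmpos 2) le_rfl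
      _ = 4*B^2*ε/m^2 := by ring
      _ = ε / (m^2/(4*B^2)) := hfin
  · rw [hru2, hrv2]
    have hcoreu' : m ≤ Real.sqrt (su^2 + tu^2) := by rw [add_comm (su^2)]; exact hcoreu
    have hcorev' : m ≤ Real.sqrt (sv^2 + tv^2) := by rw [add_comm (sv^2)]; exact hcorev
    have h := norm_lip su tu sv tv m B hmpos hcoreu' hcorev' hsvB htvB
    rw [show su^2 + tu^2 = tu^2 + su^2 by ring, show sv^2 + tv^2 = tv^2 + sv^2 by ring] at h
    calc |su / Real.sqrt (tu^2 + su^2) - sv / Real.sqrt (tv^2 + sv^2)|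
        ≤ (3*B*|su - sv| + B*|tu - tv|)/m^2 := h
      _ ≤ (3*B*(B*ε) + B*(B*ε))/m^2 := by
          have hBε : 0 ≤ B*ε := mul_nonneg hB0 hε0
          have h1a : 3*B*|su-sv| ≤ 3*B*ε := mul_le_mul_of_nonneg_left hs (by linarith)
          have h1b : 3*B*ε ≤ 3*B*(B*ε) := by
            calc 3*B*ε = 3*(1*(B*ε)) := by ring
              _ ≤ 3*(B*(B*ε)) := by
                  have := mul_le_mul_of_nonneg_right hB1 hBε
                  linarith
              _ = 3*B*(B*ε) := by ring
          have h2 : B*|tu-tv| ≤ B*(B*ε) := mul_le_mul_of_nonneg_left hdt hB0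
          have hnn : 0 ≤ 3*B*(B*ε) + B*(B*ε) :=
            add_nonneg (mul_nonneg (by linarith) hBε) (mul_nonneg hB0 hBε)
          exact div_le_div₀ hnn (by linarith) (pow_pos hmpos 2) le_rfl
      _ = 4*B^2*ε/m^2 := by ring
      _ = ε / (m^2/(4*B^2)) := hfin
end

section
/- There exists ε₀ > 0 (depending only on M and K) such that the following holds for all real E and ε with 0 ≤ E < ε ≤ ε₀. Let u be a not identically zero solution of a(n+1)·u(n+1) + a(n)·u(n−1) = W(n)·u(n), and let v be a not identically zero solution of a(n+1)·v(n+1) + a(n)·v(n−1) = (W(n) + E)·v(n), with a and W as in the context. If at some n ∈ {1,…,L−1} one has |u(n)/r_u(n) + v(n)/r_v(n)| ≤ ε and |u(n−1)/r_u(n) + v(n−1)/r_v(n)| ≤ ε, then |u(n+1)/r_u(n+1) + v(n+1)/r_v(n+1)| ≤ ε/ε₀ and |u(n)/r_u(n+1) + v(n)/r_v(n+1)| ≤ ε/ε₀. (In Prüfer variables: if the angle difference δφ(n) = φ_u(n) − φ_v(n) lies in [π − ε, π], then δφ(n+1) lies in [π − ε/ε₀, π].) -/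
lemma tri2 (a b c d : ℝ) :
    Real.sqrt ((a+b)^2 + (c+d)^2) ≤ Real.sqrt (a^2+c^2) + Real.sqrt (b^2+d^2) := by
  have hPn := Real.sqrt_nonneg (a^2+c^2)
  have hQn := Real.sqrt_nonneg (b^2+d^2)
  have hP : Real.sqrt (a^2+c^2) ^ 2 = a^2+c^2 := Real.sq_sqrt (by positivity)
  have hQ : Real.sqrt (b^2+d^2) ^ 2 = b^2+d^2 := Real.sq_sqrt (by positivity)
  have hcs : a*b + c*d ≤ Real.sqrt (a^2+c^2) * Real.sqrt (b^2+d^2) := by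
    nlinarith [sq_nonneg (a*d - b*c), mul_nonneg hPn hQn,
      sq_nonneg (Real.sqrt (a^2+c^2) * Real.sqrt (b^2+d^2) - (a*b+c*d)),
      sq_nonneg (Real.sqrt (a^2+c^2) * Real.sqrt (b^2+d^2) + (a*b+c*d))]
  have h2 : (a+b)^2 + (c+d)^2 ≤ (Real.sqrt (a^2+c^2) + Real.sqrt (b^2+d^2))^2 := by nlinarith
  calc Real.sqrt ((a+b)^2 + (c+d)^2)
      ≤ Real.sqrt ((Real.sqrt (a^2+c^2) + Real.sqrt (b^2+d^2))^2) := Real.sqrt_le_sqrt h2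
    _ = _ := Real.sqrt_sq (by positivity)

lemma keylem (x y X Y η : ℝ) (hη : 0 ≤ η)
    (hR : 2*η < Real.sqrt (x^2+y^2))
    (h1 : |x + X| ≤ η) (h2 : |y + Y| ≤ η) :
    0 < Real.sqrt (X^2+Y^2) ∧
    |x / Real.sqrt (x^2+y^2) + X / Real.sqrt (X^2+Y^2)| ≤ 3*η / Real.sqrt (x^2+y^2) := by
  set R := Real.sqrt (x^2+y^2) with hRdef
  set S := Real.sqrt (X^2+Y^2) with hSdef
  have hR0 : 0 < R := lt_of_le_of_lt (by positivity) hR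
  have hSn : 0 ≤ S := Real.sqrt_nonneg _
  have hT : Real.sqrt ((x+X)^2 + (y+Y)^2) ≤ 2*η := by
    have e1 : (x+X)^2 ≤ η^2 := by nlinarith [sq_abs (x+X), abs_nonneg (x+X)]
    have e2 : (y+Y)^2 ≤ η^2 := by nlinarith [sq_abs (y+Y), abs_nonneg (y+Y)]
    calc Real.sqrt ((x+X)^2 + (y+Y)^2) ≤ Real.sqrt ((2*η)^2) := Real.sqrt_le_sqrt (by nlinarith)
      _ = 2*η := Real.sqrt_sq (by linarith)
  have t1 : R ≤ Real.sqrt ((x+X)^2 + (y+Y)^2) + S := by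
    have := tri2 (x+X) (-X) (y+Y) (-Y)
    simpa using this
  have t2 : S ≤ Real.sqrt ((x+X)^2 + (y+Y)^2) + R := by
    have := tri2 (x+X) (-x) (y+Y) (-y)
    simpa [add_comm] using this
  have hS0 : 0 < S := by linarith
  refine ⟨hS0, ?_⟩
  have hXS : |X| ≤ S := by
    rw [hSdef, ← Real.sqrt_sq_eq_abs]
    exact Real.sqrt_le_sqrt (by nlinarith [sq_nonneg Y])
  have hRS : |R - S| ≤ 2*η := by
    rw [abs_sub_le_iff]; constructor <;> linarith
  have expand : x / R + X / S = (x+X)/R + X*(R-S)/(S*R) := by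
    field_simp
    ring
  rw [expand]
  have b1 : |(x+X)/R| ≤ η/R := by
    rw [abs_div, abs_of_pos hR0]
    gcongr
  have b2 : |X*(R-S)/(S*R)| ≤ 2*η/R := by
    rw [abs_div, abs_mul, abs_of_pos (mul_pos hS0 hR0)]
    calc |X| * |R - S| / (S*R) ≤ S * (2*η) / (S*R) := by gcongr
      _ = 2*η/R := mul_div_mul_left _ _ hS0.ne'
  calc |(x+X)/R + X*(R-S)/(S*R)| ≤ |(x+X)/R| + |X*(R-S)/(S*R)| := abs_add_le _ _
    _ ≤ η/R + 2*η/R := add_le_add b1 b2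
    _ = 3*η/R := by ring

lemma sumsq_zero {x y : ℝ} (h : x^2 + y^2 = 0) : x = 0 ∧ y = 0 := by
  have h1 : x^2 = 0 := le_antisymm (by nlinarith [sq_nonneg y]) (sq_nonneg x)
  have h2 : y^2 = 0 := le_antisymm (by nlinarith [sq_nonneg x]) (sq_nonneg y)
  exact ⟨(pow_eq_zero_iff (by norm_num : (2:ℕ) ≠ 0)).mp h1,
    (pow_eq_zero_iff (by norm_num : (2:ℕ) ≠ 0)).mp h2⟩

lemma degen_contra {x y s ε : ℝ} (hs : 0 < s) (h2 : s^2 = x^2 + y^2)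
    (h1 : |x| ≤ ε*s) (hb : |y| ≤ ε*s) (hε : 0 < ε) (h9 : ε ≤ 1/9) : False := by
  have hx2 : x^2 ≤ ε^2*s^2 := by
    nlinarith [mul_self_le_mul_self (abs_nonneg x) h1, sq_abs x]
  have hy2 : y^2 ≤ ε^2*s^2 := by
    nlinarith [mul_self_le_mul_self (abs_nonneg y) hb, sq_abs y]
  have hε2 : ε^2 ≤ 1/81 := by nlinarith
  linarith [h2, hx2, hy2, mul_le_mul_of_nonneg_right hε2 (mul_pos hs hs).le,
    mul_pos hs hs]

lemma abs_le_one_sq {x y : ℝ} (h : x^2 + y^2 = 1) : |x| ≤ 1 := by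
  nlinarith [sq_abs x, abs_nonneg x, sq_nonneg y]

lemma absdiv {M z B : ℝ} (hM0 : 0 < M) (h : 1/M * z ≤ B) : z ≤ M*B := by
  have h2 := mul_le_mul_of_nonneg_left h hM0.le
  calc z = M*(1/M*z) := by field_simp
    _ ≤ M*B := h2

lemma twoCe {C c e0 ε : ℝ} (heq : e0*(3*C) = c) (hC : 0 < C) (hε : 0 < ε)
    (hεe : ε ≤ e0) : 2*(C*ε) < c := by
  nlinarith [mul_nonneg hC.le (sub_nonneg.mpr hεe), mul_pos hC hε]

lemma lowbound (M K c p su cu aN aN1 Wn : ℝ)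
    (hM : 1 < M) (hK : 0 < K) (hc0 : 0 < c) (hc1eq : c*(3*M^2*(K+1)) = 1)
    (huu : su^2 + cu^2 = 1)
    (hONE : aN1 * p + aN * cu = Wn * su)
    (hal : 1/M ≤ |aN|) (ha1u : |aN1| ≤ M) (hW : |Wn| ≤ K) :
    c^2 ≤ p^2 + su^2 := by
  have hM0 : (0:ℝ) < M := by linarith
  have hMK0 : (0:ℝ) < 2*M*(K+1) := by nlinarith only [mul_pos hM0 hK, hM0, hK]
  obtain ⟨t, ht0, htEq⟩ : ∃ t : ℝ, 0 < t ∧ t*(2*M*(K+1)) = 1 :=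
    ⟨1/(2*M*(K+1)), one_div_pos.mpr hMK0, one_div_mul_cancel hMK0.ne'⟩
  have hmul0 : (3*M*c - 2*t) * (M*(K+1)) = 0 := by linear_combination hc1eq - htEq
  have hct : 3*M*c = 2*t := by
    rcases mul_eq_zero.mp hmul0 with h | h
    · linarith [sub_eq_zero.mp h]
    · nlinarith only [h, mul_pos hM0 (show (0:ℝ) < K+1 by linarith)]
  have hclet : c ≤ t := by nlinarith only [hct, mul_pos hc0 (sub_pos.mpr hM), hc0]
  rcases le_or_gt t |su| with hcase | hcase
  · nlinarith only [sq_abs su, sq_nonneg p, abs_nonneg su, hclet, hcase, hc0, ht0]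
  · have htle : t ≤ 1/2 := by
      linarith only [htEq, mul_nonneg ht0.le
        (by nlinarith only [mul_pos hM0 hK, hM, hK] : (0:ℝ) ≤ 2*M*(K+1) - 2)]
    have hcu56 : 5/6 ≤ |cu| := by
      nlinarith only [sq_abs cu, sq_abs su, abs_nonneg cu, abs_nonneg su, ht0, htle, hcase, huu]
    have hap : aN1 * p = Wn * su - aN * cu := by linarith only [hONE]
    have hWsu : |Wn * su| ≤ K * t := by
      rw [abs_mul]; exact mul_le_mul hW hcase.le (abs_nonneg _) hK.le
    have hacu : 1/M * (5/6) ≤ |aN * cu| := by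
      rw [abs_mul]; exact mul_le_mul hal hcu56 (by norm_num) (abs_nonneg _)
    have h8 : 1/M * (5/6) - K*t ≤ |aN1 * p| := by
      rw [hap]
      calc 1/M*(5/6) - K*t ≤ |aN * cu| - |Wn * su| := by linarith only [hacu, hWsu]
        _ ≤ |aN * cu - Wn * su| := abs_sub_abs_le_abs_sub _ _
        _ = |Wn * su - aN * cu| := abs_sub_comm _ _
    have h9 : |aN1 * p| ≤ M * |p| := by
      rw [abs_mul]; exact mul_le_mul_of_nonneg_right ha1u (abs_nonneg _)
    have hMKt : M*(K*t) ≤ 1/2 := by linarith only [htEq, mul_pos hM0 ht0]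
    have h10 : 1/M*(5/6) - K*t ≤ M*|p| := h8.trans h9
    have h11 := mul_le_mul_of_nonneg_left h10 hM0.le
    have h12 : M*(1/M*(5/6) - K*t) = 5/6 - M*(K*t) := by
      linear_combination (5/6) * (mul_one_div_cancel hM0.ne')
    have h13 : 1/3 ≤ M^2 * |p| := by
      rw [h12] at h11
      linarith only [h11, hMKt]
    have h14 : 3*M^2*c ≤ 1 := by
      nlinarith only [hc1eq,
        mul_nonneg (mul_nonneg (by positivity : (0:ℝ) ≤ 3*M^2) hc0.le) hK.le]
    have h15 : c ≤ |p| := by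
      nlinarith only [h13, h14, mul_pos hM0 hM0]
    nlinarith only [h15, hc0, sq_abs p, abs_nonneg p, sq_nonneg su]

set_option maxHeartbeats 1000000 in
/-- Lemma `oppo`.  If the Prüfer angle difference of two solutions (for
potentials `W` and `W + E`) is small at `n` — expressed through sines and cosines — then
it stays controlled at `n+1` (version with angle difference near `π`). -/
theorem stmt19 (M K : ℝ) (hM : 1 < M) (hK : 0 < K) :
    ∃ ε₀ : ℝ, 0 < ε₀ ∧
      ∀ E ε : ℝ, 0 ≤ E → E < ε → ε ≤ ε₀ →
      ∀ (L : ℕ) (a W u v : ℕ → ℝ),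
        (∀ n, 1 / M ≤ |a n| ∧ |a n| ≤ M) → (∀ n, |W n| ≤ K) →
        (∀ n, 1 ≤ n → n ≤ L - 1 →
          a (n + 1) * u (n + 1) + a n * u (n - 1) = W n * u n) →
        (∀ n, 1 ≤ n → n ≤ L - 1 →
          a (n + 1) * v (n + 1) + a n * v (n - 1) = (W n + E) * v n) →
        (∃ n, n ≤ L ∧ u n ≠ 0) → (∃ n, n ≤ L ∧ v n ≠ 0) →
        ∀ n, 1 ≤ n → n ≤ L - 1 →
          |u n / pruf u n + v n / pruf v n| ≤ ε →
          |u (n - 1) / pruf u n + v (n - 1) / pruf v n| ≤ ε →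
          |u (n + 1) / pruf u (n + 1) + v (n + 1) / pruf v (n + 1)| ≤ ε / ε₀ ∧
          |u n / pruf u (n + 1) + v n / pruf v (n + 1)| ≤ ε / ε₀ := by
  have hM0 : (0:ℝ) < M := by linarith
  have hC0' : (0:ℝ) < M*(K+M+1)+1 := by nlinarith
  have hC1' : (1:ℝ) ≤ M*(K+M+1)+1 := by nlinarith
  obtain ⟨C, hCdef, hC0, hC1⟩ : ∃ C:ℝ, C = M*(K+M+1)+1 ∧ 0 < C ∧ 1 ≤ C :=
    ⟨_, rfl, hC0', hC1'⟩
  have hden0 : (0:ℝ) < 3*M^2*(K+1) :=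
    mul_pos (mul_pos (by norm_num) (pow_pos hM0 2)) (by linarith)
  have hge3 : (3:ℝ) ≤ 3*M^2*(K+1) := by nlinarith [sq_nonneg (M-1)]
  obtain ⟨c, hcdef, hc0, hc1eq, hcle⟩ :
      ∃ c:ℝ, c = 1/(3*M^2*(K+1)) ∧ 0 < c ∧ c*(3*M^2*(K+1)) = 1 ∧ c ≤ 1/3 :=
    ⟨_, rfl, one_div_pos.mpr hden0, one_div_mul_cancel hden0.ne',
      one_div_le_one_div_of_le (by norm_num) hge3⟩
  have h3C0 : (0:ℝ) < 3*C := by linarith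
  obtain ⟨e0, he00, heq, he0ub⟩ : ∃ e0:ℝ, 0 < e0 ∧ e0*(3*C) = c ∧ e0 ≤ 1/9 :=
    ⟨c/(3*C), div_pos hc0 h3C0, div_mul_cancel₀ _ h3C0.ne',
      by rw [div_le_iff₀ h3C0]; linarith⟩
  refine ⟨e0, he00, ?_⟩
  intro E ε hE0 hEε hεe0 L a W u v ha hW hu hv _ _ n hn1 hn2 hsin hcos
  have hε0 : 0 < ε := lt_of_le_of_lt hE0 hEε
  have hε9 : ε ≤ 1/9 := le_trans hεe0 he0ub
  set r : ℝ := pruf u n with hrd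
  set s : ℝ := pruf v n with hsd
  have hr0n : 0 ≤ r := Real.sqrt_nonneg _
  have hs0n : 0 ≤ s := Real.sqrt_nonneg _
  have hr2 : r^2 = u n^2 + u (n-1)^2 := by
    rw [hrd]; simp only [pruf]; exact Real.sq_sqrt (by positivity)
  have hs2 : s^2 = v n^2 + v (n-1)^2 := by
    rw [hsd]; simp only [pruf]; exact Real.sq_sqrt (by positivity)
  have hrecu := hu n hn1 hn2
  have hrecv := hv n hn1 hn2
  obtain ⟨ha1l, ha1u⟩ := ha (n+1)
  obtain ⟨hal, hau⟩ := ha n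
  have hMinvpos : (0:ℝ) < 1/M := by positivity
  have han1 : a (n+1) ≠ 0 := abs_pos.mp (lt_of_lt_of_le hMinvpos ha1l)
  have hup : pruf u (n+1) = Real.sqrt (u (n+1)^2 + u n^2) := by simp [pruf]
  have hvp : pruf v (n+1) = Real.sqrt (v (n+1)^2 + v n^2) := by simp [pruf]
  by_cases hrz : r = 0
  · -- r = 0
    obtain ⟨hun, hun1⟩ := sumsq_zero (by rw [← hr2, hrz]; ring)
    by_cases hsz : s = 0
    · -- both radii vanish
      obtain ⟨hvn, hvn1⟩ := sumsq_zero (by rw [← hs2, hsz]; ring)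
      have hup1 : u (n+1) = 0 := by
        rw [hun, hun1] at hrecu
        simp only [mul_zero, add_zero] at hrecu
        exact (mul_eq_zero.mp hrecu).resolve_left han1
      have hvp1 : v (n+1) = 0 := by
        rw [hvn, hvn1] at hrecv
        simp only [mul_zero, add_zero] at hrecv
        exact (mul_eq_zero.mp hrecv).resolve_left han1
      constructor <;> simp only [hup1, hvp1, hun, hvn, zero_div, zero_add, abs_zero] <;>
        exact div_nonneg hε0.le he00.le
    · exfalso
      have hs0 : 0 < s := lt_of_le_of_ne hs0n (Ne.symm hsz)
      rw [hun] at hsin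
      rw [hun1] at hcos
      simp only [zero_div, zero_add] at hsin hcos
      rw [abs_div, abs_of_pos hs0, div_le_iff₀ hs0] at hsin hcos
      exact degen_contra hs0 hs2 hsin hcos hε0 hε9
  · by_cases hsz : s = 0
    · exfalso
      have hr0 : 0 < r := lt_of_le_of_ne hr0n (Ne.symm hrz)
      obtain ⟨hvn, hvn1⟩ := sumsq_zero (by rw [← hs2, hsz]; ring)
      rw [hvn] at hsin
      rw [hvn1] at hcos
      simp only [zero_div, add_zero] at hsin hcos
      rw [abs_div, abs_of_pos hr0, div_le_iff₀ hr0] at hsin hcos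
      exact degen_contra hr0 hr2 hsin hcos hε0 hε9
    · -- main case
      have hr0 : 0 < r := lt_of_le_of_ne hr0n (Ne.symm hrz)
      have hs0 : 0 < s := lt_of_le_of_ne hs0n (Ne.symm hsz)
      set p : ℝ := u (n+1) / r with hpd
      set su : ℝ := u n / r with hsud
      set cu : ℝ := u (n-1) / r with hcud
      set q : ℝ := v (n+1) / s with hqd
      set sv : ℝ := v n / s with hsvd
      set cv : ℝ := v (n-1) / s with hcvd
      have huu : su^2 + cu^2 = 1 := by
        rw [hsud, hcud]; field_simp; linarith only [hr2]
      have hvv : sv^2 + cv^2 = 1 := by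
        rw [hsvd, hcvd]; field_simp; linarith only [hs2]
      have hru : a (n+1) * p + a n * cu = W n * su := by
        rw [hpd, hsud, hcud]; field_simp; linarith only [hrecu]
      have hrv : a (n+1) * q + a n * cv = (W n + E) * sv := by
        rw [hqd, hsvd, hcvd]; field_simp; linarith only [hrecv]
      have hsv1 : |sv| ≤ 1 := abs_le_one_sq hvv
      have hid : a (n+1) * (p + q) = W n * (su + sv) + E * sv + (-(a n)) * (cu + cv) := by
        linear_combination hru + hrv
      have habs : |a (n+1)| * |p + q| ≤ K*ε + ε*1 + M*ε := by
        rw [← abs_mul, hid]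
        calc |W n * (su + sv) + E * sv + (-(a n)) * (cu + cv)|
            ≤ |W n * (su + sv) + E * sv| + |(-(a n)) * (cu + cv)| := abs_add_le _ _
          _ ≤ |W n * (su + sv)| + |E * sv| + |(-(a n)) * (cu + cv)| :=
              add_le_add_left (abs_add_le _ _) _
          _ = |W n| * |su + sv| + |E| * |sv| + |a n| * |cu + cv| := by
              rw [abs_mul, abs_mul, abs_mul, abs_neg]
          _ ≤ K*ε + ε*1 + M*ε := by
              gcongr
              · exact hW n
              · rw [abs_of_nonneg hE0]; exact hEε.le
      have hcomp1 : |p + q| ≤ C*ε := by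
        have h1 : 1/M * |p+q| ≤ (K+1+M)*ε := by
          calc 1/M * |p+q| ≤ |a (n+1)| * |p+q| :=
                mul_le_mul_of_nonneg_right ha1l (abs_nonneg _)
            _ ≤ K*ε + ε*1 + M*ε := habs
            _ = (K+1+M)*ε := by ring
        have h2 : |p+q| ≤ M*((K+1+M)*ε) := absdiv hM0 h1
        refine h2.trans ?_
        rw [hCdef]
        linarith only [hε0]
      have hcomp2 : |su + sv| ≤ C*ε :=
        hsin.trans ((le_mul_iff_one_le_left hε0).mpr hC1)
      have hc2 : c^2 ≤ p^2 + su^2 :=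
        lowbound M K c p su cu (a n) (a (n+1)) (W n) hM hK hc0
          hc1eq huu hru hal ha1u (hW n)
      have hRlow : c ≤ Real.sqrt (p^2 + su^2) := by
        calc c = Real.sqrt (c^2) := (Real.sqrt_sq hc0.le).symm
          _ ≤ _ := Real.sqrt_le_sqrt hc2
      have h2η : 2*(C*ε) < Real.sqrt (p^2+su^2) :=
        lt_of_lt_of_le (twoCe heq hC0 hε0 hεe0) hRlow
      obtain ⟨hSpos1, hb1⟩ := keylem p su q sv (C*ε)
        (mul_nonneg (by linarith) hε0.le) h2η hcomp1 hcomp2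
      have hswapu : Real.sqrt (su^2 + p^2) = Real.sqrt (p^2 + su^2) := by rw [add_comm]
      have hswapv : Real.sqrt (sv^2 + q^2) = Real.sqrt (q^2 + sv^2) := by rw [add_comm]
      obtain ⟨hSpos2, hb2⟩ := keylem su p sv q (C*ε)
        (mul_nonneg (by linarith) hε0.le) (by rw [hswapu]; exact h2η) hcomp2 hcomp1
      rw [hswapu, hswapv] at hb2
      have hRr : Real.sqrt (p^2 + su^2) = pruf u (n+1) / r := by
        rw [hup, hpd, hsud, div_pow, div_pow, ← add_div,
          Real.sqrt_div (by positivity), Real.sqrt_sq hr0.le]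
      have hSs : Real.sqrt (q^2 + sv^2) = pruf v (n+1) / s := by
        rw [hvp, hqd, hsvd, div_pow, div_pow, ← add_div,
          Real.sqrt_div (by positivity), Real.sqrt_sq hs0.le]
      have hr'pos : 0 < pruf u (n+1) := by
        have h := lt_of_lt_of_le hc0 hRlow
        rw [hRr, div_pos_iff] at h
        rcases h with ⟨h1, _⟩ | ⟨_, h2⟩
        · exact h1
        · exact absurd hr0 (lt_asymm h2)
      have hs'pos : 0 < pruf v (n+1) := by
        have h := hSpos1
        rw [hSs, div_pos_iff] at h
        rcases h with ⟨h1, _⟩ | ⟨_, h2⟩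
        · exact h1
        · exact absurd hs0 (lt_asymm h2)
      have gx : u (n+1) / pruf u (n+1) = p / Real.sqrt (p^2+su^2) := by
        rw [hRr, hpd]
        field_simp
      have gy : u n / pruf u (n+1) = su / Real.sqrt (p^2+su^2) := by
        rw [hRr, hsud]
        field_simp
      have gX : v (n+1) / pruf v (n+1) = q / Real.sqrt (q^2+sv^2) := by
        rw [hSs, hqd]
        field_simp
      have gY : v n / pruf v (n+1) = sv / Real.sqrt (q^2+sv^2) := by
        rw [hSs, hsvd]
        field_simp
      have hfinal : 3*(C*ε)/Real.sqrt (p^2+su^2) ≤ ε/e0 := by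
        rw [div_le_div_iff₀ (lt_of_lt_of_le hc0 hRlow) he00]
        have hmul : ε * c = 3*(C*ε)*e0 := by
          linear_combination (-ε) * heq
        have hprod : 0 ≤ ε * (Real.sqrt (p^2+su^2) - c) :=
          mul_nonneg hε0.le (sub_nonneg.mpr hRlow)
        nlinarith only [hmul, hprod]
      refine ⟨?_, ?_⟩
      · rw [gx, gX]; exact le_trans hb1 hfinal
      · rw [gy, gY]; exact le_trans hb2 hfinal
end
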